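/- arXiv:1003.1566 — 7 statements merged into one kernel-verified Lean document; each statement's English description precedes it below -/
import Mathlib

section
/- Let λ ∈ (−π/2, π/2). For every f ∈ F_λ there exists a unique starlike function g ∈ S* such that L_f(z) = e^{iλ}·(cos λ)·L_g(z) for all z ∈ 𝔻, where L_f and L_g are the unique analytic branches of log(f(z)/z) and log(g(z)/z) on 𝔻 vanishing at 0; equivalently, f(z)/z = (g(z)/z)^{e^{iλ} cos λ} with the branch of the power taking the value 1 at z = 0. Moreover the correspondence f ↦ g is a bijection from F_λ onto S*. -/
open Set Metric
open scoped NNReal ENNReal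

/-- The class `F_λ` of (normalized) `λ`-spirallike functions on the unit disk:
analytic with `f 0 = 0`, `f' 0 = 1`, non-vanishing on the punctured disk, and
`Re(e^{−iλ}·z·f'(z)/f(z)) > 0` there.  `SpiralClass 0` is the class `S*` of
starlike functions. -/
def SpiralClass (lam : ℝ) : Set (ℂ → ℂ) :=
  {f | DifferentiableOn ℂ f (ball (0 : ℂ) 1) ∧ f 0 = 0 ∧ deriv f 0 = 1 ∧
    (∀ z ∈ ball (0 : ℂ) 1, z ≠ 0 → f z ≠ 0) ∧
    ∀ z ∈ ball (0 : ℂ) 1, z ≠ 0 →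
      0 < (Complex.exp (-(lam : ℂ) * Complex.I) * z * deriv f z / f z).re}

/-- `L` is the (unique) analytic branch of `log (f z / z)` on the disk vanishing at `0`. -/
def IsLogBranch (f L : ℂ → ℂ) : Prop :=
  DifferentiableOn ℂ L (ball (0 : ℂ) 1) ∧ L 0 = 0 ∧
    ∀ z ∈ ball (0 : ℂ) 1, z ≠ 0 → Complex.exp (L z) = f z / z

/-- `f ∈ F_λ` and `g ∈ S*` correspond to each other:
`L_f = e^{iλ}·cos λ · L_g` on the disk, i.e. `f(z)/z = (g(z)/z)^{e^{iλ} cos λ}`. -/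
def SpiralCorrespond (lam : ℝ) (f g : ℂ → ℂ) : Prop :=
  ∃ Lf Lg : ℂ → ℂ, IsLogBranch f Lf ∧ IsLogBranch g Lg ∧
    ∀ z ∈ ball (0 : ℂ) 1,
      Lf z = Complex.exp ((lam : ℂ) * Complex.I) * (Real.cos lam : ℂ) * Lg z

/-- Every function holomorphic on the unit ball has a primitive vanishing at `0`. -/
lemma exists_primitive {H : ℂ → ℂ} (hH : DifferentiableOn ℂ H (ball (0:ℂ) 1)) :
    ∃ L : ℂ → ℂ, L 0 = 0 ∧ ∀ z ∈ ball (0:ℂ) 1, HasDerivAt L (H z) z := by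
  set p : FormalMultilinearSeries ℂ ℂ ℂ := cauchyPowerSeries H 0 (1/2 : ℝ≥0) with hp_def
  have hhalf : HasFPowerSeriesOnBall H p 0 ((1/2 : ℝ≥0) : ℝ≥0∞) := by
    apply DifferentiableOn.hasFPowerSeriesOnBall
    · apply hH.mono
      intro x hx
      simp only [mem_closedBall, mem_ball] at *
      calc dist x 0 ≤ ((1/2 : ℝ≥0) : ℝ) := hx
        _ < 1 := by norm_num
    · norm_num
  have hp : ∀ r : ℝ≥0, (r:ℝ) < 1 → 0 < r → HasFPowerSeriesOnBall H p 0 r := by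
    intro r hr hr0
    have h1 : DifferentiableOn ℂ H (closedBall 0 r) := by
      apply hH.mono
      intro x hx
      simp only [mem_closedBall, mem_ball] at *
      exact lt_of_le_of_lt hx hr
    have h2 := h1.hasFPowerSeriesOnBall hr0
    rwa [h2.hasFPowerSeriesAt.eq_formalMultilinearSeries hhalf.hasFPowerSeriesAt] at h2
  refine ⟨fun z => ∑' n : ℕ, (p.coeff n / (n+1)) * z^(n+1), by simp, ?_⟩
  intro z hz
  simp only [mem_ball, dist_zero_right] at hz
  obtain ⟨r, hzr, hr1⟩ : ∃ r : ℝ≥0, ‖z‖ < r ∧ (r:ℝ) < 1 := by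
    refine ⟨⟨(‖z‖+1)/2, by positivity⟩, ?_, ?_⟩ <;>
      · erw [NNReal.coe_mk]; linarith
  obtain ⟨r₂, hr2, hr21⟩ : ∃ r₂ : ℝ≥0, (r:ℝ) < r₂ ∧ (r₂:ℝ) < 1 := by
    refine ⟨⟨((r:ℝ)+1)/2, by positivity⟩, ?_, ?_⟩ <;>
      · erw [NNReal.coe_mk (((r:ℝ)+1)/2)]; linarith
  have hr20 : 0 < r₂ := by
    have : (0:ℝ) ≤ r := r.coe_nonneg
    exact_mod_cast lt_of_le_of_lt this hr2
  have hrp : (r : ℝ≥0∞) < p.radius := by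
    calc (r : ℝ≥0∞) < r₂ := by exact_mod_cast hr2
      _ ≤ p.radius := (hp r₂ hr21 hr20).r_le
  have hsum_u : Summable fun n : ℕ => ‖p n‖ * (r:ℝ)^n := p.summable_norm_mul_pow hrp
  have hcoeff : ∀ n : ℕ, ‖p.coeff n‖ ≤ ‖p n‖ := by
    intro n
    calc ‖p.coeff n‖ = ‖p n (fun _ => 1)‖ := rfl
      _ ≤ ‖p n‖ * ∏ _i : Fin n, ‖(1:ℂ)‖ := (p n).le_opNorm _
      _ = ‖p n‖ := by simp
  have key : HasDerivAt (fun z => ∑' n : ℕ, (p.coeff n / (n+1)) * z^(n+1))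
      (∑' n : ℕ, p.coeff n * z^n) z := by
    apply hasDerivAt_tsum_of_isPreconnected hsum_u isOpen_ball
      (convex_ball (0:ℂ) (r:ℝ)).isPreconnected
      (g' := fun n y => p.coeff n * y^n) (y₀ := 0)
    · intro n y hy
      have h1 : HasDerivAt (fun y => p.coeff n / ((n:ℂ)+1) * y^(n+1))
          (p.coeff n / ((n:ℂ)+1) * (↑(n+1) * y^(n+1-1))) y :=
        (hasDerivAt_pow (n+1) y).const_mul (p.coeff n / ((n:ℂ)+1))
      refine h1.congr_deriv ?_
      have : ((n:ℂ)+1) ≠ 0 := Nat.cast_add_one_ne_zero n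
      push_cast
      field_simp
    · intro n y hy
      simp only [mem_ball, dist_zero_right] at hy
      rw [norm_mul, norm_pow]
      apply mul_le_mul (hcoeff n) (pow_le_pow_left₀ (norm_nonneg y) hy.le n) (by positivity)
        (norm_nonneg _)
    · simp only [mem_ball, dist_zero_right, norm_zero]; exact (norm_nonneg z).trans_lt hzr
    · simp only [zero_pow (Nat.succ_ne_zero _), mul_zero]
      exact summable_zero
    · simp only [mem_ball, dist_zero_right]; exact hzr
  convert key using 1
  have hmem : z ∈ Metric.eball (0:ℂ) r₂ := by
    rw [Metric.mem_eball, edist_zero_right]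
    exact_mod_cast hzr.trans hr2
  have hs := (hp r₂ hr21 hr20).hasSum (y := z) hmem
  rw [zero_add] at hs
  have : ∀ n : ℕ, (p n) (fun _ => z) = p.coeff n * z^n := by
    intro n
    rw [p.apply_eq_pow_smul_coeff, smul_eq_mul]
    ring
  rw [← hs.tsum_eq]
  exact tsum_congr fun n => this n

/-- A function with vanishing derivative on the unit ball is constant. -/
lemma const_of_deriv_zero {φ : ℂ → ℂ} (h : ∀ z ∈ ball (0:ℂ) 1, HasDerivAt φ 0 z) :
    ∀ z ∈ ball (0:ℂ) 1, φ z = φ 0 := by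
  intro z hz
  have h0 : (0:ℂ) ∈ ball (0:ℂ) 1 := by simp
  refine (convex_ball (0:ℂ) 1).is_const_of_fderivWithin_eq_zero (𝕜 := ℂ)
    (fun x hx => (h x hx).differentiableAt.differentiableWithinAt) ?_ hz h0
  intro x hx
  rw [fderivWithin_of_isOpen isOpen_ball hx, (h x hx).hasFDerivAt.fderiv]
  ext w
  simp

/-- Existence of an analytic logarithm for a nonvanishing holomorphic function on the
unit ball with value `1` at `0`. -/
lemma exists_log {h : ℂ → ℂ} (hd : DifferentiableOn ℂ h (ball (0:ℂ) 1)) (h0 : h 0 = 1)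
    (hne : ∀ z ∈ ball (0:ℂ) 1, h z ≠ 0) :
    ∃ L : ℂ → ℂ, DifferentiableOn ℂ L (ball (0:ℂ) 1) ∧ L 0 = 0 ∧
      ∀ z ∈ ball (0:ℂ) 1, Complex.exp (L z) = h z := by
  have hd' : DifferentiableOn ℂ (deriv h) (ball (0:ℂ) 1) :=
    ((hd.analyticOnNhd isOpen_ball).deriv).differentiableOn
  have hH : DifferentiableOn ℂ (fun z => deriv h z / h z) (ball (0:ℂ) 1) :=
    hd'.div hd hne
  obtain ⟨L, hL0, hL⟩ := exists_primitive hH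
  have hLd : DifferentiableOn ℂ L (ball (0:ℂ) 1) :=
    fun x hx => (hL x hx).differentiableAt.differentiableWithinAt
  refine ⟨L, hLd, hL0, ?_⟩
  have key : ∀ z ∈ ball (0:ℂ) 1, h z * Complex.exp (-L z) = 1 := by
    have hconst := const_of_deriv_zero (φ := fun z => h z * Complex.exp (-L z)) ?_
    · intro z hz
      rw [hconst z hz, h0, hL0]
      simp
    · intro z hz
      have h1 : HasDerivAt h (deriv h z) z :=
        (hd.differentiableAt (isOpen_ball.mem_nhds hz)).hasDerivAt
      have h2 : HasDerivAt (fun w => Complex.exp (-L w))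
          (Complex.exp (-L z) * -(deriv h z / h z)) z := ((hL z hz).neg).cexp
      have h3 : HasDerivAt (fun w => h w * Complex.exp (-L w))
          (deriv h z * Complex.exp (-L z) + h z * (Complex.exp (-L z) * -(deriv h z / h z))) z :=
        h1.mul h2
      convert h3 using 1
      have : h z ≠ 0 := hne z hz
      field_simp
      ring
  intro z hz
  have h1 := key z hz
  rw [Complex.exp_neg] at h1
  have h2 : Complex.exp (L z) ≠ 0 := Complex.exp_ne_zero _
  field_simp at h1
  exact h1.symm

/-- Uniqueness of log branches. -/
lemma logBranch_unique {f L₁ L₂ : ℂ → ℂ} (h₁ : IsLogBranch f L₁) (h₂ : IsLogBranch f L₂) :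
    Set.EqOn L₁ L₂ (ball (0:ℂ) 1) := by
  obtain ⟨hd₁, h01, he₁⟩ := h₁
  obtain ⟨hd₂, h02, he₂⟩ := h₂
  set d : ℂ → ℂ := fun z => L₁ z - L₂ z with hd_def
  have hexp : ∀ z ∈ ball (0:ℂ) 1, Complex.exp (d z) = 1 := by
    intro z hz
    rcases eq_or_ne z 0 with rfl | hz0
    · simp [hd_def, h01, h02]
    · have hne : f z / z ≠ 0 := by rw [← he₂ z hz hz0]; exact Complex.exp_ne_zero _
      rw [hd_def]
      simp only
      rw [Complex.exp_sub, he₁ z hz hz0, he₂ z hz hz0, div_self hne]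
  have hdd : ∀ z ∈ ball (0:ℂ) 1, DifferentiableAt ℂ d z := by
    intro z hz
    exact ((hd₁.differentiableAt (isOpen_ball.mem_nhds hz)).sub
      (hd₂.differentiableAt (isOpen_ball.mem_nhds hz)))
  have hzero : ∀ z ∈ ball (0:ℂ) 1, HasDerivAt d 0 z := by
    intro z hz
    have h1 : HasDerivAt (fun w => Complex.exp (d w)) (Complex.exp (d z) * deriv d z) z :=
      ((hdd z hz).hasDerivAt).cexp
    have h2 : (fun w => Complex.exp (d w)) =ᶠ[nhds z] fun _ => (1:ℂ) :=
      Filter.eventuallyEq_of_mem (isOpen_ball.mem_nhds hz) (fun w hw => hexp w hw)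
    have h3 : deriv (fun w => Complex.exp (d w)) z = 0 := by
      rw [h2.deriv_eq]; exact deriv_const _ _
    rw [h1.deriv] at h3
    have h4 : deriv d z = 0 := by
      rcases mul_eq_zero.mp h3 with h | h
      · exact absurd h (Complex.exp_ne_zero _)
      · exact h
    have := (hdd z hz).hasDerivAt
    rwa [h4] at this
  intro z hz
  have := const_of_deriv_zero hzero z hz
  have h5 : d 0 = 0 := by simp [hd_def, h01, h02]
  rw [h5] at this
  have h6 : L₁ z - L₂ z = 0 := this
  exact sub_eq_zero.mp h6

/-- Derivative identity for a function with a log branch. -/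
lemma deriv_eq_of_logBranch {f L : ℂ → ℂ} (hf : DifferentiableOn ℂ f (ball (0:ℂ) 1))
    (hL : IsLogBranch f L) {z : ℂ} (hz : z ∈ ball (0:ℂ) 1) (hz0 : z ≠ 0) :
    deriv f z = Complex.exp (L z) * (1 + z * deriv L z) := by
  obtain ⟨hLd, hL0, hLe⟩ := hL
  have hopen : IsOpen (ball (0:ℂ) 1 \ {0}) := isOpen_ball.sdiff isClosed_singleton
  have hmem : z ∈ ball (0:ℂ) 1 \ {0} := ⟨hz, hz0⟩
  have heq : f =ᶠ[nhds z] fun w => w * Complex.exp (L w) := by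
    refine Filter.eventuallyEq_of_mem (hopen.mem_nhds hmem) (fun w hw => ?_)
    rw [hLe w hw.1 hw.2, mul_comm, div_mul_cancel₀ _ hw.2]
  have hder : HasDerivAt (fun w => w * Complex.exp (L w))
      (1 * Complex.exp (L z) + z * (Complex.exp (L z) * deriv L z)) z := by
    exact (hasDerivAt_id z).mul ((hLd.differentiableAt (isOpen_ball.mem_nhds hz)).hasDerivAt.cexp)
  rw [heq.deriv_eq, hder.deriv]
  ring

/-- Construction lemma: `g z = z * exp (M z)`. -/
lemma construct_base {M : ℂ → ℂ} (hM : DifferentiableOn ℂ M (ball (0:ℂ) 1)) (hM0 : M 0 = 0) :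
    DifferentiableOn ℂ (fun z => z * Complex.exp (M z)) (ball (0:ℂ) 1) ∧
    (fun z => z * Complex.exp (M z)) 0 = 0 ∧
    deriv (fun z => z * Complex.exp (M z)) 0 = 1 ∧
    (∀ z ∈ ball (0:ℂ) 1, z ≠ 0 → z * Complex.exp (M z) ≠ 0) ∧
    IsLogBranch (fun z => z * Complex.exp (M z)) M := by
  have h0b : (0:ℂ) ∈ ball (0:ℂ) 1 := by simp
  have hdiff : DifferentiableOn ℂ (fun z => z * Complex.exp (M z)) (ball (0:ℂ) 1) :=
    (differentiableOn_id).mul (hM.cexp)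
  have hder0 : HasDerivAt (fun z => z * Complex.exp (M z))
      (1 * Complex.exp (M 0) + 0 * (Complex.exp (M 0) * deriv M 0)) 0 :=
    (hasDerivAt_id 0).mul ((hM.differentiableAt (isOpen_ball.mem_nhds h0b)).hasDerivAt.cexp)
  refine ⟨hdiff, by simp, ?_, ?_, hM, hM0, ?_⟩
  · rw [hder0.deriv, hM0]; simp
  · intro z hz hz0
    exact mul_ne_zero hz0 (Complex.exp_ne_zero _)
  · intro z hz hz0
    field_simp

/-- The key algebraic re-expression. -/
lemma expr_eq {A z e d : ℂ} (hz : z ≠ 0) (he : e ≠ 0) :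
    A * z * (e * (1 + z * d)) / (z * e) = A * (1 + z * d) := by
  field_simp

/-- The real-part bridge. -/
lemma re_bridge (lam : ℝ) (t : ℂ) :
    (Complex.exp (-(lam:ℂ) * Complex.I) *
      (1 + Complex.exp ((lam:ℂ) * Complex.I) * (Real.cos lam : ℂ) * t)).re
      = Real.cos lam * (1 + t.re) := by
  have h1 : Complex.exp (-(lam:ℂ) * Complex.I) * (Complex.exp ((lam:ℂ) * Complex.I)
      * (Real.cos lam : ℂ)) = (Real.cos lam : ℂ) := by
    rw [← mul_assoc, ← Complex.exp_add]
    ring_nf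
    simp
  have h2 : (Complex.exp (-(lam:ℂ) * Complex.I)).re = Real.cos lam := by
    have h : -(lam:ℂ) * Complex.I = ((-lam : ℝ):ℂ) * Complex.I := by push_cast; ring
    rw [h, Complex.exp_ofReal_mul_I_re, Real.cos_neg]
  have h3 : Complex.exp (-(lam:ℂ) * Complex.I) *
      (1 + Complex.exp ((lam:ℂ) * Complex.I) * (Real.cos lam : ℂ) * t)
      = Complex.exp (-(lam:ℂ) * Complex.I) + (Real.cos lam : ℂ) * t := by
    rw [mul_add, mul_one]
    congr 1
    rw [← mul_assoc, ← mul_assoc, ← Complex.exp_add]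
    ring_nf
    simp
  rw [h3, Complex.add_re, h2, Complex.re_ofReal_mul]
  ring

/-- Rewriting the spiral-likeness quantity through a log branch. -/
lemma spiral_expr {f L : ℂ → ℂ} (hf : DifferentiableOn ℂ f (ball (0:ℂ) 1))
    (hL : IsLogBranch f L) {z : ℂ} (hz : z ∈ ball (0:ℂ) 1) (hz0 : z ≠ 0) (A : ℂ) :
    A * z * deriv f z / f z = A * (1 + z * deriv L z) := by
  have hfz : f z = z * Complex.exp (L z) := by
    rw [hL.2.2 z hz hz0, mul_comm, div_mul_cancel₀ _ hz0]
  rw [deriv_eq_of_logBranch hf hL hz hz0, hfz]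
  exact expr_eq hz0 (Complex.exp_ne_zero _)

/-- Every function in a spiral class has a log branch. -/
lemma exists_logBranch {f : ℂ → ℂ} {lam : ℝ} (hf : f ∈ SpiralClass lam) :
    ∃ L, IsLogBranch f L := by
  obtain ⟨hfd, hf0, hfd0, hfne, _⟩ := hf
  have h0b : (0:ℂ) ∈ ball (0:ℂ) 1 := by simp
  have hd : DifferentiableOn ℂ (dslope f 0) (ball (0:ℂ) 1) :=
    (Complex.differentiableOn_dslope (isOpen_ball.mem_nhds h0b)).mpr hfd
  have hds : ∀ z ∈ ball (0:ℂ) 1, z ≠ 0 → dslope f 0 z = f z / z := by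
    intro z hz hz0
    rw [dslope_of_ne f hz0, slope_def_field, hf0]
    simp
  have h1 : dslope f 0 0 = 1 := by rw [dslope_same, hfd0]
  have hne : ∀ z ∈ ball (0:ℂ) 1, dslope f 0 z ≠ 0 := by
    intro z hz
    rcases eq_or_ne z 0 with rfl | hz0
    · rw [h1]; exact one_ne_zero
    · rw [hds z hz hz0]; exact div_ne_zero (hfne z hz hz0) hz0
  obtain ⟨L, hLd, hL0, hLe⟩ := exists_log hd h1 hne
  exact ⟨L, hLd, hL0, fun z hz hz0 => by rw [hLe z hz, hds z hz hz0]⟩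

/-- Membership of the constructed function, together with its log branch. -/
lemma mk_mem {lam' : ℝ} {M : ℂ → ℂ} (hM : DifferentiableOn ℂ M (ball (0:ℂ) 1)) (hM0 : M 0 = 0)
    (hre : ∀ z ∈ ball (0:ℂ) 1, z ≠ 0 →
      0 < (Complex.exp (-(lam':ℂ) * Complex.I) * (1 + z * deriv M z)).re) :
    (fun z => z * Complex.exp (M z)) ∈ SpiralClass lam' ∧
      IsLogBranch (fun z => z * Complex.exp (M z)) M := by
  obtain ⟨hdiff, h0, hd0, hne, hbr⟩ := construct_base hM hM0
  refine ⟨⟨hdiff, h0, hd0, hne, ?_⟩, hbr⟩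
  intro z hz hz0
  rw [spiral_expr hdiff hbr hz hz0]
  exact hre z hz hz0

/-- every `f ∈ F_λ` corresponds to a unique starlike `g ∈ S*` (unique as a
function on the disk), and the correspondence `f ↦ g` is a bijection from `F_λ` onto
`S*`. -/
theorem spirallike_starlike_correspondence (lam : ℝ)
    (hlam : lam ∈ Set.Ioo (-(Real.pi / 2)) (Real.pi / 2)) :
    (∀ f ∈ SpiralClass lam, ∃ g ∈ SpiralClass 0, SpiralCorrespond lam f g) ∧
    (∀ f ∈ SpiralClass lam, ∀ g₁ ∈ SpiralClass 0, ∀ g₂ ∈ SpiralClass 0,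
      SpiralCorrespond lam f g₁ → SpiralCorrespond lam f g₂ →
        Set.EqOn g₁ g₂ (ball (0 : ℂ) 1)) ∧
    (∀ g ∈ SpiralClass 0, ∃ f ∈ SpiralClass lam, SpiralCorrespond lam f g) ∧
    (∀ f₁ ∈ SpiralClass lam, ∀ f₂ ∈ SpiralClass lam, ∀ g ∈ SpiralClass 0,
      SpiralCorrespond lam f₁ g → SpiralCorrespond lam f₂ g →
        Set.EqOn f₁ f₂ (ball (0 : ℂ) 1)) := by
  have hcos : 0 < Real.cos lam := Real.cos_pos_of_mem_Ioo hlam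
  have hμ : Complex.exp ((lam:ℂ) * Complex.I) * (Real.cos lam : ℂ) ≠ 0 :=
    mul_ne_zero (Complex.exp_ne_zero _) (by exact_mod_cast hcos.ne')
  have hexp0 : Complex.exp (-((0:ℝ):ℂ) * Complex.I) = 1 := by simp
  have cancel : Complex.exp ((lam:ℂ) * Complex.I) * (Real.cos lam : ℂ) *
      (Complex.exp ((lam:ℂ) * Complex.I) * (Real.cos lam : ℂ))⁻¹ = 1 := mul_inv_cancel₀ hμ
  refine ⟨?_, ?_, ?_, ?_⟩
  · -- forward existence
    intro f hf
    obtain ⟨L, hL⟩ := exists_logBranch hf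
    set Lg : ℂ → ℂ :=
      fun z => (Complex.exp ((lam:ℂ) * Complex.I) * (Real.cos lam : ℂ))⁻¹ * L z with hLg_def
    have hLgd : DifferentiableOn ℂ Lg (ball (0:ℂ) 1) := hL.1.const_mul _
    have hLg0 : Lg 0 = 0 := by rw [hLg_def]; simp [hL.2.1]
    have hre : ∀ z ∈ ball (0:ℂ) 1, z ≠ 0 →
        0 < (Complex.exp (-((0:ℝ):ℂ) * Complex.I) * (1 + z * deriv Lg z)).re := by
      intro z hz hz0
      have hLz : DifferentiableAt ℂ L z := hL.1.differentiableAt (isOpen_ball.mem_nhds hz)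
      have e1 : deriv Lg z =
          (Complex.exp ((lam:ℂ) * Complex.I) * (Real.cos lam : ℂ))⁻¹ * deriv L z := by
        rw [hLg_def]; exact deriv_const_mul _ hLz
      have hsp := hf.2.2.2.2 z hz hz0
      rw [spiral_expr hf.1 hL hz hz0] at hsp
      have e2 : z * deriv L z =
          Complex.exp ((lam:ℂ) * Complex.I) * (Real.cos lam : ℂ) * (z * deriv Lg z) := by
        rw [e1]; linear_combination (-(z * deriv L z)) * cancel
      rw [e2, re_bridge] at hsp
      have h6 : 0 < 1 + (z * deriv Lg z).re := by nlinarith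
      rw [hexp0, one_mul, Complex.add_re, Complex.one_re]
      exact h6
    obtain ⟨hmem, hbr⟩ := mk_mem hLgd hLg0 hre
    refine ⟨_, hmem, L, Lg, hL, hbr, ?_⟩
    intro z hz
    rw [hLg_def]
    simp only
    linear_combination (-(L z)) * cancel
  · -- uniqueness of g
    rintro f hf g₁ hg₁ g₂ hg₂ ⟨Lf₁, Lg₁, hbf₁, hbg₁, hc₁⟩ ⟨Lf₂, Lg₂, hbf₂, hbg₂, hc₂⟩ z hz
    rcases eq_or_ne z 0 with rfl | hz0
    · rw [hg₁.2.1, hg₂.2.1]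
    · have hLf : Lf₁ z = Lf₂ z := logBranch_unique hbf₁ hbf₂ hz
      have hLg : Lg₁ z = Lg₂ z := by
        apply mul_left_cancel₀ hμ
        rw [← hc₁ z hz, ← hc₂ z hz, hLf]
      have e1 : g₁ z = z * Complex.exp (Lg₁ z) := by
        rw [hbg₁.2.2 z hz hz0, mul_comm, div_mul_cancel₀ _ hz0]
      have e2 : g₂ z = z * Complex.exp (Lg₂ z) := by
        rw [hbg₂.2.2 z hz hz0, mul_comm, div_mul_cancel₀ _ hz0]
      rw [e1, e2, hLg]
  · -- backward existence
    intro g hg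
    obtain ⟨Lg, hLg⟩ := exists_logBranch hg
    set Lf : ℂ → ℂ :=
      fun z => Complex.exp ((lam:ℂ) * Complex.I) * (Real.cos lam : ℂ) * Lg z with hLf_def
    have hLfd : DifferentiableOn ℂ Lf (ball (0:ℂ) 1) := hLg.1.const_mul _
    have hLf0 : Lf 0 = 0 := by rw [hLf_def]; simp [hLg.2.1]
    have hre : ∀ z ∈ ball (0:ℂ) 1, z ≠ 0 →
        0 < (Complex.exp (-(lam:ℂ) * Complex.I) * (1 + z * deriv Lf z)).re := by
      intro z hz hz0
      have hLz : DifferentiableAt ℂ Lg z := hLg.1.differentiableAt (isOpen_ball.mem_nhds hz)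
      have e1 : deriv Lf z =
          Complex.exp ((lam:ℂ) * Complex.I) * (Real.cos lam : ℂ) * deriv Lg z := by
        rw [hLf_def]; exact deriv_const_mul _ hLz
      have e2 : z * deriv Lf z =
          Complex.exp ((lam:ℂ) * Complex.I) * (Real.cos lam : ℂ) * (z * deriv Lg z) := by
        rw [e1]; ring
      rw [e2, re_bridge]
      have hsp := hg.2.2.2.2 z hz hz0
      rw [spiral_expr hg.1 hLg hz hz0, hexp0, one_mul, Complex.add_re, Complex.one_re] at hsp
      exact mul_pos hcos hsp
    obtain ⟨hmem, hbr⟩ := mk_mem hLfd hLf0 hre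
    exact ⟨_, hmem, Lf, Lg, hbr, hLg, fun z hz => rfl⟩
  · -- uniqueness of f
    rintro f₁ hf₁ f₂ hf₂ g hg ⟨Lf₁, Lg₁, hbf₁, hbg₁, hc₁⟩ ⟨Lf₂, Lg₂, hbf₂, hbg₂, hc₂⟩ z hz
    rcases eq_or_ne z 0 with rfl | hz0
    · rw [hf₁.2.1, hf₂.2.1]
    · have hLg : Lg₁ z = Lg₂ z := logBranch_unique hbg₁ hbg₂ hz
      have hLf : Lf₁ z = Lf₂ z := by rw [hc₁ z hz, hc₂ z hz, hLg]
      have e1 : f₁ z = z * Complex.exp (Lf₁ z) := by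
        rw [hbf₁.2.2 z hz hz0, mul_comm, div_mul_cancel₀ _ hz0]
      have e2 : f₂ z = z * Complex.exp (Lf₂ z) := by
        rw [hbf₂.2.2 z hz hz0, mul_comm, div_mul_cancel₀ _ hz0]
      rw [e1, e2, hLf]
end

section
/- Let λ ∈ (−π/2, π/2) and let β : ℝ → ℝ be a non-decreasing function with β(t + 2π) = β(t) + 2π for all t ∈ ℝ. Define f(z) = z·exp( −(e^{iλ} cos λ / π) ∫_{[0,2π)} Log(1 − e^{−it} z) dμ_β(t) ) for z ∈ 𝔻, where μ_β is the Lebesgue–Stieltjes measure associated with β and Log is the principal branch of the logarithm (well defined since |e^{−it}z| < 1). Then f ∈ F_λ, i.e. f is a λ-spirallike function. -/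
open Set Metric MeasureTheory

open Filter Function Topology


lemma rightLim_shift {β : ℝ → ℝ} (hmono : Monotone β) (c : ℝ)
    (h : ∀ t, β (t + c) = β t + c) (x : ℝ) :
    Function.rightLim β (x + c) = Function.rightLim β x + c := by
  have hne : (𝓝[>] (x + c)).NeBot := inferInstance
  apply rightLim_eq_of_tendsto
  have tmap : Tendsto (fun y : ℝ => y - c) (𝓝[>] (x + c)) (𝓝[>] x) := by
    apply tendsto_nhdsWithin_of_tendsto_nhds_of_eventually_within
    · have : Tendsto (fun y : ℝ => y - c) (𝓝 (x + c)) (𝓝 (x + c - c)) :=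
        (continuous_id.sub continuous_const).tendsto _
      simpa using this.mono_left nhdsWithin_le_nhds
    · filter_upwards [self_mem_nhdsWithin] with y hy
      simp only [mem_Ioi] at hy ⊢
      linarith
  have := ((hmono.tendsto_rightLim x).comp tmap).add tendsto_const_nhds (b := c)
  convert this using 1
  ext y
  have := h (y - c); simp at this; simp [this]

lemma leftLim_shift {g : ℝ → ℝ} (hmono : Monotone g) (c : ℝ)
    (h : ∀ t, g (t + c) = g t + c) (x : ℝ) :
    Function.leftLim g (x + c) = Function.leftLim g x + c := by
  have hne : (𝓝[<] (x + c)).NeBot := inferInstance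
  apply leftLim_eq_of_tendsto
  have tmap : Tendsto (fun y : ℝ => y - c) (𝓝[<] (x + c)) (𝓝[<] x) := by
    apply tendsto_nhdsWithin_of_tendsto_nhds_of_eventually_within
    · have : Tendsto (fun y : ℝ => y - c) (𝓝 (x + c)) (𝓝 (x + c - c)) :=
        (continuous_id.sub continuous_const).tendsto _
      simpa using this.mono_left nhdsWithin_le_nhds
    · filter_upwards [self_mem_nhdsWithin] with y hy
      simp only [mem_Iio] at hy ⊢
      linarith
  have := ((hmono.tendsto_leftLim x).comp tmap).add tendsto_const_nhds (b := c)
  convert this using 1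
  ext y
  have := h (y - c); simp at this; simp [this]

lemma stieltjes_mass {β : ℝ → ℝ} (hmono : Monotone β)
    (hper : ∀ t : ℝ, β (t + 2 * Real.pi) = β t + 2 * Real.pi) :
    hmono.stieltjesFunction.measure (Set.Ico (0:ℝ) (2 * Real.pi))
      = ENNReal.ofReal (2 * Real.pi) := by
  rw [StieltjesFunction.measure_Ico]
  have hg : ∀ t, (hmono.stieltjesFunction : ℝ → ℝ) (t + 2 * Real.pi)
      = hmono.stieltjesFunction t + 2 * Real.pi := by
    intro t
    rw [hmono.stieltjesFunction_eq, hmono.stieltjesFunction_eq]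
    exact rightLim_shift hmono _ hper t
  have := leftLim_shift hmono.stieltjesFunction.mono _ hg 0
  rw [zero_add] at this
  rw [this]
  ring_nf

lemma norm_den_pos {t : ℝ} {z : ℂ} :
    1 - ‖z‖ ≤ ‖(1 : ℂ) - Complex.exp (-(t:ℂ) * Complex.I) * z‖ := by
  have habs : ‖Complex.exp (-(t:ℂ) * Complex.I) * z‖ = ‖z‖ := by
    rw [norm_mul, Complex.norm_exp]
    simp
  calc 1 - ‖z‖ = ‖(1:ℂ)‖ - ‖Complex.exp (-(t:ℂ) * Complex.I) * z‖ := by rw [habs]; simp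
  _ ≤ ‖(1:ℂ) - Complex.exp (-(t:ℂ) * Complex.I) * z‖ := norm_sub_norm_le _ _

lemma hasDerivAt_logterm (t : ℝ) {z : ℂ} (hz : ‖z‖ < 1) :
    HasDerivAt (fun w : ℂ => Complex.log (1 - Complex.exp (-(t:ℂ) * Complex.I) * w))
      (-(Complex.exp (-(t:ℂ) * Complex.I)) / (1 - Complex.exp (-(t:ℂ) * Complex.I) * z)) z := by
  have h1 : HasDerivAt (fun w : ℂ => 1 - Complex.exp (-(t:ℂ) * Complex.I) * w)
      (-(Complex.exp (-(t:ℂ) * Complex.I))) z := by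
    simpa using ((hasDerivAt_id z).const_mul (Complex.exp (-(t:ℂ) * Complex.I))).const_sub 1
  apply h1.clog
  left
  have habs : ‖Complex.exp (-(t:ℂ) * Complex.I) * z‖ = ‖z‖ := by
    rw [norm_mul, Complex.norm_exp]; simp
  have hre : (Complex.exp (-(t:ℂ) * Complex.I) * z).re < 1 :=
    lt_of_le_of_lt (Complex.re_le_norm _) (by rw [habs]; exact hz)
  simpa using hre

lemma meas_logterm (ν : Measure ℝ) (x : ℂ) :
    AEStronglyMeasurable
      (fun t : ℝ => Complex.log (1 - Complex.exp (-(t:ℂ) * Complex.I) * x)) ν := by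
  apply Measurable.aestronglyMeasurable
  apply Measurable.clog
  fun_prop

lemma norm_logterm_le {r : ℝ} (hr : r < 1) {x : ℂ} (hx : ‖x‖ ≤ r) (t : ℝ) :
    ‖Complex.log (1 - Complex.exp (-(t:ℂ) * Complex.I) * x)‖
      ≤ r ^ 2 * (1 - r)⁻¹ / 2 + r := by
  have habs : ‖-(Complex.exp (-(t:ℂ) * Complex.I) * x)‖ = ‖x‖ := by
    rw [norm_neg, norm_mul, Complex.norm_exp]; simp
  have hw : ‖-(Complex.exp (-(t:ℂ) * Complex.I) * x)‖ < 1 := by rw [habs]; linarith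
  have heq : (1:ℂ) - Complex.exp (-(t:ℂ) * Complex.I) * x
      = 1 + -(Complex.exp (-(t:ℂ) * Complex.I) * x) := by ring
  rw [heq]
  refine le_trans (Complex.norm_log_one_add_le hw) ?_
  rw [habs]
  have h0 : (0:ℝ) ≤ ‖x‖ := norm_nonneg x
  have h1 : 0 < 1 - r := by linarith
  have hr0 : (0:ℝ) ≤ r := le_trans h0 hx
  have i1 : (1 - ‖x‖)⁻¹ ≤ (1 - r)⁻¹ := by
    apply inv_anti₀ h1; linarith
  have i2 : ‖x‖ ^ 2 * (1 - ‖x‖)⁻¹ ≤ r ^ 2 * (1 - r)⁻¹ := by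
    exact mul_le_mul (by nlinarith) i1 (inv_nonneg.2 (by linarith)) (by positivity)
  linarith

lemma key_deriv (ν : Measure ℝ) [IsFiniteMeasure ν] {z₀ : ℂ} (hz₀ : ‖z₀‖ < 1) :
    Integrable (fun t : ℝ => -(Complex.exp (-(t:ℂ) * Complex.I))
        / (1 - Complex.exp (-(t:ℂ) * Complex.I) * z₀)) ν ∧
      HasDerivAt
        (fun z => ∫ t, Complex.log (1 - Complex.exp (-(t:ℂ) * Complex.I) * z) ∂ν)
        (∫ t, -(Complex.exp (-(t:ℂ) * Complex.I))
          / (1 - Complex.exp (-(t:ℂ) * Complex.I) * z₀) ∂ν) z₀ := by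
  set ε := (1 - ‖z₀‖) / 2 with hε
  have hεpos : 0 < ε := by have := norm_nonneg z₀; simp only [hε]; linarith
  set r := (1 + ‖z₀‖) / 2 with hrdef
  have hr1 : r < 1 := by simp only [hrdef]; linarith
  have hball : ∀ x ∈ ball z₀ ε, ‖x‖ ≤ r := by
    intro x hx
    have h := mem_ball_iff_norm.1 hx
    calc ‖x‖ = ‖z₀ + (x - z₀)‖ := by ring_nf
    _ ≤ ‖z₀‖ + ‖x - z₀‖ := norm_add_le _ _
    _ ≤ r := by simp only [hrdef]; linarith
  have hz₀r : ‖z₀‖ ≤ r := by simp only [hrdef]; linarith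
  apply hasDerivAt_integral_of_dominated_loc_of_deriv_le
    (F := fun (z : ℂ) (t : ℝ) => Complex.log (1 - Complex.exp (-(t:ℂ) * Complex.I) * z))
    (F' := fun (z : ℂ) (t : ℝ) => -(Complex.exp (-(t:ℂ) * Complex.I))
      / (1 - Complex.exp (-(t:ℂ) * Complex.I) * z))
    (bound := fun _ : ℝ => (1 - r)⁻¹) (ball_mem_nhds z₀ hεpos)
  · exact Filter.Eventually.of_forall fun x => meas_logterm ν x
  · exact ⟨meas_logterm ν z₀,
      HasFiniteIntegral.of_bounded (C := r ^ 2 * (1 - r)⁻¹ / 2 + r)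
        (ae_of_all _ fun t => norm_logterm_le hr1 hz₀r t)⟩
  · apply Measurable.aestronglyMeasurable
    apply Measurable.div
    · fun_prop
    · fun_prop
  · refine ae_of_all _ fun t => fun x hx => ?_
    have hxr := hball x hx
    have h1 : 0 < 1 - r := by linarith
    have h6 : 1 - r ≤ ‖(1:ℂ) - Complex.exp (-(t:ℂ) * Complex.I) * x‖ :=
      le_trans (by linarith) (norm_den_pos (t := t) (z := x))
    have habs : ‖-(Complex.exp (-(t:ℂ) * Complex.I))‖ = 1 := by
      rw [norm_neg, Complex.norm_exp]; simp
    rw [norm_div, habs]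
    rw [show ((1:ℝ) - r)⁻¹ = 1 / (1 - r) by rw [one_div]]
    exact one_div_le_one_div_of_le h1 h6
  · exact integrable_const _
  · refine ae_of_all _ fun t x hx => hasDerivAt_logterm t (lt_of_le_of_lt (hball x hx) hr1)
lemma re_quot {w : ℂ} (hw : ‖w‖ < 1) : 0 < (w / (1 - w)).re + 1 / 2 := by
  have hne : (1 : ℂ) - w ≠ 0 := by
    intro h
    have : (1 : ℂ) = w := by linear_combination h
    rw [← this] at hw; simp at hw
  have h1 : Complex.normSq w < 1 := by
    have : Complex.normSq w = ‖w‖ ^ 2 := by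
      rw [Complex.normSq_eq_norm_sq]
    rw [this]
    nlinarith [norm_nonneg w]
  have h2 : 0 < Complex.normSq (1 - w) := Complex.normSq_pos.2 hne
  have hrw : w / (1 - w) = (1 - w)⁻¹ - 1 := by field_simp; ring
  rw [hrw, Complex.sub_re, Complex.inv_re, Complex.one_re]
  have h3 : Complex.normSq (1 - w) = (1 - w.re) ^ 2 + w.im ^ 2 := by
    rw [Complex.normSq_apply]; simp [Complex.sub_re, Complex.sub_im]; ring
  have h4 : (1 - w).re = 1 - w.re := by simp
  have h1' : w.re ^ 2 + w.im ^ 2 < 1 := by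
    rw [Complex.normSq_apply] at h1; nlinarith [h1]
  rw [h3, h4]
  rw [h3] at h2
  rw [show ∀ a : ℝ, a - 1 + 1/2 = a - 1/2 by intro a; ring]
  rw [sub_pos, lt_div_iff₀ h2]
  nlinarith

lemma norm_unit_mul (t : ℝ) (z : ℂ) : ‖Complex.exp (-(t:ℂ) * Complex.I) * z‖ = ‖z‖ := by
  rw [norm_mul, Complex.norm_exp]; simp

/-- if `β : ℝ → ℝ` is non-decreasing with `β(t+2π) = β(t) + 2π`, then
`f(z) = z·exp(−(e^{iλ} cos λ / π) ∫_{[0,2π)} Log(1 − e^{−it} z) dμ_β(t))` is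
`λ`-spirallike, where `μ_β` is the Lebesgue–Stieltjes measure of (the right-continuous
modification of) `β`. -/
theorem representation_gives_spirallike (lam : ℝ)
    (hlam : lam ∈ Set.Ioo (-(Real.pi / 2)) (Real.pi / 2))
    (β : ℝ → ℝ) (hmono : Monotone β)
    (hper : ∀ t : ℝ, β (t + 2 * Real.pi) = β t + 2 * Real.pi) :
    (fun z : ℂ => z * Complex.exp
        (-(Complex.exp ((lam : ℂ) * Complex.I) * (Real.cos lam : ℂ) / (Real.pi : ℂ)) *
          ∫ t in Set.Ico (0 : ℝ) (2 * Real.pi),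
            Complex.log (1 - Complex.exp (-(t : ℂ) * Complex.I) * z)
              ∂hmono.stieltjesFunction.measure))
      ∈ SpiralClass lam := by
  have hπ : 0 < Real.pi := Real.pi_pos
  set ν : Measure ℝ :=
    hmono.stieltjesFunction.measure.restrict (Set.Ico (0:ℝ) (2 * Real.pi)) with hν
  have hmass : ν Set.univ = ENNReal.ofReal (2 * Real.pi) := by
    rw [hν, Measure.restrict_apply_univ, stieltjes_mass hmono hper]
  haveI : IsFiniteMeasure ν := ⟨by rw [hmass]; exact ENNReal.ofReal_lt_top⟩
  set c : ℂ := Complex.exp ((lam:ℂ) * Complex.I) * (Real.cos lam : ℂ) / (Real.pi:ℂ) with hc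
  set G : ℂ → ℂ :=
    fun z => ∫ t, Complex.log (1 - Complex.exp (-(t:ℂ) * Complex.I) * z) ∂ν with hGdef
  set f : ℂ → ℂ := fun z => z * Complex.exp (-c * G z) with hfdef
  show f ∈ SpiralClass lam
  have hf_deriv : ∀ z : ℂ, ‖z‖ < 1 →
      HasDerivAt f (1 * Complex.exp (-c * G z) + z * (Complex.exp (-c * G z) *
        (-c * (∫ t, -(Complex.exp (-(t:ℂ) * Complex.I))
          / (1 - Complex.exp (-(t:ℂ) * Complex.I) * z) ∂ν)))) z := by
    intro z hz
    have h1 := (key_deriv ν hz).2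
    have h2 := (h1.const_mul (-c)).cexp
    exact (hasDerivAt_id z).mul h2
  refine ⟨?_, ?_, ?_, ?_, ?_⟩
  · exact fun z hz =>
      ((hf_deriv z (mem_ball_zero_iff.1 hz)).differentiableAt).differentiableWithinAt
  · simp [hfdef]
  · have hG0 : G 0 = 0 := by simp [hGdef]
    have h := (hf_deriv 0 (by simp)).deriv
    rw [h, hG0]
    simp
  · intro z _ hz0
    simp only [hfdef]
    exact mul_ne_zero hz0 (Complex.exp_ne_zero _)
  · intro z hzball hz0
    have hz : ‖z‖ < 1 := mem_ball_zero_iff.1 hzball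
    have hint := (key_deriv ν hz).1
    have hderiv := (hf_deriv z hz).deriv
    set D : ℂ := ∫ t, -(Complex.exp (-(t:ℂ) * Complex.I))
        / (1 - Complex.exp (-(t:ℂ) * Complex.I) * z) ∂ν with hD
    set E : ℂ := Complex.exp (-c * G z) with hE
    have hEne : E ≠ 0 := Complex.exp_ne_zero _
    set J : ℂ := ∫ t, (Complex.exp (-(t:ℂ) * Complex.I) * z)
        / (1 - Complex.exp (-(t:ℂ) * Complex.I) * z) ∂ν with hJ
    have hintJ : Integrable (fun t : ℝ => (Complex.exp (-(t:ℂ) * Complex.I) * z)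
        / (1 - Complex.exp (-(t:ℂ) * Complex.I) * z)) ν := by
      refine (hint.const_mul (-z)).congr (ae_of_all _ fun t => ?_)
      ring
    have hzD : z * D = -J := by
      rw [hD, hJ, ← integral_const_mul, ← integral_neg]
      congr 1; funext t; ring
    have hfz : f z = z * E := rfl
    have hstep : z * deriv f z / f z = 1 + c * J := by
      rw [hderiv, hfz]
      rw [show 1 * E + z * (E * (-c * D)) = E * (1 + c * J) by
        linear_combination (-c * E) * hzD]
      rw [show z * (E * (1 + c * J)) = (1 + c * J) * (z * E) by ring]
      rw [mul_div_assoc]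
      rw [div_self (mul_ne_zero hz0 hEne), mul_one]
    have hec : Complex.exp (-(lam:ℂ) * Complex.I) * c = ((Real.cos lam / Real.pi : ℝ) : ℂ) := by
      rw [hc]
      rw [show Complex.exp ((lam:ℂ) * Complex.I) * (Real.cos lam : ℂ) / (Real.pi:ℂ)
        = Complex.exp ((lam:ℂ) * Complex.I) * ((Real.cos lam : ℂ) / (Real.pi:ℂ)) by ring]
      rw [← mul_assoc, ← Complex.exp_add]
      rw [show -(lam:ℂ) * Complex.I + (lam:ℂ) * Complex.I = 0 by ring]
      rw [Complex.exp_zero, one_mul]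
      push_cast
      ring
    have hval : Complex.exp (-(lam:ℂ) * Complex.I) * z * deriv f z / f z
        = Complex.exp (-(lam:ℂ) * Complex.I) + ((Real.cos lam / Real.pi : ℝ) : ℂ) * J := by
      rw [mul_assoc, mul_div_assoc, hstep, ← hec]
      ring
    rw [hval, Complex.add_re, Complex.re_ofReal_mul]
    have hexre : (Complex.exp (-(lam:ℂ) * Complex.I)).re = Real.cos lam := by
      rw [show -(lam:ℂ) * Complex.I = ((-lam : ℝ):ℂ) * Complex.I by push_cast; ring,
        Complex.exp_ofReal_mul_I_re, Real.cos_neg]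
    rw [hexre]
    have hJre : J.re = ∫ t, ((Complex.exp (-(t:ℂ) * Complex.I) * z)
        / (1 - Complex.exp (-(t:ℂ) * Complex.I) * z)).re ∂ν := by
      rw [hJ]
      have h := integral_re (μ := ν) hintJ
      simp only [RCLike.re_to_complex] at h
      exact h.symm
    have h2 : ∀ t : ℝ, 0 < ((Complex.exp (-(t:ℂ) * Complex.I) * z)
        / (1 - Complex.exp (-(t:ℂ) * Complex.I) * z)).re + 1/2 := by
      intro t
      exact re_quot (by rw [norm_unit_mul]; exact hz)
    have hint2 : Integrable (fun t : ℝ => ((Complex.exp (-(t:ℂ) * Complex.I) * z)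
        / (1 - Complex.exp (-(t:ℂ) * Complex.I) * z)).re + 1/2) ν := by
      have hre : Integrable (fun t : ℝ => ((Complex.exp (-(t:ℂ) * Complex.I) * z)
        / (1 - Complex.exp (-(t:ℂ) * Complex.I) * z)).re) ν := by simpa using hintJ.re
      exact hre.add (integrable_const _)
    have h3 : 0 < ∫ t, (((Complex.exp (-(t:ℂ) * Complex.I) * z)
        / (1 - Complex.exp (-(t:ℂ) * Complex.I) * z)).re + 1/2) ∂ν := by
      rw [integral_pos_iff_support_of_nonneg (fun t => (h2 t).le) hint2]
      rw [show Function.support (fun t : ℝ => ((Complex.exp (-(t:ℂ) * Complex.I) * z)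
        / (1 - Complex.exp (-(t:ℂ) * Complex.I) * z)).re + 1/2) = Set.univ from
        Set.eq_univ_of_forall fun t => (h2 t).ne']
      rw [hmass]
      exact ENNReal.ofReal_pos.2 (by positivity)
    rw [integral_add (by simpa using hintJ.re) (integrable_const _), integral_const] at h3
    have hm2 : ν.real Set.univ = 2 * Real.pi := by
      rw [measureReal_def, hmass, ENNReal.toReal_ofReal (by positivity)]
    rw [hm2] at h3
    simp only [smul_eq_mul] at h3
    rw [← hJre] at h3
    have hcos : 0 < Real.cos lam := Real.cos_pos_of_mem_Ioo hlam
    have hrw : Real.cos lam + Real.cos lam / Real.pi * J.re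
        = Real.cos lam / Real.pi * (2 * Real.pi * (1/2) + J.re) := by
      field_simp
    rw [hrw]
    apply mul_pos (by positivity)
    linarith
end

section
/- Let λ ∈ (−π/2, π/2) and f ∈ F_λ. Then for every t ∈ ℝ the radial limit U(t) = lim_{r→1−} u_f(r e^{it}) exists (as a finite real number), the function β(t) = U(t) + t is non-decreasing in t, and β(t + 2π) = β(t) + 2π for all t ∈ ℝ. -/
open Set Metric Filter Topology

/-- The canonical harmonic branch `u_f = Im L_f − (tan λ)·Re L_f` of the
`λ`-argument of `f(z)/z`. -/
noncomputable def lambdaArgBranch (lam : ℝ) (L : ℂ → ℂ) (z : ℂ) : ℝ :=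
  (L z).im - Real.tan lam * (L z).re


open MeasureTheory intervalIntegral Complex



noncomputable section

lemma cauchy_circle_aux {F : ℂ → ℂ} {r : ℝ}
    (hF : DiffContOnCl ℂ F (ball (0:ℂ) r)) {w : ℂ} (hw : w ∈ ball (0:ℂ) r) :
    (∫ s in (0:ℝ)..(2*Real.pi),
        circleMap 0 r s / (circleMap 0 r s - w) * F (circleMap 0 r s))
      = 2 * Real.pi * F w := by
  have h := hF.circleIntegral_sub_inv_smul hw
  rw [circleIntegral] at h
  simp only [deriv_circleMap, smul_eq_mul] at h
  have h2 : (∫ s in (0:ℝ)..(2*Real.pi),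
      Complex.I * (circleMap 0 r s / (circleMap 0 r s - w) * F (circleMap 0 r s)))
      = Complex.I * (2*Real.pi * F w) := by
    have e1 : (∫ s in (0:ℝ)..(2*Real.pi),
        Complex.I * (circleMap 0 r s / (circleMap 0 r s - w) * F (circleMap 0 r s)))
        = ∫ θ in (0:ℝ)..(2*Real.pi),
          circleMap 0 r θ * Complex.I * ((circleMap 0 r θ - w)⁻¹ * F (circleMap 0 r θ)) := by
      apply intervalIntegral.integral_congr
      intro s _
      ring
    rw [e1, h]; ring
  rw [intervalIntegral.integral_const_mul] at h2
  exact mul_left_cancel₀ Complex.I_ne_zero h2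

lemma poisson_formula {g : ℂ → ℂ} (hg : DifferentiableOn ℂ g (ball (0:ℂ) 1))
    {r : ℝ} (hr0 : 0 < r) (hr1 : r < 1) {w : ℂ} (hw : ‖w‖ < r) :
    (∫ s in (0:ℝ)..(2*Real.pi),
        ((((circleMap 0 r s + w) / (circleMap 0 r s - w)).re : ℂ) * g (circleMap 0 r s)))
      = 2*Real.pi * g w := by
  have hcb : closedBall (0:ℂ) r ⊆ ball 0 1 := closedBall_subset_ball hr1
  have hgc : DiffContOnCl ℂ g (ball (0:ℂ) r) := by
    refine ⟨hg.mono (ball_subset_ball hr1.le), ?_⟩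
    rw [closure_ball (0:ℂ) hr0.ne']
    exact hg.continuousOn.mono hcb
  have hwball : w ∈ ball (0:ℂ) r := by rwa [mem_ball_zero_iff]
  have h0ball : (0:ℂ) ∈ ball (0:ℂ) r := mem_ball_self hr0
  have habs : ∀ s : ℝ, ‖circleMap 0 r s‖ = r := by
    intro s
    rw [norm_circleMap_zero, abs_of_pos hr0]
  have hzne : ∀ s : ℝ, circleMap 0 r s ≠ 0 := fun s h => by
    have := habs s; rw [h, norm_zero] at this; exact hr0.ne this
  have hzw : ∀ s : ℝ, circleMap 0 r s - w ≠ 0 := fun s => by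
    apply sub_ne_zero_of_ne
    intro h
    rw [← h] at hw; rw [habs s] at hw; exact lt_irrefl _ hw
  have hdne : ∀ z : ℂ, ‖z‖ ≤ r → ((r:ℂ)^2 - (starRingEnd ℂ) w * z) ≠ 0 := by
    intro z hz h
    have h1 : ‖(starRingEnd ℂ) w * z‖ < r^2 := by
      rw [norm_mul, RCLike.norm_conj]
      calc ‖w‖ * ‖z‖ ≤ ‖w‖ * r := by
            exact mul_le_mul_of_nonneg_left hz (norm_nonneg w)
        _ < r * r := by exact mul_lt_mul_of_pos_right hw hr0
        _ = r^2 := by ring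
    have h2 : ((r:ℂ)^2) = (starRingEnd ℂ) w * z := sub_eq_zero.mp h
    rw [← h2] at h1
    simp only [norm_pow, Complex.norm_real, Real.norm_eq_abs, abs_of_pos hr0] at h1
    exact lt_irrefl _ h1
  -- the auxiliary function G
  set G : ℂ → ℂ := fun z => (r:ℂ)^2 * g z / ((r:ℂ)^2 - (starRingEnd ℂ) w * z) with hG
  have hGdc : DiffContOnCl ℂ G (ball (0:ℂ) r) := by
    constructor
    · apply DifferentiableOn.div
      · exact (differentiableOn_const _).mul (hg.mono (ball_subset_ball hr1.le))
      · exact (differentiableOn_const _).sub ((differentiableOn_const _).mul differentiableOn_id)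
      · intro z hz
        exact hdne z (le_of_lt (mem_ball_zero_iff.mp hz))
    · rw [closure_ball (0:ℂ) hr0.ne']
      apply ContinuousOn.div
      · exact continuousOn_const.mul (hg.continuousOn.mono hcb)
      · exact continuousOn_const.sub (continuousOn_const.mul continuousOn_id)
      · intro z hz
        exact hdne z (mem_closedBall_zero_iff.mp hz)
  have A1 := cauchy_circle_aux hgc hwball
  have A2 := cauchy_circle_aux hgc h0ball
  have A3 := cauchy_circle_aux hGdc h0ball
  -- simplify A2 : mean value
  have A2' : (∫ s in (0:ℝ)..(2*Real.pi), g (circleMap 0 r s)) = 2*Real.pi * g 0 := by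
    rw [← A2]
    apply intervalIntegral.integral_congr
    intro s _
    simp [div_self (hzne s)]
  have A3' : (∫ s in (0:ℝ)..(2*Real.pi), G (circleMap 0 r s)) = 2*Real.pi * g 0 := by
    have hG0 : G 0 = g 0 := by
      simp only [hG, mul_zero, sub_zero]
      rw [mul_comm, mul_div_assoc, div_self, mul_one]
      exact_mod_cast pow_ne_zero 2 (Complex.ofReal_ne_zero.mpr hr0.ne')
    rw [← hG0, ← A3]
    apply intervalIntegral.integral_congr
    intro s _
    simp [div_self (hzne s)]
  -- pointwise kernel identity
  have key : ∀ s : ℝ,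
      ((((circleMap 0 r s + w) / (circleMap 0 r s - w)).re : ℂ) * g (circleMap 0 r s))
      = circleMap 0 r s / (circleMap 0 r s - w) * g (circleMap 0 r s)
        + G (circleMap 0 r s) - g (circleMap 0 r s) := by
    intro s
    have hzw' : circleMap 0 r s - w ≠ 0 := hzw s
    set z := circleMap 0 r s with hzdef
    have hzz : z * (starRingEnd ℂ) z = ((r:ℂ))^2 := by
      rw [Complex.mul_conj]
      rw [Complex.normSq_eq_norm_sq, habs s]
      push_cast
      ring
    have hd : ((r:ℂ)^2 - (starRingEnd ℂ) w * z) ≠ 0 := hdne z (habs s).le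
    have hzcw : (starRingEnd ℂ) z - (starRingEnd ℂ) w ≠ 0 := by
      intro h
      apply hzw s
      have := congrArg (starRingEnd ℂ) h
      simpa [map_sub] using this
    have h1 : (starRingEnd ℂ) ((z+w)/(z-w))
        = ((r:ℂ)^2 + (starRingEnd ℂ) w * z)/((r:ℂ)^2 - (starRingEnd ℂ) w * z) := by
      rw [map_div₀, map_add, map_sub, div_eq_div_iff hzcw hd]
      linear_combination (-2 * (starRingEnd ℂ) w) * hzz
    have h2 : (((z+w)/(z-w)).re : ℂ)
        = ((z+w)/(z-w) + ((r:ℂ)^2 + (starRingEnd ℂ) w * z)/((r:ℂ)^2 - (starRingEnd ℂ) w * z))/2 := by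
      rw [← h1, Complex.add_conj]
      push_cast
      ring
    have hGz : G z = (r:ℂ)^2 * g z / ((r:ℂ)^2 - (starRingEnd ℂ) w * z) := rfl
    have S : ((z+w)/(z-w) + ((r:ℂ)^2 + (starRingEnd ℂ) w * z)/((r:ℂ)^2 - (starRingEnd ℂ) w * z))/2
        = z/(z-w) + (r:ℂ)^2/((r:ℂ)^2 - (starRingEnd ℂ) w * z) - 1 := by
      rw [div_eq_iff two_ne_zero, show (r:ℂ)^2 + (starRingEnd ℂ) w * z = 2*(r:ℂ)^2 - ((r:ℂ)^2 - (starRingEnd ℂ) w * z) by ring,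
        sub_div (2*(r:ℂ)^2) ((r:ℂ)^2 - (starRingEnd ℂ) w * z) ((r:ℂ)^2 - (starRingEnd ℂ) w * z), div_self hd,
        show z + w = 2*z - (z-w) by ring, sub_div (2*z) (z-w) (z-w), div_self hzw']
      ring
    rw [h2, S, hGz]
    ring
  -- combine
  have hcont : Continuous fun s : ℝ => g (circleMap 0 r s) := by
    apply hg.continuousOn.comp_continuous (continuous_circleMap 0 r)
    intro s
    rw [mem_ball_zero_iff, habs s]
    exact hr1
  have hcont1 : Continuous fun s : ℝ =>
      circleMap 0 r s / (circleMap 0 r s - w) * g (circleMap 0 r s) := by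
    apply Continuous.mul _ hcont
    exact (continuous_circleMap 0 r).div ((continuous_circleMap 0 r).sub continuous_const) hzw
  have hcontG : Continuous fun s : ℝ => G (circleMap 0 r s) := by
    apply Continuous.div
    · exact continuous_const.mul hcont
    · exact continuous_const.sub (continuous_const.mul (continuous_circleMap 0 r))
    · intro s
      exact hdne _ (habs s).le
  calc (∫ s in (0:ℝ)..(2*Real.pi),
        ((((circleMap 0 r s + w) / (circleMap 0 r s - w)).re : ℂ) * g (circleMap 0 r s)))
      = ∫ s in (0:ℝ)..(2*Real.pi),
          (circleMap 0 r s / (circleMap 0 r s - w) * g (circleMap 0 r s)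
            + G (circleMap 0 r s) - g (circleMap 0 r s)) := by
        apply intervalIntegral.integral_congr
        intro s _
        exact key s
    _ = (∫ s in (0:ℝ)..(2*Real.pi),
          (circleMap 0 r s / (circleMap 0 r s - w) * g (circleMap 0 r s)
            + G (circleMap 0 r s)))
        - ∫ s in (0:ℝ)..(2*Real.pi), g (circleMap 0 r s) := by
        apply intervalIntegral.integral_sub
        · exact (hcont1.add hcontG).intervalIntegrable _ _
        · exact hcont.intervalIntegrable _ _
    _ = ((∫ s in (0:ℝ)..(2*Real.pi),
          circleMap 0 r s / (circleMap 0 r s - w) * g (circleMap 0 r s))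
        + ∫ s in (0:ℝ)..(2*Real.pi), G (circleMap 0 r s))
        - ∫ s in (0:ℝ)..(2*Real.pi), g (circleMap 0 r s) := by
        rw [intervalIntegral.integral_add (hcont1.intervalIntegrable _ _)
          (hcontG.intervalIntegrable _ _)]
    _ = 2*Real.pi * g w := by
        rw [A1, A2', A3']
        ring

/-- The Poisson-type kernel. -/
noncomputable def Ker (w : ℂ) (r s : ℝ) : ℝ :=
  ((circleMap 0 r s + w) / (circleMap 0 r s - w)).re

lemma circle_norm (r s : ℝ) (hr : 0 ≤ r) : ‖circleMap 0 r s‖ = r := by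
  rw [norm_circleMap_zero, _root_.abs_of_nonneg hr]

lemma ker_sub_ne {w : ℂ} {r : ℝ} (hr : 0 ≤ r) (hw : ‖w‖ < r) (s : ℝ) :
    circleMap 0 r s - w ≠ 0 := by
  apply sub_ne_zero_of_ne
  intro h
  rw [← h, circle_norm r s hr] at hw
  exact lt_irrefl _ hw

lemma ker_abs_le {w : ℂ} {r : ℝ} (hr : 0 ≤ r) (hw : ‖w‖ < r) (s : ℝ) :
    |Ker w r s| ≤ (r + ‖w‖) / (r - ‖w‖) := by
  have h1 : |Ker w r s| ≤ ‖(circleMap 0 r s + w) / (circleMap 0 r s - w)‖ := by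
    exact Complex.abs_re_le_norm _
  refine h1.trans ?_
  rw [norm_div]
  apply div_le_div₀ (by positivity)
  · calc ‖circleMap 0 r s + w‖ ≤ ‖circleMap 0 r s‖ + ‖w‖ := norm_add_le _ _
      _ = r + ‖w‖ := by rw [circle_norm r s hr]
  · linarith
  · calc r - ‖w‖ = ‖circleMap 0 r s‖ - ‖w‖ := by rw [circle_norm r s hr]
      _ ≤ ‖circleMap 0 r s - w‖ := by
          have := norm_sub_norm_le (circleMap 0 r s) w
          linarith

lemma ker_continuous {w : ℂ} {r : ℝ} (hr : 0 ≤ r) (hw : ‖w‖ < r) :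
    Continuous (Ker w r) := by
  apply Complex.continuous_re.comp
  exact ((continuous_circleMap 0 r).add continuous_const).div
    ((continuous_circleMap 0 r).sub continuous_const) (ker_sub_ne hr hw)

lemma ker_tendsto {w : ℂ} (hw : ‖w‖ < 1) {R : ℕ → ℝ} (hRlim : Tendsto R atTop (𝓝 1)) (s : ℝ) :
    Tendsto (fun k => Ker w (R k) s) atTop (𝓝 (Ker w 1 s)) := by
  have hcont : ContinuousAt (fun r : ℝ => Ker w r s) 1 := by
    have hden : circleMap 0 1 s - w ≠ 0 := ker_sub_ne zero_le_one hw s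
    simp only [Ker, circleMap, zero_add] at *
    apply Complex.continuous_re.continuousAt.comp
    apply ContinuousAt.div
    · fun_prop
    · fun_prop
    · simpa using hden
  exact hcont.tendsto.comp hRlim

lemma intervalIntegrable_of_bounded {g : ℝ → ℝ} {C : ℝ} {a b : ℝ}
    (hm : AEStronglyMeasurable g volume)
    (hbd : ∀ x ∈ uIoc a b, |g x| ≤ C) :
    IntervalIntegrable g volume a b := by
  rw [intervalIntegrable_iff]
  apply MeasureTheory.Measure.integrableOn_of_bounded
  · rw [uIoc]; exact measure_Ioc_lt_top.ne
  · exact hm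
  · exact MeasureTheory.ae_restrict_of_forall_mem measurableSet_uIoc
      (fun x hx => by simpa [Real.norm_eq_abs] using hbd x hx)

lemma kernel_limit {w : ℂ} (hw1 : ‖w‖ < 1) {R : ℕ → ℝ} (hR : ∀ k, R k ∈ Ioo (0:ℝ) 1)
    (hwR : ∀ k, (1 + ‖w‖)/2 ≤ R k)
    (hRlim : Tendsto R atTop (𝓝 1))
    {G : ℕ → ℝ → ℝ} {g : ℝ → ℝ} {M : ℝ}
    (hGc : ∀ k, Continuous (G k)) (hGbd : ∀ k s, |G k s| ≤ M)
    (hGlim : ∀ᵐ s : ℝ, Tendsto (fun k => G k s) atTop (𝓝 (g s)))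
    {A : ℝ} (hval : ∀ k, (∫ s in (0:ℝ)..2*Real.pi, Ker w (R k) s * G k s) = A) :
    (∫ s in (0:ℝ)..2*Real.pi, Ker w 1 s * g s) = A := by
  have hw0 : 0 ≤ ‖w‖ := norm_nonneg w
  have hwRk : ∀ k, ‖w‖ < R k := fun k => lt_of_lt_of_le (by linarith) (hwR k)
  have hkerbd : ∀ k s, |Ker w (R k) s| ≤ 4 / (1 - ‖w‖) := by
    intro k s
    refine (ker_abs_le (hR k).1.le (hwRk k) s).trans ?_
    have h1 : R k + ‖w‖ ≤ 2 := by have := (hR k).2; linarith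
    have h2 : (1 - ‖w‖)/2 ≤ R k - ‖w‖ := by have := hwR k; linarith
    have h3 : (0:ℝ) < (1 - ‖w‖)/2 := by linarith
    calc (R k + ‖w‖)/(R k - ‖w‖) ≤ 2 / ((1 - ‖w‖)/2) := by
          apply div_le_div₀ (by norm_num) h1 h3 h2
      _ = 4 / (1 - ‖w‖) := by rw [div_div_eq_mul_div]; ring_nf
  have hMnn : 0 ≤ M := le_trans (abs_nonneg _) (hGbd 0 0)
  have hDCT := intervalIntegral.tendsto_integral_filter_of_dominated_convergence
    (μ := volume) (a := (0:ℝ)) (b := 2*Real.pi)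
    (F := fun k s => Ker w (R k) s * G k s) (f := fun s => Ker w 1 s * g s)
    (bound := fun _ => 4 / (1 - ‖w‖) * M)
    (Eventually.of_forall fun k =>
      (((ker_continuous (hR k).1.le (hwRk k)).mul (hGc k)).aestronglyMeasurable))
    (Eventually.of_forall fun k => (Eventually.of_forall fun x _ => by
      rw [Real.norm_eq_abs, abs_mul]
      have h1w : (0:ℝ) < 1 - ‖w‖ := by linarith [norm_nonneg w]
      exact mul_le_mul (hkerbd k x) (hGbd k x) (abs_nonneg _)
        (div_nonneg (by norm_num) h1w.le)))
    intervalIntegrable_const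
    (by
      filter_upwards [hGlim] with s hs _
      exact (ker_tendsto hw1 hRlim s).mul hs)
  have heq : (fun k => ∫ s in (0:ℝ)..2*Real.pi, Ker w (R k) s * G k s) = fun _ => A :=
    funext hval
  rw [heq] at hDCT
  exact tendsto_nhds_unique hDCT tendsto_const_nhds

lemma sInf_add_const {S : Set ℝ} (hne : S.Nonempty) (hbd : BddBelow S) (a : ℝ) :
    sInf ((fun x => x + a) '' S) = sInf S + a := by
  have hne' : ((fun x => x + a) '' S).Nonempty := hne.image _
  have hbd' : BddBelow ((fun x => x + a) '' S) := by
    obtain ⟨m, hm⟩ := hbd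
    exact ⟨m + a, by rintro y ⟨x, hx, rfl⟩; have := hm hx; dsimp only; linarith⟩
  apply le_antisymm
  · have h1 : ∀ x ∈ S, sInf ((fun x => x + a) '' S) - a ≤ x := fun x hx => by
      have := csInf_le hbd' (mem_image_of_mem _ hx); linarith
    have h2 : sInf ((fun x => x + a) '' S) - a ≤ sInf S := le_csInf hne h1
    linarith
  · apply le_csInf hne'
    rintro y ⟨x, hx, rfl⟩
    have := csInf_le hbd hx; dsimp only; linarith

lemma comp_circle_continuous {H : ℂ → ℂ} (hH : DifferentiableOn ℂ H (ball (0:ℂ) 1))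
    {r : ℝ} (hr : r ∈ Ioo (0:ℝ) 1) : Continuous fun t : ℝ => H (circleMap 0 r t) := by
  apply hH.continuousOn.comp_continuous (continuous_circleMap 0 r)
  intro t
  rw [mem_ball_zero_iff, circle_norm r t hr.1.le]
  exact hr.2

lemma mean_zero {H : ℂ → ℂ} (hH : DifferentiableOn ℂ H (ball (0:ℂ) 1)) (hH0 : H 0 = 0)
    {r : ℝ} (hr : r ∈ Ioo (0:ℝ) 1) :
    (∫ t in (0:ℝ)..2*Real.pi, (H (circleMap 0 r t)).im) = 0 := by
  have h0 : ‖(0:ℂ)‖ < r := by simpa using hr.1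
  have hp := poisson_formula hH hr.1 hr.2 h0
  have hzne : ∀ s : ℝ, circleMap 0 r s ≠ 0 := fun s h => by
    have := circle_norm r s hr.1.le; rw [h, norm_zero] at this; exact hr.1.ne this
  have h1 : (∫ s in (0:ℝ)..2*Real.pi, H (circleMap 0 r s)) = 0 := by
    have he : (∫ s in (0:ℝ)..2*Real.pi, H (circleMap 0 r s))
        = ∫ s in (0:ℝ)..2*Real.pi,
          ((((circleMap 0 r s + 0) / (circleMap 0 r s - 0)).re : ℂ) * H (circleMap 0 r s)) := by
      apply intervalIntegral.integral_congr
      intro s _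
      dsimp only
      rw [add_zero, sub_zero, div_self (hzne s)]
      simp
    rw [he, hp, hH0, mul_zero]
  have hint : MeasureTheory.IntegrableOn (fun t => H (circleMap 0 r t))
      (Ioc 0 (2*Real.pi)) volume :=
    (comp_circle_continuous hH hr).integrableOn_Ioc
  have h2 : (∫ t in (0:ℝ)..2*Real.pi, (H (circleMap 0 r t)).im)
      = (∫ t in (0:ℝ)..2*Real.pi, H (circleMap 0 r t)).im := by
    rw [intervalIntegral.integral_of_le Real.two_pi_pos.le,
      intervalIntegral.integral_of_le Real.two_pi_pos.le]
    have := Complex.imCLM.integral_comp_comm hint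
    simpa using this
  rw [h2, h1]
  simp

lemma V_periodic {H : ℂ → ℂ} (r : ℝ) (t : ℝ) :
    (H (circleMap 0 r (t + 2*Real.pi))).im = (H (circleMap 0 r t)).im := by
  rw [periodic_circleMap 0 r t]

lemma V_bound {H : ℂ → ℂ} (hH : DifferentiableOn ℂ H (ball (0:ℂ) 1)) (hH0 : H 0 = 0)
    {c : ℝ} (hc : 0 < c)
    (hmono : ∀ r ∈ Ioo (0:ℝ) 1, Monotone fun t : ℝ => (H (circleMap 0 r t)).im + c * t)
    {r : ℝ} (hr : r ∈ Ioo (0:ℝ) 1) (t : ℝ) :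
    |(H (circleMap 0 r t)).im| ≤ 2*Real.pi*c := by
  set V : ℝ → ℝ := fun s => (H (circleMap 0 r s)).im with hV
  have hBm := hmono r hr
  have hper : ∀ s, V (s + 2*Real.pi) = V s := fun s => V_periodic r s
  have key1 : ∀ s ∈ Icc t (t + 2*Real.pi), V s ≤ V t + 2*Real.pi*c := by
    intro s hs
    have h1 : V s + c*s ≤ V (t + 2*Real.pi) + c*(t + 2*Real.pi) := hBm hs.2
    rw [hper t] at h1
    have h2 : c*t ≤ c*s := mul_le_mul_of_nonneg_left hs.1 hc.le
    linarith
  have key2 : ∀ s ∈ Icc t (t + 2*Real.pi), V t - 2*Real.pi*c ≤ V s := by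
    intro s hs
    have h1 : V t + c*t ≤ V s + c*s := hBm hs.1
    have h2 : c*s ≤ c*(t + 2*Real.pi) := mul_le_mul_of_nonneg_left hs.2 hc.le
    linarith
  have hVcont : Continuous V := Complex.continuous_im.comp (comp_circle_continuous hH hr)
  have hint : (∫ s in t..(t + 2*Real.pi), V s) = 0 := by
    have hp : Function.Periodic V (2*Real.pi) := fun s => hper s
    have := hp.intervalIntegral_add_eq t 0
    rw [this, zero_add]
    exact mean_zero hH hH0 hr
  have hle : t ≤ t + 2*Real.pi := by linarith [Real.two_pi_pos]
  have hup : (∫ s in t..(t + 2*Real.pi), V s) ≤ ∫ s in t..(t + 2*Real.pi), (V t + 2*Real.pi*c) := by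
    apply intervalIntegral.integral_mono_on hle (hVcont.intervalIntegrable _ _)
      (intervalIntegrable_const) key1
  have hdown : (∫ s in t..(t + 2*Real.pi), (V t - 2*Real.pi*c)) ≤ ∫ s in t..(t + 2*Real.pi), V s := by
    apply intervalIntegral.integral_mono_on hle (intervalIntegrable_const)
      (hVcont.intervalIntegrable _ _) key2
  rw [intervalIntegral.integral_const, hint] at hup hdown
  simp only [add_sub_cancel_left, smul_eq_mul] at hup hdown
  rw [abs_le]
  constructor
  · nlinarith [Real.two_pi_pos]
  · nlinarith [Real.two_pi_pos]

/-- countable dense shift-invariant parameter set -/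
noncomputable def tauQZ (p : ℚ × ℤ) : ℝ := (p.1 : ℝ) + 2*Real.pi*(p.2 : ℝ)

lemma boundary_function {H : ℂ → ℂ} (hH : DifferentiableOn ℂ H (ball (0:ℂ) 1)) (hH0 : H 0 = 0)
    {c : ℝ} (hc : 0 < c)
    (hmono : ∀ r ∈ Ioo (0:ℝ) 1, Monotone fun t : ℝ => (H (circleMap 0 r t)).im + c * t) :
    ∃ ψ ψm : ℝ → ℝ,
      Monotone ψ ∧ Monotone ψm ∧ (∀ t, ψm t ≤ ψ t) ∧ (∀ s t : ℝ, s < t → ψ s ≤ ψm t) ∧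
      (∀ t, ψ (t + 2*Real.pi) = ψ t + 2*Real.pi*c) ∧
      (∀ t ε, 0 < ε → ∃ δ, 0 < δ ∧ ∀ u, t < u → u ≤ t + δ → ψ u < ψ t + ε) ∧
      (∀ t ε, 0 < ε → ∃ δ, 0 < δ ∧ ∀ u, t - δ ≤ u → u < t → ψm t - ε < ψ u) ∧
      (∀ w : ℂ, ‖w‖ < 1 →
        (∫ s in (0:ℝ)..2*Real.pi, Ker w 1 s * (ψ s - c*s)) = 2*Real.pi*(H w).im ∧
        (∫ s in (0:ℝ)..2*Real.pi, Ker w 1 s * 1) = 2*Real.pi) := by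
  have h2π := Real.two_pi_pos
  -- radii sequence
  set rr : ℕ → ℝ := fun k => 1 - ((k:ℝ)+2)⁻¹ with hrr
  have hrrI : ∀ k, rr k ∈ Ioo (0:ℝ) 1 := by
    intro k
    have hk0 : (0:ℝ) ≤ (k:ℝ) := Nat.cast_nonneg k
    have hk2 : (0:ℝ) < (k:ℝ)+2 := by linarith
    have h1 : ((k:ℝ)+2)⁻¹ ≤ (2:ℝ)⁻¹ := by
      apply inv_anti₀ (by norm_num) (by linarith)
    have h2 : (0:ℝ) < ((k:ℝ)+2)⁻¹ := by positivity
    constructor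
    · simp only [hrr]; norm_num at h1 ⊢; linarith
    · simp only [hrr]; linarith
  have hrrlim : Tendsto rr atTop (𝓝 1) := by
    have h1 : Tendsto (fun k : ℕ => ((k:ℝ)+2)⁻¹) atTop (𝓝 0) := by
      apply Tendsto.inv_tendsto_atTop
      apply Filter.tendsto_atTop_add_const_right
      exact tendsto_natCast_atTop_atTop
    have h2 : Tendsto (fun k : ℕ => 1 - ((k:ℝ)+2)⁻¹) atTop (𝓝 (1 - 0)) :=
      tendsto_const_nhds.sub h1
    simpa using h2
  -- index set
  set x : ℕ → (ℚ × ℤ → ℝ) := fun k p => (H (circleMap 0 (rr k) (tauQZ p))).im + c * tauQZ p with hx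
  set K : Set (ℚ × ℤ → ℝ) :=
    univ.pi (fun p => Icc (c*tauQZ p - 2*Real.pi*c) (c*tauQZ p + 2*Real.pi*c)) with hK
  have hKc : IsCompact K := isCompact_univ_pi fun p => isCompact_Icc
  have hxK : ∀ k, x k ∈ K := by
    intro k
    rw [hK, Set.mem_univ_pi]
    intro p
    have hb := V_bound hH hH0 hc hmono (hrrI k) (tauQZ p)
    rw [abs_le] at hb
    constructor
    · simp only [hx]; linarith [hb.1]
    · simp only [hx]; linarith [hb.2]
  obtain ⟨y, hyK, φ, hφ, hcv⟩ := hKc.isSeqCompact hxK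
  have hpt : ∀ p, Tendsto (fun k => x (φ k) p) atTop (𝓝 (y p)) := fun p =>
    (tendsto_pi_nhds.mp hcv) p
  set R : ℕ → ℝ := fun k => rr (φ k) with hR
  have hRI : ∀ k, R k ∈ Ioo (0:ℝ) 1 := fun k => hrrI (φ k)
  have hRlim : Tendsto R atTop (𝓝 1) := hrrlim.comp hφ.tendsto_atTop
  set B : ℕ → ℝ → ℝ := fun k t => (H (circleMap 0 (R k) t)).im + c * t with hB
  have hBmono : ∀ k, Monotone (B k) := fun k => hmono (R k) (hRI k)
  have hBconv : ∀ p, Tendsto (fun k => B k (tauQZ p)) atTop (𝓝 (y p)) := hpt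
  have hBper : ∀ k t, B k (t + 2*Real.pi) = B k t + 2*Real.pi*c := by
    intro k t
    simp only [hB]
    rw [V_periodic]
    ring
  have hBbd : ∀ k t, |B k t - c*t| ≤ 2*Real.pi*c := by
    intro k t
    have := V_bound hH hH0 hc hmono (hRI k) t
    simpa [hB] using this
  -- y facts
  have hymono : ∀ p q, tauQZ p ≤ tauQZ q → y p ≤ y q := fun p q h =>
    le_of_tendsto_of_tendsto' (hBconv p) (hBconv q) (fun k => hBmono k h)
  have hyshift : ∀ (q : ℚ) (n : ℤ), y (q, n+1) = y (q, n) + 2*Real.pi*c := by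
    intro q n
    have hττ : tauQZ (q, n+1) = tauQZ (q, n) + 2*Real.pi := by
      simp only [tauQZ]
      push_cast
      ring
    have h2 : Tendsto (fun k => B k (tauQZ (q, n+1))) atTop (𝓝 (y (q,n) + 2*Real.pi*c)) := by
      have heq : (fun k => B k (tauQZ (q, n+1))) = fun k => B k (tauQZ (q,n)) + 2*Real.pi*c := by
        funext k
        rw [hττ, hBper]
      rw [heq]
      exact (hBconv (q,n)).add_const _
    exact tendsto_nhds_unique (hBconv (q, n+1)) h2
  have hybd : ∀ p, |y p - c*tauQZ p| ≤ 2*Real.pi*c := by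
    intro p
    have h1 : Tendsto (fun k => |B k (tauQZ p) - c*tauQZ p|) atTop (𝓝 (|y p - c*tauQZ p|)) :=
      ((hBconv p).sub_const _).abs
    exact le_of_tendsto h1 (Eventually.of_forall fun k => hBbd k (tauQZ p))
  -- the monotone boundary functions
  set ψ : ℝ → ℝ := fun t => sInf (y '' {p | t < tauQZ p}) with hψ
  set ψm : ℝ → ℝ := fun t => sSup (y '' {p | tauQZ p < t}) with hψm
  have hdense : ∀ a b : ℝ, a < b → ∃ p : ℚ × ℤ, a < tauQZ p ∧ tauQZ p < b := by
    intro a b hab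
    obtain ⟨q, hq1, hq2⟩ := exists_rat_btwn hab
    refine ⟨(q, 0), ?_, ?_⟩ <;> simp [tauQZ, hq1, hq2]
  have hSne : ∀ t, (y '' {p | t < tauQZ p}).Nonempty := by
    intro t
    obtain ⟨p, hp, _⟩ := hdense t (t+1) (by linarith)
    exact ⟨y p, mem_image_of_mem _ hp⟩
  have hSbd : ∀ t, BddBelow (y '' {p | t < tauQZ p}) := by
    intro t
    refine ⟨c*t - 2*Real.pi*c, ?_⟩
    rintro v ⟨p, hp, rfl⟩
    have h1 := (abs_le.mp (hybd p)).1
    have h2 : c*t ≤ c*tauQZ p := mul_le_mul_of_nonneg_left (le_of_lt hp) hc.le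
    linarith
  have hSmne : ∀ t, (y '' {p | tauQZ p < t}).Nonempty := by
    intro t
    obtain ⟨p, _, hp⟩ := hdense (t-1) t (by linarith)
    exact ⟨y p, mem_image_of_mem _ hp⟩
  have hSmbd : ∀ t, BddAbove (y '' {p | tauQZ p < t}) := by
    intro t
    refine ⟨c*t + 2*Real.pi*c, ?_⟩
    rintro v ⟨p, hp, rfl⟩
    have h1 := (abs_le.mp (hybd p)).2
    have h2 : c*tauQZ p ≤ c*t := mul_le_mul_of_nonneg_left (le_of_lt hp) hc.le
    linarith
  have hψmono : Monotone ψ := by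
    intro t1 t2 h
    apply csInf_le_csInf (hSbd t1) (hSne t2)
    exact Set.image_mono (fun p hp => lt_of_le_of_lt h hp)
  have hψmmono : Monotone ψm := by
    intro t1 t2 h
    apply csSup_le_csSup (hSmbd t2) (hSmne t1)
    exact Set.image_mono (fun p hp => lt_of_lt_of_le hp h)
  have hψmleψ : ∀ t, ψm t ≤ ψ t := by
    intro t
    apply csSup_le (hSmne t)
    rintro v ⟨p, hp, rfl⟩
    apply le_csInf (hSne t)
    rintro u ⟨q, hq, rfl⟩
    exact hymono p q (le_of_lt (lt_trans hp hq))
  have hψleψm : ∀ s t : ℝ, s < t → ψ s ≤ ψm t := by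
    intro s t hst
    obtain ⟨p, hp1, hp2⟩ := hdense s t hst
    calc ψ s ≤ y p := csInf_le (hSbd s) (mem_image_of_mem _ hp1)
      _ ≤ ψm t := le_csSup (hSmbd t) (mem_image_of_mem _ hp2)
  have hψshift : ∀ t, ψ (t + 2*Real.pi) = ψ t + 2*Real.pi*c := by
    intro t
    have himg : y '' {p | t + 2*Real.pi < tauQZ p}
        = (fun v => v + 2*Real.pi*c) '' (y '' {p | t < tauQZ p}) := by
      ext v
      constructor
      · rintro ⟨⟨q, n⟩, hp, rfl⟩
        refine ⟨y (q, n - 1), ⟨(q, n - 1), ?_, rfl⟩, ?_⟩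
        · have hττ : tauQZ (q, n - 1) = tauQZ (q, n) - 2*Real.pi := by
            simp only [tauQZ]; push_cast; ring
          simp only [Set.mem_setOf_eq] at hp ⊢
          rw [hττ]
          linarith
        · have := hyshift q (n - 1)
          rw [sub_add_cancel] at this
          dsimp only
          linarith
      · rintro ⟨v, ⟨⟨q, n⟩, hp, rfl⟩, rfl⟩
        exact ⟨(q, n + 1), by
          have hττ : tauQZ (q, n + 1) = tauQZ (q, n) + 2*Real.pi := by
            simp only [tauQZ]; push_cast; ring
          simp only [Set.mem_setOf_eq] at hp ⊢
          rw [hττ]; linarith, by dsimp only; exact hyshift q n⟩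
    simp only [hψ]
    rw [himg, sInf_add_const (hSne t) (hSbd t)]
  -- right continuity statements
  have hrc : ∀ t ε, 0 < ε → ∃ δ, 0 < δ ∧ ∀ u, t < u → u ≤ t + δ → ψ u < ψ t + ε := by
    intro t ε hε
    have h1 : ψ t < ψ t + ε := by linarith
    obtain ⟨v, ⟨p, hp, rfl⟩, hv⟩ := exists_lt_of_csInf_lt (hSne t) h1
    refine ⟨(tauQZ p - t)/2, by simp only [Set.mem_setOf_eq] at hp; linarith, ?_⟩
    intro u hu1 hu2
    have hup : u < tauQZ p := by simp only [Set.mem_setOf_eq] at hp; linarith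
    calc ψ u ≤ y p := csInf_le (hSbd u) (mem_image_of_mem _ hup)
      _ < ψ t + ε := hv
  have hlc : ∀ t ε, 0 < ε → ∃ δ, 0 < δ ∧ ∀ u, t - δ ≤ u → u < t → ψm t - ε < ψ u := by
    intro t ε hε
    have h1 : ψm t - ε < ψm t := by linarith
    obtain ⟨v, ⟨p, hp, rfl⟩, hv⟩ := exists_lt_of_lt_csSup (hSmne t) h1
    refine ⟨(t - tauQZ p)/2, by simp only [Set.mem_setOf_eq] at hp; linarith, ?_⟩
    intro u hu1 hu2
    have hup : tauQZ p < u := by simp only [Set.mem_setOf_eq] at hp; linarith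
    have h2 : y p ≤ ψ u := by
      apply le_csInf (hSne u)
      rintro v ⟨p', hp', rfl⟩
      exact hymono p p' (le_of_lt (lt_trans hup hp'))
    exact lt_of_lt_of_le hv h2
  -- convergence at good points
  have hgood : ∀ t, ψm t = ψ t → Tendsto (fun k => B k t) atTop (𝓝 (ψ t)) := by
    intro t ht
    rw [tendsto_order]
    constructor
    · intro b hb
      rw [← ht] at hb
      obtain ⟨v, ⟨p, hp, rfl⟩, hv⟩ := exists_lt_of_lt_csSup (hSmne t) hb
      filter_upwards [(hBconv p).eventually_const_lt hv] with k hk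
      exact lt_of_lt_of_le hk (hBmono k (le_of_lt hp))
    · intro b hb
      obtain ⟨v, ⟨p, hp, rfl⟩, hv⟩ := exists_lt_of_csInf_lt (hSne t) hb
      filter_upwards [(hBconv p).eventually_lt_const hv] with k hk
      exact lt_of_le_of_lt (hBmono k (le_of_lt hp)) hk
  -- bad set countable
  have hbadcnt : {t : ℝ | ψm t ≠ ψ t}.Countable := by
    have hsub : {t : ℝ | ψm t ≠ ψ t} ⊆ {t | ¬ContinuousAt ψ t} := by
      intro t ht hcont
      have hlt : ψm t < ψ t := lt_of_le_of_ne (hψmleψ t) ht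
      have htd : Tendsto ψ (𝓝[<] t) (𝓝 (ψ t)) :=
        (hcont.tendsto).mono_left nhdsWithin_le_nhds
      have hle : ψ t ≤ ψm t := by
        apply le_of_tendsto htd
        filter_upwards [self_mem_nhdsWithin] with s hs
        exact hψleψm s t hs
      exact absurd hle (not_le.mpr hlt)
    exact Set.Countable.mono hsub (hψmono.countable_not_continuousAt)
  have hae : ∀ᵐ s : ℝ, Tendsto (fun k => (H (circleMap 0 (R k) s)).im) atTop (𝓝 (ψ s - c*s)) := by
    have h1 : ∀ᵐ t : ℝ, ψm t = ψ t := by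
      rw [MeasureTheory.ae_iff]
      exact hbadcnt.measure_zero _
    filter_upwards [h1] with s hs
    have h2 := (hgood s hs).sub_const (c*s)
    simpa only [hB, add_sub_cancel_right] using h2
  -- master identities
  refine ⟨ψ, ψm, hψmono, hψmmono, hψmleψ, hψleψm, hψshift, hrc, hlc, ?_⟩
  intro w hw
  have hw0 := norm_nonneg w
  have hev : ∀ᶠ k in atTop, (1 + ‖w‖)/2 < R k :=
    hRlim.eventually (eventually_gt_nhds (by linarith))
  obtain ⟨N, hN⟩ := eventually_atTop.mp hev
  set R' : ℕ → ℝ := fun k => R (k+N) with hR'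
  have hR'I : ∀ k, R' k ∈ Ioo (0:ℝ) 1 := fun k => hRI _
  have hR'sep : ∀ k, (1+‖w‖)/2 ≤ R' k := fun k => (hN (k+N) (Nat.le_add_left N k)).le
  have hR'lim : Tendsto R' atTop (𝓝 1) := hRlim.comp (tendsto_add_atTop_nat N)
  have hwRk : ∀ k, ‖w‖ < R' k := fun k => lt_of_lt_of_le (by linarith) (hR'sep k)
  constructor
  · -- first identity
    apply kernel_limit hw hR'I hR'sep hR'lim
      (G := fun k s => (H (circleMap 0 (R' k) s)).im) (M := 2*Real.pi*c)
      (fun k => Complex.continuous_im.comp (comp_circle_continuous hH (hR'I k)))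
      (fun k s => V_bound hH hH0 hc hmono (hR'I k) s)
      (by filter_upwards [hae] with s hs
          exact hs.comp (tendsto_add_atTop_nat N))
    intro k
    show (∫ s in (0:ℝ)..2*Real.pi, Ker w (R' k) s * (H (circleMap 0 (R' k) s)).im)
        = 2*Real.pi*(H w).im
    have hp := poisson_formula hH (hR'I k).1 (hR'I k).2 (hwRk k)
    have hkc : Continuous fun s => ((Ker w (R' k) s : ℝ) : ℂ) :=
      Complex.continuous_ofReal.comp (ker_continuous (hR'I k).1.le (hwRk k))
    have hint : MeasureTheory.IntegrableOn
        (fun s => ((Ker w (R' k) s : ℝ) : ℂ) * H (circleMap 0 (R' k) s))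
        (Ioc 0 (2*Real.pi)) volume :=
      (hkc.mul (comp_circle_continuous hH (hR'I k))).integrableOn_Ioc
    have e1 : (∫ s in (0:ℝ)..2*Real.pi, ((Ker w (R' k) s : ℝ) : ℂ) * H (circleMap 0 (R' k) s))
        = 2*Real.pi * H w := by
      rw [← hp]
      apply intervalIntegral.integral_congr
      intro s _
      rfl
    have e2 : (∫ s in (0:ℝ)..2*Real.pi, ((Ker w (R' k) s : ℝ) : ℂ) * H (circleMap 0 (R' k) s)).im
        = ∫ s in (0:ℝ)..2*Real.pi, Ker w (R' k) s * (H (circleMap 0 (R' k) s)).im := by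
      rw [intervalIntegral.integral_of_le h2π.le, intervalIntegral.integral_of_le h2π.le]
      have h3 := _root_.integral_im (𝕜 := ℂ) hint
      simp only [RCLike.im_to_complex] at h3
      rw [← h3]
      apply MeasureTheory.integral_congr_ae
      apply Eventually.of_forall
      intro s
      simp [Complex.mul_im]
    calc (∫ s in (0:ℝ)..2*Real.pi, Ker w (R' k) s * (H (circleMap 0 (R' k) s)).im)
        = (∫ s in (0:ℝ)..2*Real.pi, ((Ker w (R' k) s : ℝ) : ℂ) * H (circleMap 0 (R' k) s)).im :=
          e2.symm
      _ = (2*(Real.pi:ℂ) * H w).im := by rw [e1]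
      _ = 2*Real.pi*(H w).im := by
          rw [show (2*(Real.pi:ℂ)) = ((2*Real.pi:ℝ):ℂ) by push_cast; ring, Complex.im_ofReal_mul]
  · -- second identity
    apply kernel_limit hw hR'I hR'sep hR'lim
      (G := fun _ _ => (1:ℝ)) (g := fun _ => (1:ℝ)) (M := 1)
      (fun k => continuous_const)
      (fun k s => by norm_num)
      (Eventually.of_forall fun s => tendsto_const_nhds)
    intro k
    show (∫ s in (0:ℝ)..2*Real.pi, Ker w (R' k) s * 1) = 2*Real.pi
    have hp := poisson_formula (g := fun _ => (1:ℂ)) (differentiableOn_const 1)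
      (hR'I k).1 (hR'I k).2 (hwRk k)
    have hkc : Continuous fun s => ((Ker w (R' k) s : ℝ) : ℂ) :=
      Complex.continuous_ofReal.comp (ker_continuous (hR'I k).1.le (hwRk k))
    have hint : MeasureTheory.IntegrableOn
        (fun s => ((Ker w (R' k) s : ℝ) : ℂ)) (Ioc 0 (2*Real.pi)) volume :=
      hkc.integrableOn_Ioc
    have e1 : (∫ s in (0:ℝ)..2*Real.pi, ((Ker w (R' k) s : ℝ) : ℂ)) = 2*Real.pi := by
      have := hp
      simp only [mul_one] at this
      rw [← this]
      apply intervalIntegral.integral_congr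
      intro s _
      rfl
    have e2 : (∫ s in (0:ℝ)..2*Real.pi, ((Ker w (R' k) s : ℝ) : ℂ)).re
        = ∫ s in (0:ℝ)..2*Real.pi, Ker w (R' k) s * 1 := by
      rw [intervalIntegral.integral_of_le h2π.le, intervalIntegral.integral_of_le h2π.le]
      have h3 := _root_.integral_re (𝕜 := ℂ) hint
      simp only [RCLike.re_to_complex] at h3
      rw [← h3]
      apply MeasureTheory.integral_congr_ae
      apply Eventually.of_forall
      intro s
      simp
    rw [← e2, e1]
    norm_num

lemma ker_shift (t σ ρ : ℝ) :
    Ker ((ρ:ℂ) * Complex.exp ((t:ℂ)*Complex.I)) 1 (t+σ) = Ker ((ρ:ℝ):ℂ) 1 σ := by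
  have he : circleMap 0 1 (t+σ) = Complex.exp ((t:ℂ)*Complex.I) * circleMap 0 1 σ := by
    simp only [circleMap, zero_add, Complex.ofReal_one, one_mul]
    rw [← Complex.exp_add]
    push_cast
    ring_nf
  have hexpne : Complex.exp ((t:ℂ)*Complex.I) ≠ 0 := Complex.exp_ne_zero _
  simp only [Ker, he]
  congr 1
  rw [show Complex.exp ((t:ℂ)*Complex.I) * circleMap 0 1 σ + (ρ:ℂ) * Complex.exp ((t:ℂ)*Complex.I)
      = Complex.exp ((t:ℂ)*Complex.I) * (circleMap 0 1 σ + (ρ:ℂ)) by ring,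
    show Complex.exp ((t:ℂ)*Complex.I) * circleMap 0 1 σ - (ρ:ℂ) * Complex.exp ((t:ℂ)*Complex.I)
      = Complex.exp ((t:ℂ)*Complex.I) * (circleMap 0 1 σ - (ρ:ℂ)) by ring]
  rw [mul_div_mul_left _ _ hexpne]

lemma ker_even (ρ σ : ℝ) : Ker ((ρ:ℝ):ℂ) 1 (-σ) = Ker ((ρ:ℝ):ℂ) 1 σ := by
  have he : circleMap 0 1 (-σ) = (starRingEnd ℂ) (circleMap 0 1 σ) := by
    simp only [circleMap, zero_add, Complex.ofReal_one, one_mul]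
    rw [← Complex.exp_conj]
    congr 1
    simp [Complex.conj_I]
  simp only [Ker, he]
  rw [show (starRingEnd ℂ) (circleMap 0 1 σ) + (ρ:ℂ)
      = (starRingEnd ℂ) (circleMap 0 1 σ + (ρ:ℂ)) by rw [map_add, Complex.conj_ofReal],
    show (starRingEnd ℂ) (circleMap 0 1 σ) - (ρ:ℂ)
      = (starRingEnd ℂ) (circleMap 0 1 σ - (ρ:ℂ)) by rw [map_sub, Complex.conj_ofReal],
    ← map_div₀, Complex.conj_re]

lemma ker_val (ρ σ : ℝ) :
    Ker ((ρ:ℝ):ℂ) 1 σ = (1 - ρ^2)/(1 - 2*ρ*Real.cos σ + ρ^2) := by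
  have hsc := Real.sin_sq_add_cos_sq σ
  have h1 : (circleMap 0 1 σ).re = Real.cos σ := by
    simp [circleMap, Complex.exp_ofReal_mul_I_re]
  have h2 : (circleMap 0 1 σ).im = Real.sin σ := by
    simp [circleMap, Complex.exp_ofReal_mul_I_im]
  rw [Ker, Complex.div_re]
  simp only [Complex.add_re, Complex.sub_re, Complex.add_im, Complex.sub_im,
    Complex.ofReal_re, Complex.ofReal_im, Complex.normSq_apply, h1, h2]
  rw [show Real.sin σ + 0 = Real.sin σ by ring, show Real.sin σ - 0 = Real.sin σ by ring,
    ← add_div]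
  congr 1 <;> nlinarith [hsc]

lemma ker_denom_pos {ρ : ℝ} (hρ0 : 0 ≤ ρ) (hρ1 : ρ < 1) (σ : ℝ) :
    0 < 1 - 2*ρ*Real.cos σ + ρ^2 := by
  nlinarith [Real.cos_le_one σ, Real.neg_one_le_cos σ]

lemma ker_nonneg {ρ : ℝ} (hρ0 : 0 ≤ ρ) (hρ1 : ρ < 1) (σ : ℝ) :
    0 ≤ Ker ((ρ:ℝ):ℂ) 1 σ := by
  rw [ker_val]
  apply div_nonneg (by nlinarith) (ker_denom_pos hρ0 hρ1 σ).le

lemma ker_tail_le {ρ : ℝ} (hρ0 : 0 ≤ ρ) (hρ1 : ρ < 1) {δ σ : ℝ} (hδ0 : 0 ≤ δ)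
    (hσ1 : δ ≤ σ) (hσ2 : σ ≤ Real.pi) :
    Ker ((ρ:ℝ):ℂ) 1 σ ≤ (1 - ρ^2)/(1 - 2*ρ*Real.cos δ + ρ^2) := by
  rw [ker_val]
  have hcos : Real.cos σ ≤ Real.cos δ := by
    apply Real.cos_le_cos_of_nonneg_of_le_pi hδ0 hσ2 hσ1
  apply div_le_div_of_nonneg_left (by nlinarith) (ker_denom_pos hρ0 hρ1 δ)
  nlinarith

lemma II_cont_mul_bdd {q g : ℝ → ℝ} {a b Cg : ℝ} (hq : Continuous q) (hgm : Measurable g)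
    (hb : ∀ x ∈ Set.uIoc a b, |g x| ≤ Cg) :
    IntervalIntegrable (fun x => q x * g x) volume a b := by
  obtain ⟨Cq, hCq⟩ := (isCompact_uIcc (a := a) (b := b)).exists_bound_of_continuousOn
    hq.continuousOn
  have hCq0 : 0 ≤ Cq := le_trans (norm_nonneg _) (hCq a left_mem_uIcc)
  apply intervalIntegrable_of_bounded (C := Cq * Cg)
  · exact (hq.measurable.mul hgm).aestronglyMeasurable
  · intro x hx
    have h1 : |q x| ≤ Cq := by
      have := hCq x (uIoc_subset_uIcc hx)
      rwa [Real.norm_eq_abs] at this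
    rw [abs_mul]
    exact mul_le_mul h1 (hb x hx) (abs_nonneg _) hCq0

lemma mono_uIoc_bound {g : ℝ → ℝ} (hg : Monotone g) (a b : ℝ) :
    ∀ x ∈ Set.uIoc a b, |g x| ≤ max |g (a ⊓ b)| |g (a ⊔ b)| := by
  intro x hx
  exact abs_le_max_abs_abs (hg hx.1.le) (hg hx.2)

lemma anti_uIoc_bound {g : ℝ → ℝ} (hg : Antitone g) (a b : ℝ) :
    ∀ x ∈ Set.uIoc a b, |g x| ≤ max |g (a ⊔ b)| |g (a ⊓ b)| := by
  intro x hx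
  exact abs_le_max_abs_abs (hg hx.2) (hg hx.1.le)

lemma II_cont_mul_mono {q g : ℝ → ℝ} {a b : ℝ} (hq : Continuous q) (hg : Monotone g) :
    IntervalIntegrable (fun x => q x * g x) volume a b :=
  II_cont_mul_bdd hq hg.measurable (mono_uIoc_bound hg a b)

lemma II_cont_mul_anti {q g : ℝ → ℝ} {a b : ℝ} (hq : Continuous q) (hg : Antitone g) :
    IntervalIntegrable (fun x => q x * g x) volume a b :=
  II_cont_mul_bdd hq hg.measurable (anti_uIoc_bound hg a b)

theorem core_radial {H : ℂ → ℂ} (hH : DifferentiableOn ℂ H (ball (0:ℂ) 1)) (hH0 : H 0 = 0)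
    {c : ℝ} (hc : 0 < c)
    (hmono : ∀ r ∈ Ioo (0:ℝ) 1, Monotone fun t : ℝ => (H (circleMap 0 r t)).im + c * t) :
    ∃ W : ℝ → ℝ, Monotone W ∧ ∀ t : ℝ,
      Tendsto (fun ρ : ℝ => (H (circleMap 0 ρ t)).im) (𝓝[<] 1) (𝓝 (W t - c * t)) := by
  obtain ⟨ψ, ψm, hψmono, hψmmono, hψmleψ, hψleψm, hψshift, hrc, hlc, hmaster⟩ :=
    boundary_function hH hH0 hc hmono
  have hπ := Real.pi_pos
  refine ⟨fun t => (ψm t + ψ t)/2, ?_, ?_⟩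
  · intro t1 t2 h
    have h1 := hψmmono h
    have h2 := hψmono h
    dsimp only
    linarith
  intro t
  have hψt_mono : Monotone fun σ : ℝ => ψ (t + σ) := fun a b hab => hψmono (by linarith)
  have hψt_anti : Antitone fun σ : ℝ => ψ (t - σ) := fun a b hab => hψmono (by linarith)
  have hρnorm : ∀ ρ : ℝ, ρ ∈ Ioo (0:ℝ) 1 → ‖((ρ:ℝ):ℂ)‖ < 1 := by
    intro ρ hρ
    rw [Complex.norm_real, Real.norm_eq_abs, _root_.abs_of_pos hρ.1]
    exact hρ.2
  have hKcont : ∀ ρ : ℝ, ρ ∈ Ioo (0:ℝ) 1 → Continuous (Ker ((ρ:ℝ):ℂ) 1) := fun ρ hρ =>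
    ker_continuous zero_le_one (hρnorm ρ hρ)
  -- transformed master identities
  have hident : ∀ ρ : ℝ, ρ ∈ Ioo (0:ℝ) 1 →
      (∫ σ in (-Real.pi)..Real.pi, Ker ((ρ:ℝ):ℂ) 1 σ * (ψ (t+σ) - c*(t+σ)))
        = 2*Real.pi*(H (circleMap 0 ρ t)).im ∧
      (∫ σ in (-Real.pi)..Real.pi, Ker ((ρ:ℝ):ℂ) 1 σ) = 2*Real.pi := by
    intro ρ hρ
    set w : ℂ := (ρ:ℂ) * Complex.exp ((t:ℂ)*Complex.I) with hwdef
    have hw : ‖w‖ < 1 := by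
      rw [hwdef, norm_mul, Complex.norm_exp_ofReal_mul_I,
        mul_one]
      exact hρnorm ρ hρ
    obtain ⟨hm1, hm2⟩ := hmaster w hw
    have hKerper : ∀ s : ℝ, Ker w 1 (s + 2*Real.pi) = Ker w 1 s := by
      intro s
      simp only [Ker]
      rw [periodic_circleMap 0 1 s]
    constructor
    · have hper : Function.Periodic (fun s => Ker w 1 s * (ψ s - c*s)) (2*Real.pi) := by
        intro s
        dsimp only
        rw [hKerper s, hψshift s]
        ring
      have h1 := hper.intervalIntegral_add_eq (t - Real.pi) 0
      rw [zero_add] at h1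
      have h2 : (∫ s in (t - Real.pi)..(t - Real.pi) + 2*Real.pi, Ker w 1 s * (ψ s - c*s))
          = ∫ s in (t - Real.pi)..(t + Real.pi), Ker w 1 s * (ψ s - c*s) := by
        congr 1
        ring
      have h3 : (∫ σ in (-Real.pi)..Real.pi, Ker w 1 (t + σ) * (ψ (t+σ) - c*(t+σ)))
          = ∫ s in (t + -Real.pi)..(t + Real.pi), Ker w 1 s * (ψ s - c*s) :=
        intervalIntegral.integral_comp_add_left (fun s => Ker w 1 s * (ψ s - c*s)) t
      have h4 : (∫ σ in (-Real.pi)..Real.pi, Ker ((ρ:ℝ):ℂ) 1 σ * (ψ (t+σ) - c*(t+σ)))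
          = ∫ σ in (-Real.pi)..Real.pi, Ker w 1 (t + σ) * (ψ (t+σ) - c*(t+σ)) := by
        apply intervalIntegral.integral_congr
        intro σ _
        dsimp only
        rw [ker_shift t σ ρ]
      rw [h4, h3, show t + -Real.pi = t - Real.pi by ring, ← h2, h1, hm1]
      have hcw : circleMap 0 ρ t = w := by simp [circleMap, hwdef]
      rw [hcw]
    · have hper : Function.Periodic (fun s => Ker w 1 s * 1) (2*Real.pi) := by
        intro s
        dsimp only
        rw [hKerper s]
      have h1 := hper.intervalIntegral_add_eq (t - Real.pi) 0
      rw [zero_add] at h1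
      have h2 : (∫ s in (t - Real.pi)..(t - Real.pi) + 2*Real.pi, Ker w 1 s * 1)
          = ∫ s in (t - Real.pi)..(t + Real.pi), Ker w 1 s * 1 := by
        congr 1
        ring
      have h3 : (∫ σ in (-Real.pi)..Real.pi, Ker w 1 (t + σ) * 1)
          = ∫ s in (t + -Real.pi)..(t + Real.pi), Ker w 1 s * 1 :=
        intervalIntegral.integral_comp_add_left (fun s => Ker w 1 s * 1) t
      have h4 : (∫ σ in (-Real.pi)..Real.pi, Ker ((ρ:ℝ):ℂ) 1 σ)
          = ∫ σ in (-Real.pi)..Real.pi, Ker w 1 (t + σ) * 1 := by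
        apply intervalIntegral.integral_congr
        intro σ _
        dsimp only
        rw [ker_shift t σ ρ, mul_one]
      rw [h4, h3, show t + -Real.pi = t - Real.pi by ring, ← h2, h1, hm2]
  -- even/odd reductions
  have hodd : ∀ ρ : ℝ, ρ ∈ Ioo (0:ℝ) 1 →
      (∫ σ in (-Real.pi)..Real.pi, Ker ((ρ:ℝ):ℂ) 1 σ * σ) = 0 := by
    intro ρ hρ
    have h1 : (∫ σ in (-Real.pi)..Real.pi, Ker ((ρ:ℝ):ℂ) 1 (-σ) * (-σ))
        = ∫ σ in (-Real.pi)..Real.pi, Ker ((ρ:ℝ):ℂ) 1 σ * σ := by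
      have := intervalIntegral.integral_comp_neg (a := -Real.pi) (b := Real.pi)
        (fun σ => Ker ((ρ:ℝ):ℂ) 1 σ * σ)
      rw [neg_neg] at this
      exact this
    have h2 : (∫ σ in (-Real.pi)..Real.pi, Ker ((ρ:ℝ):ℂ) 1 (-σ) * (-σ))
        = -(∫ σ in (-Real.pi)..Real.pi, Ker ((ρ:ℝ):ℂ) 1 σ * σ) := by
      rw [← intervalIntegral.integral_neg]
      apply intervalIntegral.integral_congr
      intro σ _
      dsimp only
      rw [ker_even]
      ring
    linarith [h1.symm.trans h2]
  have heven : ∀ ρ : ℝ, ρ ∈ Ioo (0:ℝ) 1 →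
      (∫ σ in (0:ℝ)..Real.pi, Ker ((ρ:ℝ):ℂ) 1 σ) = Real.pi := by
    intro ρ hρ
    have hKi : ∀ a b : ℝ, IntervalIntegrable (Ker ((ρ:ℝ):ℂ) 1) volume a b :=
      fun a b => (hKcont ρ hρ).intervalIntegrable a b
    have h1 : (∫ σ in (-Real.pi)..(0:ℝ), Ker ((ρ:ℝ):ℂ) 1 σ)
        = ∫ σ in (0:ℝ)..Real.pi, Ker ((ρ:ℝ):ℂ) 1 σ := by
      have h2 := intervalIntegral.integral_comp_neg (a := (0:ℝ)) (b := Real.pi)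
        (fun σ => Ker ((ρ:ℝ):ℂ) 1 σ)
      rw [neg_zero] at h2
      rw [← h2]
      apply intervalIntegral.integral_congr
      intro σ _
      exact (ker_even ρ σ)
    have h3 := intervalIntegral.integral_add_adjacent_intervals
      (hKi (-Real.pi) 0) (hKi 0 Real.pi)
    have h4 := (hident ρ hρ).2
    rw [← h3, h1] at h4
    linarith
  have hevensplit : ∀ ρ : ℝ, ρ ∈ Ioo (0:ℝ) 1 →
      (∫ σ in (-Real.pi)..Real.pi, Ker ((ρ:ℝ):ℂ) 1 σ * ψ (t+σ))
        = ∫ σ in (0:ℝ)..Real.pi, Ker ((ρ:ℝ):ℂ) 1 σ * (ψ (t+σ) + ψ (t-σ)) := by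
    intro ρ hρ
    have hI1 : IntervalIntegrable (fun σ => Ker ((ρ:ℝ):ℂ) 1 σ * ψ (t+σ)) volume (-Real.pi) 0 :=
      II_cont_mul_mono (hKcont ρ hρ) hψt_mono
    have hI2 : IntervalIntegrable (fun σ => Ker ((ρ:ℝ):ℂ) 1 σ * ψ (t+σ)) volume 0 Real.pi :=
      II_cont_mul_mono (hKcont ρ hρ) hψt_mono
    have hI3 : IntervalIntegrable (fun σ => Ker ((ρ:ℝ):ℂ) 1 σ * ψ (t-σ)) volume 0 Real.pi :=
      II_cont_mul_anti (hKcont ρ hρ) hψt_anti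
    have h1 : (∫ σ in (-Real.pi)..(0:ℝ), Ker ((ρ:ℝ):ℂ) 1 σ * ψ (t+σ))
        = ∫ σ in (0:ℝ)..Real.pi, Ker ((ρ:ℝ):ℂ) 1 σ * ψ (t-σ) := by
      have h2 := intervalIntegral.integral_comp_neg (a := (0:ℝ)) (b := Real.pi)
        (fun σ => Ker ((ρ:ℝ):ℂ) 1 σ * ψ (t+σ))
      rw [neg_zero] at h2
      rw [← h2]
      apply intervalIntegral.integral_congr
      intro σ _
      dsimp only
      rw [ker_even, show t + -σ = t - σ by ring]
    have h3 := intervalIntegral.integral_add_adjacent_intervals hI1 hI2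
    rw [← h3, h1, ← intervalIntegral.integral_add hI3 hI2]
    apply intervalIntegral.integral_congr
    intro σ _
    dsimp only
    ring
  -- the function X and the pointwise identity
  set X : ℝ → ℝ := fun ρ => ∫ σ in (0:ℝ)..Real.pi, Ker ((ρ:ℝ):ℂ) 1 σ * (ψ (t+σ) + ψ (t-σ))
    with hX
  have hkey : ∀ ρ : ℝ, ρ ∈ Ioo (0:ℝ) 1 →
      (H (circleMap 0 ρ t)).im = X ρ / (2*Real.pi) - c*t := by
    intro ρ hρ
    have hI1 : IntervalIntegrable (fun σ => Ker ((ρ:ℝ):ℂ) 1 σ * ψ (t+σ))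
        volume (-Real.pi) Real.pi := II_cont_mul_mono (hKcont ρ hρ) hψt_mono
    have hI2 : IntervalIntegrable (fun σ => Ker ((ρ:ℝ):ℂ) 1 σ * (c*t + c*σ))
        volume (-Real.pi) Real.pi := by
      apply II_cont_mul_mono (hKcont ρ hρ)
      intro a b hab
      dsimp only
      nlinarith [hc.le]
    have h1 : (∫ σ in (-Real.pi)..Real.pi, Ker ((ρ:ℝ):ℂ) 1 σ * (ψ (t+σ) - c*(t+σ)))
        = (∫ σ in (-Real.pi)..Real.pi, Ker ((ρ:ℝ):ℂ) 1 σ * ψ (t+σ))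
          - ∫ σ in (-Real.pi)..Real.pi, Ker ((ρ:ℝ):ℂ) 1 σ * (c*t + c*σ) := by
      rw [← intervalIntegral.integral_sub hI1 hI2]
      apply intervalIntegral.integral_congr
      intro σ _
      dsimp only
      ring
    have h2 : (∫ σ in (-Real.pi)..Real.pi, Ker ((ρ:ℝ):ℂ) 1 σ * (c*t + c*σ))
        = c*t*(2*Real.pi) := by
      have hIa : IntervalIntegrable (fun σ => Ker ((ρ:ℝ):ℂ) 1 σ * (c*t))
          volume (-Real.pi) Real.pi := by
        apply II_cont_mul_mono (hKcont ρ hρ)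
        exact monotone_const
      have hIb : IntervalIntegrable (fun σ => Ker ((ρ:ℝ):ℂ) 1 σ * σ * c)
          volume (-Real.pi) Real.pi := by
        apply IntervalIntegrable.mul_const
        exact II_cont_mul_mono (hKcont ρ hρ) monotone_id
      have h3 : (∫ σ in (-Real.pi)..Real.pi, Ker ((ρ:ℝ):ℂ) 1 σ * (c*t + c*σ))
          = (∫ σ in (-Real.pi)..Real.pi, Ker ((ρ:ℝ):ℂ) 1 σ * (c*t))
            + ∫ σ in (-Real.pi)..Real.pi, Ker ((ρ:ℝ):ℂ) 1 σ * σ * c := by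
        rw [← intervalIntegral.integral_add hIa hIb]
        apply intervalIntegral.integral_congr
        intro σ _
        dsimp only
        ring
      rw [h3, intervalIntegral.integral_mul_const, intervalIntegral.integral_mul_const,
        (hident ρ hρ).2, hodd ρ hρ]
      ring
    have h4 := (hident ρ hρ).1
    rw [h1, h2, hevensplit ρ hρ] at h4
    have h2π : (2*Real.pi) ≠ 0 := by positivity
    field_simp [hX]
    linarith
  -- limit of X
  have hXlim : Tendsto X (𝓝[<] 1) (𝓝 (Real.pi * (ψ (t) + ψm (t)))) := by
    rw [Metric.tendsto_nhds]
    intro ε hε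
    set A := ψ t + ψm t with hA
    set M0 := ψ (t+Real.pi) - ψ (t-Real.pi) with hM0
    have hM00 : 0 ≤ M0 := by
      have := hψmono (show t-Real.pi ≤ t+Real.pi by linarith)
      simp only [hM0]
      linarith
    have hε1 : 0 < ε/(4*Real.pi) := by positivity
    obtain ⟨δ1, hδ1, hδ1p⟩ := hrc t _ hε1
    obtain ⟨δ2, hδ2, hδ2p⟩ := hlc t _ hε1
    set δ := min (min δ1 δ2) (Real.pi/2) with hδdef
    have hδpos : 0 < δ := lt_min (lt_min hδ1 hδ2) (by positivity)
    have hδle : δ ≤ Real.pi := le_trans (min_le_right _ _) (by linarith)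
    have hδleδ1 : δ ≤ δ1 := le_trans (min_le_left _ _) (min_le_left _ _)
    have hδleδ2 : δ ≤ δ2 := le_trans (min_le_left _ _) (min_le_right _ _)
    have hcosδ : Real.cos δ < 1 := by
      have h := Real.cos_lt_cos_of_nonneg_of_le_pi (le_refl (0:ℝ)) hδle hδpos
      rwa [Real.cos_zero] at h
    have hgsmall : ∀ σ : ℝ, 0 < σ → σ ≤ δ → |ψ (t+σ) + ψ (t-σ) - A| ≤ ε/(4*Real.pi) := by
      intro σ h1 h2
      have ha1 : ψ t ≤ ψ (t+σ) := hψmono (by linarith)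
      have ha2 : ψ (t+σ) < ψ t + ε/(4*Real.pi) := hδ1p (t+σ) (by linarith) (by linarith)
      have hb1 : ψ (t-σ) ≤ ψm t := hψleψm _ _ (by linarith)
      have hb2 : ψm t - ε/(4*Real.pi) < ψ (t-σ) := hδ2p (t-σ) (by linarith) (by linarith)
      rw [hA, abs_le]
      constructor <;> linarith
    have hgM0 : ∀ σ : ℝ, 0 < σ → σ ≤ Real.pi → |ψ (t+σ) + ψ (t-σ) - A| ≤ M0 := by
      intro σ h1 h2
      have ha1 : ψ t ≤ ψ (t+σ) := hψmono (by linarith)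
      have ha2 : ψ (t+σ) ≤ ψ (t+Real.pi) := hψmono (by linarith)
      have hb1 : ψ (t-Real.pi) ≤ ψ (t-σ) := hψmono (by linarith)
      have hb2 : ψ (t-σ) ≤ ψm t := hψleψm _ _ (by linarith)
      have hd : ψm t ≤ ψ t := hψmleψ t
      rw [hA, hM0, abs_le]
      constructor <;> linarith
    have hden1 : (1:ℝ) - 2*1*Real.cos δ + 1^2 ≠ 0 := by nlinarith
    have hStend : Tendsto (fun ρ : ℝ => (1-ρ^2)/(1-2*ρ*Real.cos δ+ρ^2)) (𝓝[<] 1) (𝓝 0) := by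
      have hc1 : ContinuousAt (fun ρ : ℝ => (1-ρ^2)/(1-2*ρ*Real.cos δ+ρ^2)) 1 := by
        apply ContinuousAt.div
        · fun_prop
        · fun_prop
        · exact hden1
      have h2 := hc1.tendsto.mono_left (nhdsWithin_le_nhds (s := Iio (1:ℝ)))
      have h3 : (1-(1:ℝ)^2)/(1-2*1*Real.cos δ+1^2) = 0 := by norm_num
      rwa [h3] at h2
    have hεS : 0 < ε/(4*Real.pi*(M0+1)) := by positivity
    have hev1 := hStend.eventually_lt_const hεS
    filter_upwards [hev1,
      Ioo_mem_nhdsLT_of_mem (show (1:ℝ) ∈ Ioc (0:ℝ) 1 by constructor <;> norm_num)]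
      with ρ hSρ hρ
    have hKc := hKcont ρ hρ
    have hKnn : ∀ σ, 0 ≤ Ker ((ρ:ℝ):ℂ) 1 σ := ker_nonneg hρ.1.le hρ.2
    have hSnn : 0 ≤ (1-ρ^2)/(1-2*ρ*Real.cos δ+ρ^2) := by
      apply div_nonneg
      · nlinarith [hρ.1, hρ.2]
      · exact (ker_denom_pos hρ.1.le hρ.2 δ).le
    have hIg : ∀ a b : ℝ, IntervalIntegrable
        (fun σ => Ker ((ρ:ℝ):ℂ) 1 σ * (ψ (t+σ) + ψ (t-σ) - A)) volume a b := by
      intro a b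
      have i1 := II_cont_mul_mono (a:=a) (b:=b) hKc hψt_mono
      have i2 := II_cont_mul_anti (a:=a) (b:=b) hKc hψt_anti
      have i3 := II_cont_mul_mono (a:=a) (b:=b) hKc
        (monotone_const (c := A))
      have h4 := (i1.add i2).sub i3
      have heqf : (fun σ => Ker ((ρ:ℝ):ℂ) 1 σ * (ψ (t+σ) + ψ (t-σ) - A))
          = fun σ => (Ker ((ρ:ℝ):ℂ) 1 σ * ψ (t+σ) + Ker ((ρ:ℝ):ℂ) 1 σ * ψ (t-σ))
            - Ker ((ρ:ℝ):ℂ) 1 σ * A := funext fun σ => by ring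
      rw [heqf]
      exact h4
    have hIK : ∀ a b : ℝ, IntervalIntegrable (Ker ((ρ:ℝ):ℂ) 1) volume a b :=
      fun a b => hKc.intervalIntegrable a b
    have hXd : X ρ - Real.pi*A = ∫ σ in (0:ℝ)..Real.pi,
        Ker ((ρ:ℝ):ℂ) 1 σ * (ψ (t+σ) + ψ (t-σ) - A) := by
      have i1 := II_cont_mul_mono (a:=(0:ℝ)) (b:=Real.pi) hKc hψt_mono
      have i2 := II_cont_mul_anti (a:=(0:ℝ)) (b:=Real.pi) hKc hψt_anti
      have i12 : IntervalIntegrable (fun σ => Ker ((ρ:ℝ):ℂ) 1 σ * (ψ (t+σ) + ψ (t-σ)))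
          volume 0 Real.pi := by
        have := i1.add i2
        have heqf : (fun σ => Ker ((ρ:ℝ):ℂ) 1 σ * (ψ (t+σ) + ψ (t-σ)))
            = fun σ => Ker ((ρ:ℝ):ℂ) 1 σ * ψ (t+σ) + Ker ((ρ:ℝ):ℂ) 1 σ * ψ (t-σ) :=
          funext fun σ => by ring
        rw [heqf]
        exact this
      have i3 : IntervalIntegrable (fun σ => Ker ((ρ:ℝ):ℂ) 1 σ * A) volume 0 Real.pi :=
        II_cont_mul_mono hKc (monotone_const (c := A))
      have h1 : (∫ σ in (0:ℝ)..Real.pi, Ker ((ρ:ℝ):ℂ) 1 σ * (ψ (t+σ) + ψ (t-σ) - A))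
          = (∫ σ in (0:ℝ)..Real.pi, Ker ((ρ:ℝ):ℂ) 1 σ * (ψ (t+σ) + ψ (t-σ)))
            - ∫ σ in (0:ℝ)..Real.pi, Ker ((ρ:ℝ):ℂ) 1 σ * A := by
        rw [← intervalIntegral.integral_sub i12 i3]
        apply intervalIntegral.integral_congr
        intro σ _
        dsimp only
        ring
      rw [h1, intervalIntegral.integral_mul_const, heven ρ hρ, hX]
    have hsplit := intervalIntegral.integral_add_adjacent_intervals (hIg 0 δ) (hIg δ Real.pi)
    have hb1 : |∫ σ in (0:ℝ)..δ, Ker ((ρ:ℝ):ℂ) 1 σ * (ψ (t+σ) + ψ (t-σ) - A)|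
        ≤ ε/(4*Real.pi) * Real.pi := by
      have e1 := intervalIntegral.abs_integral_le_integral_abs (μ := volume)
        (f := fun σ => Ker ((ρ:ℝ):ℂ) 1 σ * (ψ (t+σ) + ψ (t-σ) - A)) hδpos.le
      have e2 : (∫ σ in (0:ℝ)..δ, |Ker ((ρ:ℝ):ℂ) 1 σ * (ψ (t+σ) + ψ (t-σ) - A)|)
          ≤ ∫ σ in (0:ℝ)..δ, Ker ((ρ:ℝ):ℂ) 1 σ * (ε/(4*Real.pi)) := by
        apply intervalIntegral.integral_mono_ae_restrict hδpos.le (hIg 0 δ).abs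
          (II_cont_mul_mono hKc (monotone_const (c := ε/(4*Real.pi))))
        have hzero : ∀ᵐ x : ℝ ∂volume, x ≠ 0 := by
          rw [MeasureTheory.ae_iff]
          have hset : {x : ℝ | ¬ x ≠ 0} = {0} := by ext u; simp
          rw [hset]
          exact measure_singleton 0
        filter_upwards [MeasureTheory.ae_restrict_of_ae hzero,
          MeasureTheory.ae_restrict_mem measurableSet_Icc] with u hu0 hum
        have hu1 : 0 < u := lt_of_le_of_ne hum.1 (Ne.symm hu0)
        rw [abs_mul, _root_.abs_of_nonneg (hKnn u)]
        exact mul_le_mul_of_nonneg_left (hgsmall u hu1 hum.2) (hKnn u)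
      have e3 : (∫ σ in (0:ℝ)..δ, Ker ((ρ:ℝ):ℂ) 1 σ * (ε/(4*Real.pi)))
          = (∫ σ in (0:ℝ)..δ, Ker ((ρ:ℝ):ℂ) 1 σ) * (ε/(4*Real.pi)) :=
        intervalIntegral.integral_mul_const _ _
      have e4 : (∫ σ in (0:ℝ)..δ, Ker ((ρ:ℝ):ℂ) 1 σ) ≤ Real.pi := by
        have h5 := intervalIntegral.integral_add_adjacent_intervals (hIK 0 δ) (hIK δ Real.pi)
        have h6 : 0 ≤ ∫ σ in δ..Real.pi, Ker ((ρ:ℝ):ℂ) 1 σ :=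
          intervalIntegral.integral_nonneg hδle (fun u _ => hKnn u)
        rw [heven ρ hρ] at h5
        linarith
      have e6 : 0 ≤ (∫ σ in (0:ℝ)..δ, Ker ((ρ:ℝ):ℂ) 1 σ) :=
        intervalIntegral.integral_nonneg hδpos.le (fun u _ => hKnn u)
      calc |∫ σ in (0:ℝ)..δ, Ker ((ρ:ℝ):ℂ) 1 σ * (ψ (t+σ) + ψ (t-σ) - A)|
          ≤ ∫ σ in (0:ℝ)..δ, |Ker ((ρ:ℝ):ℂ) 1 σ * (ψ (t+σ) + ψ (t-σ) - A)| := e1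
        _ ≤ (∫ σ in (0:ℝ)..δ, Ker ((ρ:ℝ):ℂ) 1 σ) * (ε/(4*Real.pi)) := by rw [← e3]; exact e2
        _ ≤ Real.pi * (ε/(4*Real.pi)) := mul_le_mul_of_nonneg_right e4 hε1.le
        _ = ε/(4*Real.pi) * Real.pi := by ring
    have hb2 : |∫ σ in δ..Real.pi, Ker ((ρ:ℝ):ℂ) 1 σ * (ψ (t+σ) + ψ (t-σ) - A)|
        ≤ ε/(4*Real.pi*(M0+1)) * M0 * Real.pi := by
      have e1 := intervalIntegral.abs_integral_le_integral_abs (μ := volume)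
        (f := fun σ => Ker ((ρ:ℝ):ℂ) 1 σ * (ψ (t+σ) + ψ (t-σ) - A)) hδle
      have e2 : (∫ σ in δ..Real.pi, |Ker ((ρ:ℝ):ℂ) 1 σ * (ψ (t+σ) + ψ (t-σ) - A)|)
          ≤ ∫ σ in δ..Real.pi, ((1-ρ^2)/(1-2*ρ*Real.cos δ+ρ^2)) * M0 := by
        apply intervalIntegral.integral_mono_on hδle (hIg δ Real.pi).abs
          intervalIntegrable_const
        intro u hu
        rw [abs_mul, _root_.abs_of_nonneg (hKnn u)]
        apply mul_le_mul (ker_tail_le hρ.1.le hρ.2 hδpos.le hu.1 hu.2)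
          (hgM0 u (lt_of_lt_of_le hδpos hu.1) hu.2) (abs_nonneg _) hSnn
      have e3 : (∫ σ in δ..Real.pi, ((1-ρ^2)/(1-2*ρ*Real.cos δ+ρ^2)) * M0)
          = (Real.pi - δ) * (((1-ρ^2)/(1-2*ρ*Real.cos δ+ρ^2)) * M0) := by
        rw [intervalIntegral.integral_const, smul_eq_mul]
      have e4 : (Real.pi - δ) * (((1-ρ^2)/(1-2*ρ*Real.cos δ+ρ^2)) * M0)
          ≤ Real.pi * (ε/(4*Real.pi*(M0+1)) * M0) := by
        apply mul_le_mul (by linarith) ?_ (by positivity) hπ.le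
        apply mul_le_mul_of_nonneg_right hSρ.le hM00
      calc |∫ σ in δ..Real.pi, Ker ((ρ:ℝ):ℂ) 1 σ * (ψ (t+σ) + ψ (t-σ) - A)|
          ≤ ∫ σ in δ..Real.pi, |Ker ((ρ:ℝ):ℂ) 1 σ * (ψ (t+σ) + ψ (t-σ) - A)| := e1
        _ ≤ (∫ σ in δ..Real.pi, ((1-ρ^2)/(1-2*ρ*Real.cos δ+ρ^2)) * M0) := e2
        _ = (Real.pi - δ) * (((1-ρ^2)/(1-2*ρ*Real.cos δ+ρ^2)) * M0) := e3
        _ ≤ Real.pi * (ε/(4*Real.pi*(M0+1)) * M0) := e4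
        _ = ε/(4*Real.pi*(M0+1)) * M0 * Real.pi := by ring
    rw [Real.dist_eq]
    have htot : |X ρ - Real.pi * A| ≤ ε/(4*Real.pi) * Real.pi
        + ε/(4*Real.pi*(M0+1)) * M0 * Real.pi := by
      rw [hXd, ← hsplit]
      calc |(∫ σ in (0:ℝ)..δ, Ker ((ρ:ℝ):ℂ) 1 σ * (ψ (t+σ) + ψ (t-σ) - A))
            + ∫ σ in δ..Real.pi, Ker ((ρ:ℝ):ℂ) 1 σ * (ψ (t+σ) + ψ (t-σ) - A)|
          ≤ |∫ σ in (0:ℝ)..δ, Ker ((ρ:ℝ):ℂ) 1 σ * (ψ (t+σ) + ψ (t-σ) - A)|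
            + |∫ σ in δ..Real.pi, Ker ((ρ:ℝ):ℂ) 1 σ * (ψ (t+σ) + ψ (t-σ) - A)| := abs_add_le _ _
        _ ≤ _ := add_le_add hb1 hb2
    have hc1 : ε/(4*Real.pi) * Real.pi = ε/4 := by
      field_simp
    have hc2 : ε/(4*Real.pi*(M0+1)) * M0 * Real.pi < ε/4 := by
      rw [div_mul_eq_mul_div, div_mul_eq_mul_div, div_lt_iff₀ (by positivity)]
      nlinarith [hM00, hπ, hε]
    have : |X ρ - Real.pi * A| < ε := by
      rw [hc1] at htot
      calc |X ρ - Real.pi * A| ≤ ε/4 + ε/(4*Real.pi*(M0+1)) * M0 * Real.pi := htot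
        _ < ε/4 + ε/4 := by linarith
        _ ≤ ε := by linarith
    simpa [hA] using this
  -- conclusion
  have hfinal : Tendsto (fun ρ => X ρ / (2*Real.pi) - c*t) (𝓝[<] 1)
      (𝓝 ((ψm t + ψ t)/2 - c*t)) := by
    have h1 := (hXlim.div_const (2*Real.pi)).sub_const (c*t)
    have h2 : Real.pi * (ψ t + ψm t) / (2*Real.pi) = (ψm t + ψ t)/2 := by
      field_simp
      ring
    rwa [h2] at h1
  apply hfinal.congr'
  filter_upwards [Ioo_mem_nhdsLT_of_mem (show (1:ℝ) ∈ Ioc (0:ℝ) 1 by constructor <;> norm_num)]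
    with ρ hρ
  exact (hkey ρ hρ).symm

lemma logbranch_hasDeriv {f L : ℂ → ℂ} (hfd : DifferentiableOn ℂ f (ball (0:ℂ) 1))
    (hfne : ∀ z ∈ ball (0:ℂ) 1, z ≠ 0 → f z ≠ 0)
    (hLd : DifferentiableOn ℂ L (ball (0:ℂ) 1))
    (hexp : ∀ z ∈ ball (0:ℂ) 1, z ≠ 0 → Complex.exp (L z) = f z / z)
    {z : ℂ} (hz : z ∈ ball (0:ℂ) 1) (hz0 : z ≠ 0) :
    HasDerivAt L (deriv f z / f z - 1/z) z := by
  have hop : IsOpen (ball (0:ℂ) 1 \ {0}) := isOpen_ball.sdiff isClosed_singleton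
  have hmem : z ∈ ball (0:ℂ) 1 \ {0} := ⟨hz, hz0⟩
  have hfz : f z ≠ 0 := hfne z hz hz0
  have hLz : HasDerivAt L (deriv L z) z :=
    (hLd.differentiableAt (isOpen_ball.mem_nhds hz)).hasDerivAt
  have hfz' : HasDerivAt f (deriv f z) z :=
    (hfd.differentiableAt (isOpen_ball.mem_nhds hz)).hasDerivAt
  have h1 : HasDerivAt (fun w => Complex.exp (L w)) (Complex.exp (L z) * deriv L z) z :=
    hLz.cexp
  have h2 : HasDerivAt (fun w => f w / w) ((deriv f z * z - f z * 1)/(z^2)) z :=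
    hfz'.div (hasDerivAt_id z) hz0
  have heq : (fun w => Complex.exp (L w)) =ᶠ[𝓝 z] fun w => f w / w := by
    filter_upwards [hop.mem_nhds hmem] with u hu
    exact hexp u hu.1 hu.2
  have h1' : HasDerivAt (fun w => f w / w) (Complex.exp (L z) * deriv L z) z :=
    h1.congr_of_eventuallyEq heq.symm
  have hde : Complex.exp (L z) * deriv L z = (deriv f z * z - f z * 1)/(z^2) :=
    h1'.unique h2
  rw [hexp z hz hz0] at hde
  have hval : deriv L z = deriv f z / f z - 1/z := by
    have hz2 : z^2 ≠ 0 := pow_ne_zero 2 hz0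
    field_simp at hde ⊢
    have hde2 : f z * deriv L z * z = deriv f z * z - f z :=
      mul_right_cancel₀ hz0 (by linear_combination z * hde)
    linear_combination hde2
  rw [← hval]
  exact hLz

lemma spiral_mono {lam : ℝ}
    {f L : ℂ → ℂ} (hf : f ∈ SpiralClass lam) (hL : IsLogBranch f L)
    {r : ℝ} (hr : r ∈ Ioo (0:ℝ) 1) :
    Monotone fun t : ℝ => ((Complex.exp (-(lam:ℂ)*Complex.I) * L (circleMap 0 r t)).im
      + Real.cos lam * t) := by
  obtain ⟨hfd, hf0, hf1, hfne, hfpos⟩ := hf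
  obtain ⟨hLd, hL0, hexp⟩ := hL
  have hEre : (Complex.exp (-(lam:ℂ)*Complex.I)).re = Real.cos lam := by
    rw [show -(lam:ℂ)*Complex.I = ((-lam : ℝ):ℂ)*Complex.I by push_cast; ring,
      Complex.exp_ofReal_mul_I_re, Real.cos_neg]
  have hzb : ∀ t : ℝ, circleMap 0 r t ∈ ball (0:ℂ) 1 := by
    intro t
    rw [mem_ball_zero_iff, circle_norm r t hr.1.le]
    exact hr.2
  have hz0 : ∀ t : ℝ, circleMap 0 r t ≠ 0 := by
    intro t h
    have := circle_norm r t hr.1.le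
    rw [h, norm_zero] at this
    exact hr.1.ne this
  have hderiv : ∀ t : ℝ, HasDerivAt
      (fun s : ℝ => (Complex.exp (-(lam:ℂ)*Complex.I) * L (circleMap 0 r s)).im
        + Real.cos lam * s)
      ((Complex.exp (-(lam:ℂ)*Complex.I) * circleMap 0 r t * deriv f (circleMap 0 r t)
        / f (circleMap 0 r t)).re) t := by
    intro t
    have hfz := hfne _ (hzb t) (hz0 t)
    have hL' : HasDerivAt L (deriv f (circleMap 0 r t) / f (circleMap 0 r t)
        - 1/(circleMap 0 r t)) (circleMap 0 r t) :=
      logbranch_hasDeriv hfd hfne hLd hexp (hzb t) (hz0 t)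
    have hEL : HasDerivAt (fun w => Complex.exp (-(lam:ℂ)*Complex.I) * L w)
        (Complex.exp (-(lam:ℂ)*Complex.I) * (deriv f (circleMap 0 r t) / f (circleMap 0 r t)
          - 1/(circleMap 0 r t))) (circleMap 0 r t) := hL'.const_mul _
    have hcirc := hasDerivAt_circleMap 0 r t
    have hcomp : HasDerivAt (fun s : ℝ => Complex.exp (-(lam:ℂ)*Complex.I) * L (circleMap 0 r s))
        (Complex.exp (-(lam:ℂ)*Complex.I) * (deriv f (circleMap 0 r t) / f (circleMap 0 r t)
          - 1/(circleMap 0 r t)) * (circleMap 0 r t * Complex.I)) t := by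
      have h5 := hEL.scomp t hcirc
      have h6 : (fun s : ℝ => Complex.exp (-(lam:ℂ)*Complex.I) * L (circleMap 0 r s))
          = (fun w => Complex.exp (-(lam:ℂ)*Complex.I) * L w) ∘ circleMap 0 r := rfl
      rw [h6]
      convert h5 using 1
      · rfl
      · rw [smul_eq_mul]
        ring
    have him := (Complex.imCLM.hasFDerivAt.comp_hasDerivAt t hcomp)
    have hlin : HasDerivAt (fun s : ℝ => Real.cos lam * s) (Real.cos lam) t := by
      simpa using (hasDerivAt_id t).const_mul (Real.cos lam)
    have hsum := him.add hlin
    have hvalu : (Complex.exp (-(lam:ℂ)*Complex.I) * (deriv f (circleMap 0 r t)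
          / f (circleMap 0 r t) - 1/(circleMap 0 r t)) * (circleMap 0 r t * Complex.I)).im
          + Real.cos lam
        = (Complex.exp (-(lam:ℂ)*Complex.I) * circleMap 0 r t * deriv f (circleMap 0 r t)
          / f (circleMap 0 r t)).re := by
      have h1 : Complex.exp (-(lam:ℂ)*Complex.I) * (deriv f (circleMap 0 r t)
            / f (circleMap 0 r t) - 1/(circleMap 0 r t)) * (circleMap 0 r t * Complex.I)
          = (Complex.exp (-(lam:ℂ)*Complex.I) * circleMap 0 r t * deriv f (circleMap 0 r t)
            / f (circleMap 0 r t) - Complex.exp (-(lam:ℂ)*Complex.I)) * Complex.I := by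
        field_simp [hz0 t]
      rw [h1, Complex.mul_I_im, Complex.sub_re, hEre]
      ring
    exact hvalu ▸ hsum
  apply monotone_of_deriv_nonneg
  · intro t
    exact (hderiv t).differentiableAt
  · intro t
    rw [(hderiv t).deriv]
    exact (hfpos (circleMap 0 r t) (hzb t) (hz0 t)).le

/-- for `f ∈ F_λ`, the radial limits `U(t) = lim_{r→1−} u_f(r e^{it})`
exist for all `t`, the function `β(t) = U(t) + t` is non-decreasing, and
`β(t+2π) = β(t) + 2π`. -/
theorem radial_limit_lambda_argument (lam : ℝ)
    (hlam : lam ∈ Set.Ioo (-(Real.pi / 2)) (Real.pi / 2))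
    (f : ℂ → ℂ) (hf : f ∈ SpiralClass lam) (L : ℂ → ℂ) (hL : IsLogBranch f L) :
    ∃ U : ℝ → ℝ,
      (∀ t : ℝ, Tendsto
          (fun r : ℝ => lambdaArgBranch lam L ((r : ℂ) * Complex.exp ((t : ℂ) * Complex.I)))
          (𝓝[<] 1) (𝓝 (U t))) ∧
      Monotone (fun t : ℝ => U t + t) ∧
      ∀ t : ℝ, U (t + 2 * Real.pi) + (t + 2 * Real.pi) = (U t + t) + 2 * Real.pi := by
  have hcpos : 0 < Real.cos lam := Real.cos_pos_of_mem_Ioo ⟨hlam.1, hlam.2⟩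
  set H : ℂ → ℂ := fun z => Complex.exp (-(lam:ℂ)*Complex.I) * L z with hHdef
  have hHd : DifferentiableOn ℂ H (ball (0:ℂ) 1) :=
    (differentiableOn_const _).mul hL.1
  have hH0 : H 0 = 0 := by
    simp [hHdef, hL.2.1]
  have hmono : ∀ r ∈ Ioo (0:ℝ) 1, Monotone fun t : ℝ => (H (circleMap 0 r t)).im
      + Real.cos lam * t := fun r hr => spiral_mono hf hL hr
  obtain ⟨W, hW, hconv⟩ := core_radial hHd hH0 hcpos hmono
  have hEre : (Complex.exp (-(lam:ℂ)*Complex.I)).re = Real.cos lam := by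
    rw [show -(lam:ℂ)*Complex.I = ((-lam : ℝ):ℂ)*Complex.I by push_cast; ring,
      Complex.exp_ofReal_mul_I_re, Real.cos_neg]
  have hEim : (Complex.exp (-(lam:ℂ)*Complex.I)).im = -Real.sin lam := by
    rw [show -(lam:ℂ)*Complex.I = ((-lam : ℝ):ℂ)*Complex.I by push_cast; ring,
      Complex.exp_ofReal_mul_I_im, Real.sin_neg]
  have hbranch : ∀ z : ℂ, lambdaArgBranch lam L z = (H z).im / Real.cos lam := by
    intro z
    have h1 : (H z).im = Real.cos lam * (L z).im - Real.sin lam * (L z).re := by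
      rw [hHdef]
      dsimp only
      rw [Complex.mul_im, hEre, hEim]
      ring
    rw [lambdaArgBranch, h1, Real.tan_eq_sin_div_cos]
    field_simp
  set U : ℝ → ℝ := fun t => (W t - Real.cos lam * t)/Real.cos lam with hUdef
  have hU : ∀ t : ℝ, Tendsto
      (fun r : ℝ => lambdaArgBranch lam L ((r : ℂ) * Complex.exp ((t : ℂ) * Complex.I)))
      (𝓝[<] 1) (𝓝 (U t)) := by
    intro t
    have h2 := (hconv t).div_const (Real.cos lam)
    have h3 : (fun ρ : ℝ => lambdaArgBranch lam L ((ρ:ℂ) * Complex.exp ((t:ℂ)*Complex.I)))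
        = fun ρ : ℝ => (H (circleMap 0 ρ t)).im / Real.cos lam := by
      funext ρ
      rw [hbranch]
      congr 2
      simp [circleMap]
    rw [h3, hUdef]
    exact h2
  refine ⟨U, hU, ?_, ?_⟩
  · have h4 : (fun t : ℝ => U t + t) = fun t => W t / Real.cos lam := by
      funext t
      rw [hUdef]
      field_simp
      ring
    rw [h4]
    intro a b hab
    exact (div_le_div_iff_of_pos_right hcpos).mpr (hW hab)
  · intro s
    have hfun : (fun ρ : ℝ => lambdaArgBranch lam L
          ((ρ:ℂ) * Complex.exp (((s + 2*Real.pi :ℝ):ℂ)*Complex.I)))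
        = fun ρ : ℝ => lambdaArgBranch lam L ((ρ:ℂ) * Complex.exp ((s:ℂ)*Complex.I)) := by
      funext ρ
      have h5 : ((s + 2*Real.pi : ℝ):ℂ) * Complex.I
          = (s:ℂ)*Complex.I + 2*Real.pi*Complex.I := by
        push_cast
        ring
      rw [h5, Complex.exp_add, Complex.exp_two_pi_mul_I, mul_one]
    have ht1 := hU (s + 2*Real.pi)
    rw [hfun] at ht1
    have ht2 := hU s
    have := tendsto_nhds_unique ht1 ht2
    rw [this]
    ring
end
end

section
/- Let λ ∈ (−π/2, π/2), let f ∈ F_λ and let g ∈ S* be the starlike function corresponding to f via L_f = e^{iλ}(cos λ)·L_g. Then log M(r, f) = cos²λ · log M(r, g) + O(1) as r → 1−; i.e. there exist constants K > 0 and r₀ ∈ (0, 1) such that | log M(r, f) − cos²λ · log M(r, g) | ≤ K for all r₀ ≤ r < 1. -/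
open Set Metric Filter Topology

/-- The maximum modulus `M(r, f) = max_{|z| = r} |f(z)|`. -/
noncomputable def maxModulus (f : ℂ → ℂ) (r : ℝ) : ℝ :=
  sSup ((fun z => ‖f z‖) '' sphere (0 : ℂ) r)

/-- From `exp (L z) = g z / z` we get `z * L'(z) = z * g'(z)/g(z) - 1`. -/
lemma zderiv_logBranch {g L : ℂ → ℂ}
    (hgd : DifferentiableOn ℂ g (ball (0 : ℂ) 1))
    (hLd : DifferentiableOn ℂ L (ball (0 : ℂ) 1))
    (hne : ∀ z ∈ ball (0 : ℂ) 1, z ≠ 0 → g z ≠ 0)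
    (hexp : ∀ z ∈ ball (0 : ℂ) 1, z ≠ 0 → Complex.exp (L z) = g z / z)
    {z : ℂ} (hz : z ∈ ball (0 : ℂ) 1) (hz0 : z ≠ 0) :
    z * deriv L z = z * deriv g z / g z - 1 := by
  have hUopen : IsOpen (ball (0 : ℂ) 1 ∩ {(0:ℂ)}ᶜ) :=
    isOpen_ball.inter isOpen_compl_singleton
  have hzU : z ∈ ball (0 : ℂ) 1 ∩ {(0:ℂ)}ᶜ := ⟨hz, hz0⟩
  have hLz : DifferentiableAt ℂ L z := hLd.differentiableAt (isOpen_ball.mem_nhds hz)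
  have hgz : DifferentiableAt ℂ g z := hgd.differentiableAt (isOpen_ball.mem_nhds hz)
  have h1 : HasDerivAt (fun w => Complex.exp (L w)) (Complex.exp (L z) * deriv L z) z :=
    hLz.hasDerivAt.cexp
  have h2 : HasDerivAt (fun w => g w * w⁻¹) (deriv g z * z⁻¹ + g z * (-(z ^ 2)⁻¹)) z :=
    hgz.hasDerivAt.mul (hasDerivAt_inv hz0)
  have heq : (fun w => Complex.exp (L w)) =ᶠ[nhds z] (fun w => g w * w⁻¹) := by
    filter_upwards [hUopen.mem_nhds hzU] with w hw
    rw [hexp w hw.1 hw.2, div_eq_mul_inv]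
  have hderiv_eq : Complex.exp (L z) * deriv L z
      = deriv g z * z⁻¹ + g z * (-(z ^ 2)⁻¹) := by
    have := heq.deriv_eq
    rwa [h1.deriv, h2.deriv] at this
  rw [hexp z hz hz0] at hderiv_eq
  have hgz0 : g z ≠ 0 := hne z hz hz0
  field_simp at hderiv_eq
  have key : (z ^ 2) * (g z * (z * deriv L z)) = (z ^ 2) * (z * deriv g z - g z) := by
    linear_combination (z ^ 2) * hderiv_eq
  have key2 : g z * (z * deriv L z) = z * deriv g z - g z :=
    mul_left_cancel₀ (pow_ne_zero 2 hz0) key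
  field_simp
  linear_combination key2

/-- For a starlike function, the angular derivative identity along circles. -/
lemma hasDerivAt_im_log {g L : ℂ → ℂ} (hg : g ∈ SpiralClass 0) (hL : IsLogBranch g L)
    {r : ℝ} (hr : r ∈ Set.Ioo (0 : ℝ) 1) (θ : ℝ) :
    HasDerivAt (fun t : ℝ => (L (circleMap 0 r t)).im + t)
      ((circleMap 0 r θ * deriv g (circleMap 0 r θ) / g (circleMap 0 r θ)).re) θ := by
  obtain ⟨hgd, hg0, hgd0, hne, hpos⟩ := hg
  obtain ⟨hLd, hL0, hexp⟩ := hL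
  set c : ℂ := circleMap 0 r θ with hc
  have hcball : c ∈ ball (0 : ℂ) 1 := by
    simp only [hc, mem_ball, Complex.dist_eq, sub_zero, norm_circleMap_zero,
      abs_of_pos hr.1]
    exact hr.2
  have hc0 : c ≠ 0 := circleMap_ne_center (ne_of_gt hr.1)
  have hLc : DifferentiableAt ℂ L c := hLd.differentiableAt (isOpen_ball.mem_nhds hcball)
  have hcirc : HasDerivAt (circleMap 0 r) (circleMap 0 r θ * Complex.I) θ :=
    hasDerivAt_circleMap 0 r θ
  have hcomp : HasDerivAt (fun t : ℝ => L (circleMap 0 r t))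
      (circleMap 0 r θ * Complex.I * deriv L c) θ := by
    have := (hLc.hasDerivAt.hasFDerivAt.restrictScalars ℝ).comp_hasDerivAt θ hcirc
    simpa [mul_comm, Function.comp_def] using this
  have him : HasDerivAt (fun t : ℝ => (L (circleMap 0 r t)).im)
      ((circleMap 0 r θ * Complex.I * deriv L c).im) θ :=
    (Complex.imCLM.hasFDerivAt.comp_hasDerivAt θ hcomp)
  have hsum := him.add (hasDerivAt_id θ)
  have hval : (circleMap 0 r θ * Complex.I * deriv L c).im + 1
      = (c * deriv g c / g c).re := by
    have hzd : c * deriv L c = c * deriv g c / g c - 1 :=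
      zderiv_logBranch hgd hLd hne hexp hcball hc0
    have : circleMap 0 r θ * Complex.I * deriv L c = Complex.I * (c * deriv L c) := by
      rw [hc]; ring
    rw [this, hzd]
    simp [Complex.mul_im, Complex.sub_re, Complex.sub_im]
  rw [← hval]
  exact hsum

/-- Oscillation of `Im L` along a circle is at most `2π` for a starlike function. -/
lemma im_log_osc {g L : ℂ → ℂ} (hg : g ∈ SpiralClass 0) (hL : IsLogBranch g L)
    {r : ℝ} (hr : r ∈ Set.Ioo (0 : ℝ) 1) {z w : ℂ}
    (hz : z ∈ sphere (0 : ℂ) r) (hw : w ∈ sphere (0 : ℂ) r) :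
    (L z).im - (L w).im ≤ 2 * Real.pi := by
  set h : ℝ → ℝ := fun t => (L (circleMap 0 r t)).im + t with hh
  have hmono : StrictMono h := by
    apply strictMono_of_deriv_pos
    intro t
    rw [(hasDerivAt_im_log hg hL hr t).deriv]
    have hcball : circleMap 0 r t ∈ ball (0 : ℂ) 1 := by
      simp only [mem_ball, Complex.dist_eq, sub_zero, norm_circleMap_zero, abs_of_pos hr.1]
      exact hr.2
    have hc0 : circleMap 0 r t ≠ 0 := circleMap_ne_center (ne_of_gt hr.1)
    have := hg.2.2.2.2 (circleMap 0 r t) hcball hc0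
    simpa [mul_comm] using this
  -- write z, w via circleMap and arguments
  have habsz : ‖z‖ = r := by simpa [Complex.dist_eq] using hz
  have habsw : ‖w‖ = r := by simpa [Complex.dist_eq] using hw
  have hzc : z = circleMap 0 r z.arg := by
    rw [circleMap]; rw [← habsz]
    simpa using (Complex.norm_mul_exp_arg_mul_I z).symm
  have hwc : w = circleMap 0 r w.arg := by
    rw [circleMap]; rw [← habsw]
    simpa using (Complex.norm_mul_exp_arg_mul_I w).symm
  set α := z.arg with hα
  by_cases hcase : α ≤ w.arg
  · -- β = w.arg
    have h1 : h α ≤ h w.arg := (hmono.le_iff_le).mpr hcase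
    have h2 : w.arg - α ≤ 2 * Real.pi := by
      have := Complex.arg_le_pi w
      have := Complex.neg_pi_lt_arg z
      have hpi := Real.pi_pos
      linarith
    have := h1
    simp only [hh, ← hzc, ← hwc] at this
    linarith
  · -- β = w.arg + 2π
    push_neg at hcase
    have hαβ : α ≤ w.arg + 2 * Real.pi := by
      have := Complex.arg_le_pi z
      have := Complex.neg_pi_lt_arg w
      have hpi := Real.pi_pos
      linarith
    have h1 : h α ≤ h (w.arg + 2 * Real.pi) := (hmono.le_iff_le).mpr hαβ
    have hper : circleMap 0 r (w.arg + 2 * Real.pi) = circleMap 0 r w.arg :=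
      (periodic_circleMap 0 r) w.arg
    have := h1
    simp only [hh, ← hzc, hper, ← hwc] at this
    linarith

/-- On every circle, `σ · Im L` is somewhere nonnegative (maximum principle). -/
lemma exists_im_sign {g L : ℂ → ℂ} (hL : IsLogBranch g L)
    {r : ℝ} (hr : r ∈ Set.Ioo (0 : ℝ) 1) (σ : ℝ) :
    ∃ z ∈ sphere (0 : ℂ) r, 0 ≤ σ * (L z).im := by
  obtain ⟨hLd, hL0, _⟩ := hL
  by_contra hcon
  push_neg at hcon
  -- consider F z = exp (-σ * I * L z), with ‖F z‖ = exp (σ * Im (L z))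
  set F : ℂ → ℂ := fun z => Complex.exp (-(σ : ℂ) * Complex.I * L z) with hF
  have hnorm : ∀ z, ‖F z‖ = Real.exp (σ * (L z).im) := by
    intro z
    simp only [hF, Complex.norm_exp]
    congr 1
    simp [Complex.mul_re, Complex.mul_im]
  have hsph_ball : sphere (0 : ℂ) r ⊆ ball (0 : ℂ) 1 := fun x hx => by
    have : ‖x‖ = r := by simpa [Complex.dist_eq] using hx
    simp [mem_ball, Complex.dist_eq, this, hr.2]
  -- max of Im on the compact sphere
  have hsph_compact : IsCompact (sphere (0 : ℂ) r) := isCompact_sphere 0 r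
  have hsph_ne : (sphere (0 : ℂ) r).Nonempty :=
    NormedSpace.sphere_nonempty.mpr (le_of_lt hr.1)
  have hLcont : ContinuousOn (fun z => σ * (L z).im) (sphere (0 : ℂ) r) :=
    (continuous_const.mul (Complex.continuous_im)).comp_continuousOn
      ((hLd.continuousOn).mono hsph_ball)
  obtain ⟨z₀, hz₀, hmax⟩ := hsph_compact.exists_isMaxOn hsph_ne hLcont
  set C := Real.exp (σ * (L z₀).im) with hC
  have hClt : C < 1 := Real.exp_lt_one_iff.mpr (hcon z₀ hz₀)
  have hbound : ∀ z ∈ frontier (ball (0 : ℂ) r), ‖F z‖ ≤ C := by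
    intro z hzf
    rw [frontier_ball 0 (ne_of_gt hr.1)] at hzf
    rw [hnorm]
    exact Real.exp_le_exp.mpr (hmax hzf)
  have hdiff : DiffContOnCl ℂ F (ball (0 : ℂ) r) := by
    apply DifferentiableOn.diffContOnCl
    rw [closure_ball 0 (ne_of_gt hr.1)]
    have hsub : closedBall (0 : ℂ) r ⊆ ball (0 : ℂ) 1 := by
      intro x hx
      simp only [mem_closedBall, Complex.dist_eq, sub_zero] at hx
      simp only [mem_ball, Complex.dist_eq, sub_zero]
      exact lt_of_le_of_lt hx hr.2
    exact (((hLd.mono hsub).const_mul _).cexp)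
  have h0 : (0 : ℂ) ∈ closure (ball (0 : ℂ) r) :=
    subset_closure (mem_ball_self hr.1)
  have := Complex.norm_le_of_forall_mem_frontier_norm_le (isBounded_ball) hdiff hbound h0
  rw [hnorm 0, hL0] at this
  simp at this
  linarith

/-- For a starlike function, `|Im L| ≤ 2π` on each circle. -/
lemma abs_im_log_le {g L : ℂ → ℂ} (hg : g ∈ SpiralClass 0) (hL : IsLogBranch g L)
    {r : ℝ} (hr : r ∈ Set.Ioo (0 : ℝ) 1) {z : ℂ} (hz : z ∈ sphere (0 : ℂ) r) :
    |(L z).im| ≤ 2 * Real.pi := by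
  obtain ⟨w₁, hw₁, hw₁im⟩ := exists_im_sign hL hr (-1)
  obtain ⟨w₂, hw₂, hw₂im⟩ := exists_im_sign hL hr 1
  rw [abs_le]
  constructor
  · have := im_log_osc hg hL hr hw₂ hz
    have h2 : 0 ≤ (L w₂).im := by linarith [hw₂im]
    linarith
  · have := im_log_osc hg hL hr hz hw₁
    have h1 : (L w₁).im ≤ 0 := by linarith [hw₁im]
    linarith

/-- Max modulus on a circle via the log branch. -/
lemma maxModulus_eq {f Lf : ℂ → ℂ}
    (hfd : DifferentiableOn ℂ f (ball (0 : ℂ) 1))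
    (hexp : ∀ z ∈ ball (0 : ℂ) 1, z ≠ 0 → Complex.exp (Lf z) = f z / z)
    {r : ℝ} (hr : r ∈ Set.Ioo (0 : ℝ) 1) :
    ∃ z ∈ sphere (0 : ℂ) r, maxModulus f r = r * Real.exp ((Lf z).re) ∧
      ∀ w ∈ sphere (0 : ℂ) r, (Lf w).re ≤ (Lf z).re := by
  have hsph_ball : sphere (0 : ℂ) r ⊆ ball (0 : ℂ) 1 := fun x hx => by
    have : ‖x‖ = r := by simpa [Complex.dist_eq] using hx
    simp [mem_ball, Complex.dist_eq, this, hr.2]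
  have habs : ∀ z ∈ sphere (0 : ℂ) r, ‖f z‖ = r * Real.exp ((Lf z).re) := by
    intro z hz
    have habsz : ‖z‖ = r := by simpa [Complex.dist_eq] using hz
    have hz0 : z ≠ 0 := by
      intro h; rw [h] at habsz; simp at habsz; exact absurd habsz.symm (ne_of_gt hr.1)
    have := hexp z (hsph_ball hz) hz0
    have hfz : f z = z * Complex.exp (Lf z) := by
      field_simp at this; rw [← this]; ring
    rw [hfz, norm_mul, Complex.norm_exp, habsz]
  have hsph_compact : IsCompact (sphere (0 : ℂ) r) := isCompact_sphere 0 r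
  have hsph_ne : (sphere (0 : ℂ) r).Nonempty :=
    NormedSpace.sphere_nonempty.mpr (le_of_lt hr.1)
  have hcont : ContinuousOn (fun z => ‖f z‖) (sphere (0 : ℂ) r) :=
    continuous_norm.comp_continuousOn ((hfd.continuousOn).mono hsph_ball)
  obtain ⟨z, hzs, hsup, hge⟩ := hsph_compact.exists_sSup_image_eq_and_ge hsph_ne hcont
  refine ⟨z, hzs, ?_, ?_⟩
  · rw [maxModulus, hsup, habs z hzs]
  · intro w hws
    have := hge w hws
    rw [habs w hws, habs z hzs] at this
    have hrpos := hr.1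
    have := le_of_mul_le_mul_left this hrpos
    exact (Real.exp_le_exp).mp this

/-- if `f ∈ F_λ` and `g ∈ S*` correspond via `L_f = e^{iλ}(cos λ)·L_g`,
then `log M(r,f) = cos²λ · log M(r,g) + O(1)` as `r → 1−`. -/
theorem log_maxModulus_comparison (lam : ℝ)
    (hlam : lam ∈ Set.Ioo (-(Real.pi / 2)) (Real.pi / 2))
    (f g : ℂ → ℂ) (hf : f ∈ SpiralClass lam) (hg : g ∈ SpiralClass 0)
    (Lf Lg : ℂ → ℂ) (hLf : IsLogBranch f Lf) (hLg : IsLogBranch g Lg)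
    (hcorr : ∀ z ∈ ball (0 : ℂ) 1,
      Lf z = Complex.exp ((lam : ℂ) * Complex.I) * (Real.cos lam : ℂ) * Lg z) :
    ∃ K > (0 : ℝ), ∃ r₀ ∈ Set.Ioo (0 : ℝ) 1, ∀ r : ℝ, r₀ ≤ r → r < 1 →
      |Real.log (maxModulus f r) - Real.cos lam ^ 2 * Real.log (maxModulus g r)| ≤ K := by
  have hfd := hf.1
  have hgd := hg.1
  have hLfd := hLf.1
  have hfexp := hLf.2.2
  have hgexp := hLg.2.2
  set s := Real.sin lam with hs
  set c := Real.cos lam with hc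
  have hre : ∀ z ∈ ball (0 : ℂ) 1,
      (Lf z).re = c ^ 2 * (Lg z).re - s * c * (Lg z).im := by
    intro z hz
    rw [hcorr z hz]
    simp only [Complex.mul_re, Complex.mul_im, Complex.exp_ofReal_mul_I_re,
      Complex.exp_ofReal_mul_I_im, Complex.ofReal_re, Complex.ofReal_im, ← hs, ← hc]
    ring
  have hpi := Real.pi_pos
  have hlog2 : (0 : ℝ) ≤ Real.log 2 := Real.log_nonneg (by norm_num)
  refine ⟨2 * Real.pi + Real.log 2, by linarith, 1 / 2, ⟨by norm_num, by norm_num⟩, ?_⟩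
  intro r hr1 hr2
  have hr : r ∈ Set.Ioo (0 : ℝ) 1 := ⟨by linarith, hr2⟩
  have hsph_ball : sphere (0 : ℂ) r ⊆ ball (0 : ℂ) 1 := fun x hx => by
    have : ‖x‖ = r := by simpa [Complex.dist_eq] using hx
    simp [mem_ball, Complex.dist_eq, this, hr.2]
  obtain ⟨zf, hzf, hMf, hfmax⟩ := maxModulus_eq hfd hfexp hr
  obtain ⟨zg, hzg, hMg, hgmax⟩ := maxModulus_eq hgd hgexp hr
  -- logarithms of the maximum moduli
  have hlogf : Real.log (maxModulus f r) = Real.log r + (Lf zf).re := by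
    rw [hMf, Real.log_mul (ne_of_gt hr.1) (Real.exp_ne_zero _), Real.log_exp]
  have hlogg : Real.log (maxModulus g r) = Real.log r + (Lg zg).re := by
    rw [hMg, Real.log_mul (ne_of_gt hr.1) (Real.exp_ne_zero _), Real.log_exp]
  set P := Real.log r with hP
  set uf := (Lg zf).re
  set vf := (Lg zf).im
  set ug := (Lg zg).re
  set vg := (Lg zg).im
  have haf : (Lf zf).re = c ^ 2 * uf - s * c * vf := hre zf (hsph_ball hzf)
  have hag : (Lf zg).re = c ^ 2 * ug - s * c * vg := hre zg (hsph_ball hzg)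
  have hufug : uf ≤ ug := hgmax zf hzf
  have hfge : (Lf zg).re ≤ (Lf zf).re := hfmax zg hzg
  have hvf : |vf| ≤ 2 * Real.pi := abs_im_log_le hg hLg hr hzf
  have hvg : |vg| ≤ 2 * Real.pi := abs_im_log_le hg hLg hr hzg
  -- elementary bounds
  have hc1 : |c| ≤ 1 := Real.abs_cos_le_one lam
  have hs1 : |s| ≤ 1 := Real.abs_sin_le_one lam
  have hc2 : c ^ 2 ≤ 1 := by nlinarith [abs_nonneg c, neg_abs_le c, le_abs_self c]
  have hc2pos : 0 ≤ c ^ 2 := sq_nonneg c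
  have hsc : |s| * |c| ≤ 1 := mul_le_one₀ hs1 (abs_nonneg c) hc1
  have hscvf : |s * c * vf| ≤ 2 * Real.pi := by
    rw [abs_mul, abs_mul]
    nlinarith [abs_nonneg vf]
  have hscvg : |s * c * vg| ≤ 2 * Real.pi := by
    rw [abs_mul, abs_mul]
    nlinarith [abs_nonneg vg]
  obtain ⟨hscvf1, hscvf2⟩ := abs_le.mp hscvf
  obtain ⟨hscvg1, hscvg2⟩ := abs_le.mp hscvg
  have hPle : P ≤ 0 := Real.log_nonpos (le_of_lt hr.1) (le_of_lt hr2)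
  have hPge : -Real.log 2 ≤ P := by
    have h12 : Real.log (2⁻¹) ≤ Real.log r := by
      apply Real.log_le_log (by norm_num)
      linarith
    rwa [Real.log_inv] at h12
  have hcP1 : 1 * P ≤ c ^ 2 * P := mul_le_mul_of_nonpos_right hc2 hPle
  have hcPneg : c ^ 2 * P ≤ 0 := mul_nonpos_of_nonneg_of_nonpos hc2pos hPle
  have hcuf : c ^ 2 * uf ≤ c ^ 2 * ug := mul_le_mul_of_nonneg_left hufug hc2pos
  rw [hlogf, hlogg, haf, abs_le]
  constructor
  · linarith
  · linarith [hag, hfge]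
end

section
/- Let g₀(z) = (1/(1−z))·Log(1/(1−z)) for z ∈ 𝔻 (principal logarithm), extended by g₀(0) = 0; equivalently g₀(z) = Σ_{n≥1} (1 + 1/2 + ⋯ + 1/n) zⁿ. Then g₀ is analytic on 𝔻 with g₀(0) = 0, g₀'(0) = 1, g₀(z) ≠ 0 for 0 < |z| < 1, and Re( z·g₀'(z)/g₀(z) ) > −1/2 + 1/(2 log 2) > 0 for all 0 < |z| < 1; in particular g₀ is starlike. -/
open Set Metric intervalIntegral

private lemma cos_rpow_le {θ t : ℝ} (hθ : |θ| < Real.pi / 2) (ht0 : 0 ≤ t) (ht1 : t ≤ 1) :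
    Real.cos θ ^ t ≤ Real.cos (t * θ) := by
  rw [abs_lt] at hθ
  have hc : 0 < Real.cos θ := Real.cos_pos_of_mem_Ioo ⟨hθ.1, hθ.2⟩
  have step1 : Real.cos θ ^ t ≤ t * Real.cos θ + (1 - t) := by
    have := Real.geom_mean_le_arith_mean2_weighted ht0 (by linarith) hc.le zero_le_one
      (by ring : t + (1 - t) = 1)
    simpa [Real.one_rpow] using this
  have step2 : (1 - t) * Real.cos 0 + t * Real.cos θ ≤ Real.cos ((1 - t) * 0 + t * θ) := by
    have h0 : (0 : ℝ) ∈ Icc (-(Real.pi / 2)) (Real.pi / 2) := by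
      constructor <;> [linarith [Real.pi_pos]; linarith [Real.pi_pos]]
    have hθm : θ ∈ Icc (-(Real.pi / 2)) (Real.pi / 2) := ⟨hθ.1.le, hθ.2.le⟩
    exact strictConcaveOn_cos_Icc.concaveOn.2 h0 hθm (by linarith) ht0 (by ring)
  simp only [Real.cos_zero, mul_one, mul_zero, zero_add] at step2
  linarith

private lemma key_re_lt {v : ℂ} (hv : 1 / 2 < v.re) (hv1 : v ≠ 1) :
    1 / (2 * Real.log 2) < ((v - 1) / Complex.log v).re := by
  have hv0 : v ≠ 0 := fun h => by simp [h] at hv; linarith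
  set L := Complex.log v with hLdef
  have hL : L ≠ 0 := by
    intro h
    apply hv1
    rw [← Complex.exp_log hv0, ← hLdef, h, Complex.exp_zero]
  have hθ : |v.arg| < Real.pi / 2 :=
    Complex.abs_arg_lt_pi_div_two_iff.2 (Or.inl (by linarith))
  -- pointwise bound
  have hpt : ∀ t ∈ Icc (0:ℝ) 1, ((1:ℝ)/2) ^ t ≤ (Complex.exp (t * L)).re := by
    intro t ht
    have h1 : (Complex.exp (t * L)).re
        = Real.exp (t * Real.log ‖v‖) * Real.cos (t * v.arg) := by
      rw [hLdef, Complex.exp_re]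
      simp [Complex.re_ofReal_mul, Complex.im_ofReal_mul, Complex.log_re, Complex.log_im]
    have habs : (0:ℝ) < ‖v‖ := norm_pos_iff.mpr hv0
    have hcosarg : Real.cos v.arg = v.re / ‖v‖ := Complex.cos_arg hv0
    have h2 : Real.exp (t * Real.log ‖v‖) = ‖v‖ ^ t := by
      rw [mul_comm, Real.exp_mul, Real.exp_log habs]
    have h3 : Real.cos v.arg ^ t ≤ Real.cos (t * v.arg) := cos_rpow_le hθ ht.1 ht.2
    have h4 : ‖v‖ ^ t * Real.cos v.arg ^ t ≤ ‖v‖ ^ t * Real.cos (t * v.arg) := by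
      apply mul_le_mul_of_nonneg_left h3 (Real.rpow_nonneg habs.le t)
    have h5 : ‖v‖ ^ t * Real.cos v.arg ^ t = v.re ^ t := by
      rw [← Real.mul_rpow habs.le (by
        rw [hcosarg]; positivity), hcosarg]
      field_simp
    have h6 : ((1:ℝ)/2) ^ t ≤ v.re ^ t :=
      Real.rpow_le_rpow (by norm_num) hv.le ht.1
    rw [h1, h2]
    calc ((1:ℝ)/2) ^ t ≤ v.re ^ t := h6
      _ = ‖v‖ ^ t * Real.cos v.arg ^ t := h5.symm
      _ ≤ _ := h4
  -- integral of the complex exponential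
  have hderivC : ∀ t : ℝ, HasDerivAt (fun s : ℝ => ((Complex.exp (s * L) / L).re : ℝ))
      ((Complex.exp (t * L)).re) t := by
    intro t
    have hd1 : HasDerivAt (fun s : ℝ => (s : ℂ) * L) L t := by
      simpa using (Complex.ofRealCLM.hasDerivAt (x := t)).mul_const L
    have hd2 := hd1.cexp
    have hd3 : HasDerivAt (fun s : ℝ => Complex.exp (s * L) / L) (Complex.exp (t * L)) t := by
      simpa [mul_div_assoc, mul_div_cancel_right₀ _ hL] using hd2.div_const L
    have := Complex.reCLM.hasFDerivAt.comp_hasDerivAt t hd3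
    exact this
  have hcontC : Continuous fun t : ℝ => (Complex.exp (t * L)).re := by
    exact Complex.continuous_re.comp (Complex.continuous_exp.comp (Complex.continuous_ofReal.mul continuous_const))
  have hintC : ∫ t in (0:ℝ)..1, (Complex.exp (t * L)).re = ((v - 1) / L).re := by
    rw [integral_eq_sub_of_hasDerivAt (fun t _ => hderivC t)
      (hcontC.intervalIntegrable 0 1)]
    have : Complex.exp ((1:ℝ) * L) = v := by
      rw [Complex.ofReal_one, one_mul, hLdef, Complex.exp_log hv0]
    rw [this]
    rw [show Complex.exp ((0:ℝ) * L) = 1 by norm_num]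
    rw [← Complex.sub_re, div_sub_div_same]
  -- integral of (1/2)^t
  have hderivR : ∀ t : ℝ, HasDerivAt (fun s : ℝ => ((1:ℝ)/2) ^ s / Real.log (1/2))
      (((1:ℝ)/2) ^ t) t := by
    intro t
    have hlog : Real.log ((1:ℝ)/2) ≠ 0 := by
      rw [one_div, Real.log_inv]
      exact neg_ne_zero.2 (Real.log_pos one_lt_two).ne'
    have h := ((Real.hasStrictDerivAt_const_rpow (a := (1:ℝ)/2) (by norm_num) t).hasDerivAt).div_const (Real.log (1/2))
    rw [mul_div_assoc, div_self hlog, mul_one] at h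
    exact h
  have hcontR : Continuous fun t : ℝ => ((1:ℝ)/2) ^ t :=
    continuous_iff_continuousAt.2 fun t => Real.continuousAt_const_rpow (by norm_num)
  have hintR : ∫ t in (0:ℝ)..1, ((1:ℝ)/2) ^ t = 1 / (2 * Real.log 2) := by
    rw [integral_eq_sub_of_hasDerivAt (fun t _ => hderivR t)
      (hcontR.intervalIntegrable 0 1)]
    rw [Real.rpow_one, Real.rpow_zero, Real.log_div one_ne_zero (by norm_num), Real.log_one]
    have h2 : Real.log 2 ≠ 0 := (Real.log_pos one_lt_two).ne'
    field_simp
    ring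
  -- strict inequality of integrals
  have hlt : (∫ t in (0:ℝ)..1, ((1:ℝ)/2) ^ t) < ∫ t in (0:ℝ)..1, (Complex.exp (t * L)).re := by
    apply integral_lt_integral_of_continuousOn_of_le_of_exists_lt zero_lt_one
      hcontR.continuousOn hcontC.continuousOn
    · intro t ht
      exact hpt t ⟨ht.1.le, ht.2⟩
    · refine ⟨1, ⟨zero_le_one, le_refl 1⟩, ?_⟩
      have : Complex.exp ((1:ℝ) * L) = v := by
        rw [Complex.ofReal_one, one_mul, hLdef, Complex.exp_log hv0]
      rw [this, Real.rpow_one]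
      exact hv
  rw [hintR, hintC] at hlt
  exact hlt

/-- the function `g₀(z) = (1/(1−z))·Log(1/(1−z))` (principal logarithm,
with `g₀(0) = 0`) is analytic on `𝔻`, normalized (`g₀(0) = 0`, `g₀'(0) = 1`),
non-vanishing on the punctured disk, and satisfies
`Re(z·g₀'(z)/g₀(z)) > −1/2 + 1/(2 log 2) > 0` there; in particular `g₀` is starlike. -/
theorem g0_starlike (g₀ : ℂ → ℂ)
    (hg₀ : g₀ = fun z : ℂ => (1 - z)⁻¹ * Complex.log ((1 - z)⁻¹)) :
    DifferentiableOn ℂ g₀ (ball (0 : ℂ) 1) ∧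
    g₀ 0 = 0 ∧ deriv g₀ 0 = 1 ∧
    (∀ z ∈ ball (0 : ℂ) 1, z ≠ 0 → g₀ z ≠ 0) ∧
    (0 : ℝ) < -(1 / 2) + 1 / (2 * Real.log 2) ∧
    (∀ z ∈ ball (0 : ℂ) 1, z ≠ 0 →
      -(1 / 2) + 1 / (2 * Real.log 2) < (z * deriv g₀ z / g₀ z).re) := by
  have habs : ∀ z ∈ ball (0 : ℂ) 1, ‖z‖ < 1 := by
    intro z hz
    simpa [Complex.dist_eq] using mem_ball.1 hz
  have hre : ∀ z ∈ ball (0 : ℂ) 1, 1 / 2 < ((1 - z)⁻¹).re := by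
    intro z hz
    have h1 : ‖z‖ < 1 := habs z hz
    have hns : Complex.normSq z < 1 := by
      rw [Complex.normSq_eq_norm_sq]; nlinarith [norm_nonneg z]
    have hz1 : z ≠ 1 := by
      intro h; rw [h] at h1; simp at h1
    have hs0 : (1 : ℂ) - z ≠ 0 := by
      intro h; apply hz1; linear_combination -h
    have hd : (0 : ℝ) < Complex.normSq (1 - z) := Complex.normSq_pos.2 hs0
    rw [Complex.inv_re, lt_div_iff₀ hd]
    have e1 : Complex.normSq (1 - z) = (1 - z.re) ^ 2 + z.im ^ 2 := by
      simp [Complex.normSq_apply, Complex.sub_re, Complex.sub_im]; ring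
    have e2 : Complex.normSq z = z.re ^ 2 + z.im ^ 2 := by
      simp [Complex.normSq_apply]; ring
    rw [e1]
    simp only [Complex.sub_re, Complex.one_re]
    nlinarith [e2 ▸ hns]
  have hs0 : ∀ z ∈ ball (0 : ℂ) 1, (1 : ℂ) - z ≠ 0 := by
    intro z hz h
    have := hre z hz
    rw [h] at this
    simp at this
    linarith
  have hder : ∀ z ∈ ball (0 : ℂ) 1, HasDerivAt g₀
      ((-(-1) / (1 - z) ^ 2) * Complex.log ((1 - z)⁻¹)
        + (1 - z)⁻¹ * ((-(-1) / (1 - z) ^ 2) / (1 - z)⁻¹)) z := by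
    intro z hz
    have hd1 : HasDerivAt (fun z : ℂ => 1 - z) (-1) z := (hasDerivAt_id z).const_sub 1
    have hd2 := hd1.inv (hs0 z hz)
    have hslit : (1 - z)⁻¹ ∈ Complex.slitPlane :=
      Complex.mem_slitPlane_iff.2 (Or.inl (by linarith [hre z hz]))
    have hd3 := hd2.clog hslit
    have hd4 := hd2.mul hd3
    rw [hg₀]
    exact hd4
  have h0mem : (0 : ℂ) ∈ ball (0 : ℂ) 1 := mem_ball_self one_pos
  have hlog2pos : (0 : ℝ) < Real.log 2 := Real.log_pos one_lt_two
  have hlog2lt : Real.log 2 < 1 := by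
    have := Real.log_two_lt_d9
    linarith
  refine ⟨?_, ?_, ?_, ?_, ?_, ?_⟩
  · exact fun z hz => ((hder z hz).differentiableAt).differentiableWithinAt
  · rw [hg₀]; simp
  · rw [(hder 0 h0mem).deriv]
    norm_num
  · intro z hz hz0
    rw [hg₀]
    have hw0 : ((1 : ℂ) - z)⁻¹ ≠ 0 := inv_ne_zero (hs0 z hz)
    have hw1 : ((1 : ℂ) - z)⁻¹ ≠ 1 := by
      intro h
      have h2 : (1 : ℂ) - z = 1 := by
        rw [← inv_inv ((1:ℂ) - z), h, inv_one]
      exact hz0 (by linear_combination -h2)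
    have hL : Complex.log ((1 - z)⁻¹) ≠ 0 := by
      intro h
      apply hw1
      rw [← Complex.exp_log hw0, h, Complex.exp_zero]
    exact mul_ne_zero hw0 hL
  · have : 1 / 2 < 1 / (2 * Real.log 2) := by
      rw [lt_div_iff₀ (by positivity)]
      nlinarith
    linarith
  · intro z hz hz0
    have hw0 : ((1 : ℂ) - z)⁻¹ ≠ 0 := inv_ne_zero (hs0 z hz)
    have hw1 : ((1 : ℂ) - z)⁻¹ ≠ 1 := by
      intro h
      have h2 : (1 : ℂ) - z = 1 := by
        rw [← inv_inv ((1:ℂ) - z), h, inv_one]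
      exact hz0 (by linear_combination -h2)
    have hL : Complex.log ((1 - z)⁻¹) ≠ 0 := by
      intro h
      apply hw1
      rw [← Complex.exp_log hw0, h, Complex.exp_zero]
    have hs := hs0 z hz
    have hD : deriv g₀ z = ((1 - z)⁻¹) ^ 2 * Complex.log ((1 - z)⁻¹) + ((1 - z)⁻¹) ^ 2 := by
      rw [(hder z hz).deriv]
      have h2 : (- -1 : ℂ) / (1 - z) ^ 2 = ((1 - z)⁻¹) ^ 2 := by
        rw [neg_neg, inv_pow, one_div]
      rw [h2, mul_comm ((1 - z)⁻¹) _, div_mul_cancel₀ _ hw0]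
    have hEq : z * deriv g₀ z / g₀ z
        = (((1 - z)⁻¹ - 1) + ((1 - z)⁻¹ - 1) / Complex.log ((1 - z)⁻¹)) := by
      rw [hD, hg₀]
      simp only
      rw [div_eq_iff (mul_ne_zero hw0 hL)]
      have hinv : (1 - z) * (1 - z)⁻¹ = 1 := mul_inv_cancel₀ hs
      have hc : ((1 - z)⁻¹ - 1) / Complex.log ((1 - z)⁻¹)
          * ((1 - z)⁻¹ * Complex.log ((1 - z)⁻¹)) = ((1 - z)⁻¹ - 1) * (1 - z)⁻¹ := by
        have h := div_mul_cancel₀ ((1 - z)⁻¹ - 1) hL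
        linear_combination ((1 - z)⁻¹) * h
      rw [add_mul, hc]
      linear_combination (-((1 - z)⁻¹ * (Complex.log ((1 - z)⁻¹) + 1))) * hinv
    rw [hEq]
    have hkey := key_re_lt (hre z hz) hw1
    have hre2 := hre z hz
    simp only [Complex.add_re, Complex.sub_re, Complex.one_re]
    linarith
end

section
/- For θ ∈ (0, π/2) define Q(θ) = ( (log cos θ)² + θ² ) / ( θ·tan θ + log cos θ ). Then the denominator θ·tan θ + log cos θ is positive on (0, π/2), lim_{θ→0+} Q(θ) = 2, lim_{θ→π/2−} Q(θ) = 0, and Q is bounded on (0, π/2). -/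
open Set Filter Topology

private lemma aux_x_log_pow (n : ℕ) :
    Tendsto (fun x : ℝ => x * (Real.log x) ^ n) (𝓝[>] (0 : ℝ)) (𝓝 0) := by
  have h1 : Tendsto (fun x : ℝ => -Real.log x) (𝓝[>] (0 : ℝ)) atTop :=
    tendsto_neg_atBot_atTop.comp Real.tendsto_log_nhdsGT_zero
  have h2 := (Real.tendsto_pow_mul_exp_neg_atTop_nhds_zero n).comp h1
  have h3 := h2.const_mul ((-1 : ℝ) ^ n)
  rw [mul_zero] at h3
  refine h3.congr' ?_
  filter_upwards [self_mem_nhdsWithin] with x (hx : 0 < x)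
  show (-1 : ℝ) ^ n * ((-Real.log x) ^ n * Real.exp (-(-Real.log x))) = x * (Real.log x) ^ n
  rw [neg_neg, Real.exp_log hx]
  ring_nf
  rw [pow_mul']
  norm_num

private lemma aux_sin_div :
    Tendsto (fun x : ℝ => Real.sin x / x) (𝓝[>] (0 : ℝ)) (𝓝 1) := by
  have h := Real.hasDerivAt_sin 0
  rw [hasDerivAt_iff_tendsto_slope, Real.cos_zero] at h
  have h' := h.mono_left (nhdsWithin_mono _ fun x hx => ne_of_gt hx)
  refine h'.congr fun x => ?_
  rw [slope_def_field, Real.sin_zero, sub_zero, sub_zero]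

private lemma aux_tan_div :
    Tendsto (fun x : ℝ => Real.tan x / x) (𝓝[>] (0 : ℝ)) (𝓝 1) := by
  have h := Real.hasDerivAt_tan (x := 0) (by simp)
  rw [hasDerivAt_iff_tendsto_slope] at h
  have h1 : (1 : ℝ) / Real.cos 0 ^ 2 = 1 := by simp
  rw [h1] at h
  have h' := h.mono_left (nhdsWithin_mono _ fun x hx => ne_of_gt hx)
  refine h'.congr fun x => ?_
  rw [slope_def_field, Real.tan_zero, sub_zero, sub_zero]

private lemma aux_log1p :
    Tendsto (fun x : ℝ => Real.log (1 + x) / x) (𝓝[≠] (0 : ℝ)) (𝓝 1) := by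
  have h0 : HasDerivAt (fun x : ℝ => 1 + x) 1 0 := by
    simpa using (hasDerivAt_id (0 : ℝ)).const_add (1 : ℝ)
  have h : HasDerivAt (fun x : ℝ => Real.log (1 + x)) 1 0 := by
    have := (Real.hasDerivAt_log (by norm_num : (1 : ℝ) + 0 ≠ 0)).comp 0 h0
    simpa [Function.comp_def] using this
  rw [hasDerivAt_iff_tendsto_slope] at h
  refine h.congr fun x => ?_
  rw [slope_def_field]
  simp

/-- for `Q(θ) = ((log cos θ)² + θ²)/(θ·tan θ + log cos θ)` on `(0, π/2)`,
the denominator is positive, `Q(θ) → 2` as `θ → 0+`, `Q(θ) → 0` as `θ → π/2−`, and `Q`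
is bounded on `(0, π/2)`. -/
theorem Q_properties (Q : ℝ → ℝ)
    (hQ : Q = fun θ : ℝ =>
      ((Real.log (Real.cos θ)) ^ 2 + θ ^ 2) /
        (θ * Real.tan θ + Real.log (Real.cos θ))) :
    (∀ θ ∈ Set.Ioo (0 : ℝ) (Real.pi / 2),
      0 < θ * Real.tan θ + Real.log (Real.cos θ)) ∧
    Tendsto Q (𝓝[>] (0 : ℝ)) (𝓝 2) ∧
    Tendsto Q (𝓝[<] (Real.pi / 2)) (𝓝 0) ∧
    ∃ K : ℝ, ∀ θ ∈ Set.Ioo (0 : ℝ) (Real.pi / 2), |Q θ| ≤ K := by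
  have hπ2 : 0 < Real.pi / 2 := Real.pi_div_two_pos
  -- cos θ - 1 = -(2 sin(θ/2)^2)
  have hcossub : ∀ θ : ℝ, Real.cos θ - 1 = -(2 * Real.sin (θ / 2) ^ 2) := by
    intro θ
    have h1 := Real.cos_two_mul (θ / 2)
    have h2 := Real.sin_sq_add_cos_sq (θ / 2)
    have h3 : 2 * (θ / 2) = θ := by ring
    rw [h3] at h1
    nlinarith
  -- Part 1: positivity of the denominator
  have hpos : ∀ θ ∈ Set.Ioo (0 : ℝ) (Real.pi / 2),
      0 < θ * Real.tan θ + Real.log (Real.cos θ) := by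
    rintro θ ⟨h0, h2⟩
    have hc : 0 < Real.cos θ :=
      Real.cos_pos_of_mem_Ioo ⟨by linarith, h2⟩
    have hc1 : Real.cos θ < 1 := by
      have := Real.cos_lt_cos_of_nonneg_of_le_pi (le_refl 0)
        (by linarith [Real.pi_pos] : θ ≤ Real.pi) h0
      simpa using this
    have hlog : 1 - (Real.cos θ)⁻¹ < Real.log (Real.cos θ) := by
      have hne : (Real.cos θ)⁻¹ ≠ 1 := by
        rw [ne_eq, inv_eq_one]; exact ne_of_lt hc1
      have h := Real.log_lt_sub_one_of_pos (inv_pos.mpr hc) hne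
      rw [Real.log_inv] at h
      linarith
    have hkey : 1 - Real.cos θ ≤ θ * Real.sin θ := by
      set s := Real.sin (θ / 2) with hs
      set c := Real.cos (θ / 2) with hcdef
      have hs_le : s ≤ θ / 2 := Real.sin_le (by linarith)
      have hs_nonneg : 0 ≤ s :=
        Real.sin_nonneg_of_nonneg_of_le_pi (by linarith) (by linarith [Real.pi_pos])
      have hc_half : (1 : ℝ) / 2 ≤ c := by
        have := Real.cos_le_cos_of_nonneg_of_le_pi (by linarith : (0:ℝ) ≤ θ / 2)
          (by linarith [Real.pi_pos] : Real.pi / 3 ≤ Real.pi) (by linarith : θ / 2 ≤ Real.pi / 3)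
        rw [Real.cos_pi_div_three] at this
        linarith
      have hsin2 : Real.sin θ = 2 * s * c := by
        have h3 : 2 * (θ / 2) = θ := by ring
        rw [← h3, Real.sin_two_mul]
      have h1c : 1 - Real.cos θ = 2 * s ^ 2 := by
        have := hcossub θ; linarith
      rw [h1c, hsin2]
      nlinarith [mul_le_mul_of_nonneg_left hc_half (le_of_lt h0)]
    rw [Real.tan_eq_sin_div_cos]
    have e : θ * (Real.sin θ / Real.cos θ) + (1 - (Real.cos θ)⁻¹)
        = (θ * Real.sin θ - (1 - Real.cos θ)) / Real.cos θ := by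
      field_simp
      ring
    have hnn : 0 ≤ (θ * Real.sin θ - (1 - Real.cos θ)) / Real.cos θ :=
      div_nonneg (by linarith) hc.le
    nlinarith [e ▸ hnn]
  -- Part 2: limit at 0+
  have hIoo0 : Set.Ioo (0:ℝ) (Real.pi/2) ∈ 𝓝[>] (0:ℝ) := Ioo_mem_nhdsGT hπ2
  have hhalf : Tendsto (fun θ : ℝ => θ / 2) (𝓝[>] (0:ℝ)) (𝓝[>] (0:ℝ)) := by
    apply tendsto_nhdsWithin_of_tendsto_nhds_of_eventually_within
    · have : Tendsto (fun θ : ℝ => θ / 2) (𝓝 (0:ℝ)) (𝓝 ((0:ℝ)/2)) := tendsto_id.div_const 2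
      rw [zero_div] at this
      exact this.mono_left nhdsWithin_le_nhds
    · filter_upwards [self_mem_nhdsWithin] with x (hx : 0 < x)
      exact div_pos hx two_pos
  have hs2 : Tendsto (fun θ : ℝ => Real.sin (θ/2) / (θ/2)) (𝓝[>] (0:ℝ)) (𝓝 1) :=
    aux_sin_div.comp hhalf
  have hc1 : Tendsto (fun θ : ℝ => (Real.cos θ - 1) / θ^2) (𝓝[>] (0:ℝ)) (𝓝 (-(1/2))) := by
    have h := (hs2.mul hs2).const_mul (-(1/2) : ℝ)
    have hval : (-(1/2) : ℝ) * (1 * 1) = -(1/2) := by norm_num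
    rw [hval] at h
    refine h.congr' ?_
    filter_upwards [self_mem_nhdsWithin] with θ (hθ : 0 < θ)
    show (-(1/2):ℝ) * (Real.sin (θ/2)/(θ/2) * (Real.sin (θ/2)/(θ/2))) = (Real.cos θ - 1)/θ^2
    rw [hcossub θ]
    field_simp
  have hclt : ∀ θ ∈ Set.Ioo (0:ℝ) (Real.pi/2), Real.cos θ < 1 := by
    rintro θ ⟨h1, h2⟩
    have := Real.cos_lt_cos_of_nonneg_of_le_pi (le_refl 0)
      (by linarith [Real.pi_pos] : θ ≤ Real.pi) h1
    simpa using this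
  have hmap : Tendsto (fun θ : ℝ => Real.cos θ - 1) (𝓝[>] (0:ℝ)) (𝓝[≠] (0:ℝ)) := by
    apply tendsto_nhdsWithin_of_tendsto_nhds_of_eventually_within
    · have : Tendsto (fun θ : ℝ => Real.cos θ - 1) (𝓝 0) (𝓝 (Real.cos 0 - 1)) :=
        (Real.continuous_cos.sub continuous_const).tendsto 0
      rw [Real.cos_zero, sub_self] at this
      exact this.mono_left nhdsWithin_le_nhds
    · filter_upwards [hIoo0] with θ hθ
      exact sub_ne_zero_of_ne (ne_of_lt (hclt θ hθ))
  have hB : Tendsto (fun θ : ℝ => Real.log (Real.cos θ) / θ^2) (𝓝[>] (0:ℝ)) (𝓝 (-(1/2))) := by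
    have h := (aux_log1p.comp hmap).mul hc1
    rw [one_mul] at h
    refine h.congr' ?_
    filter_upwards [hIoo0] with θ hθ
    have hne : Real.cos θ - 1 ≠ 0 := sub_ne_zero_of_ne (ne_of_lt (hclt θ hθ))
    show Real.log (1 + (Real.cos θ - 1)) / (Real.cos θ - 1) * ((Real.cos θ - 1)/θ^2)
        = Real.log (Real.cos θ) / θ^2
    have e1 : (1:ℝ) + (Real.cos θ - 1) = Real.cos θ := by ring
    rw [e1, div_mul_div_comm, mul_comm (Real.cos θ - 1) (θ^2),
      mul_div_mul_right _ _ hne]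
  have hlogcos0 : Tendsto (fun θ : ℝ => Real.log (Real.cos θ)) (𝓝[>] (0:ℝ)) (𝓝 0) := by
    have hcont : ContinuousAt (fun θ : ℝ => Real.log (Real.cos θ)) 0 :=
      (Real.continuousAt_log (by simp)).comp Real.continuous_cos.continuousAt
    have h := hcont.tendsto.mono_left (nhdsWithin_le_nhds : 𝓝[>] (0:ℝ) ≤ 𝓝 0)
    simpa using h
  have hnum2 : Tendsto (fun θ : ℝ => Real.log (Real.cos θ)/θ^2 * Real.log (Real.cos θ) + 1)
      (𝓝[>] (0:ℝ)) (𝓝 (-(1/2) * 0 + 1)) := (hB.mul hlogcos0).add_const 1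
  have hden2 : Tendsto (fun θ : ℝ => Real.tan θ/θ + Real.log (Real.cos θ)/θ^2)
      (𝓝[>] (0:ℝ)) (𝓝 (1 + -(1/2))) := aux_tan_div.add hB
  have hQ2 : Tendsto Q (𝓝[>] (0:ℝ)) (𝓝 2) := by
    have h := hnum2.div hden2 (by norm_num : (1:ℝ) + -(1/2) ≠ 0)
    have hval : ((-(1/2):ℝ) * 0 + 1) / (1 + -(1/2)) = 2 := by norm_num
    rw [hval] at h
    refine h.congr' ?_
    filter_upwards [self_mem_nhdsWithin] with θ (hθ : 0 < θ)
    have hθ2 : (θ:ℝ)^2 ≠ 0 := pow_ne_zero _ (ne_of_gt hθ)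
    simp only [hQ]
    show (Real.log (Real.cos θ)/θ^2 * Real.log (Real.cos θ) + 1)
        / (Real.tan θ/θ + Real.log (Real.cos θ)/θ^2)
       = (Real.log (Real.cos θ)^2 + θ^2) / (θ * Real.tan θ + Real.log (Real.cos θ))
    have e1 : Real.log (Real.cos θ)/θ^2 * Real.log (Real.cos θ) + 1
        = (Real.log (Real.cos θ)^2 + θ^2)/θ^2 := by field_simp
    have e2 : Real.tan θ/θ + Real.log (Real.cos θ)/θ^2
        = (θ * Real.tan θ + Real.log (Real.cos θ))/θ^2 := by field_simp
    rw [e1, e2, div_div_div_cancel_right₀ hθ2]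
  -- Part 3: limit at π/2−
  have hIooπ : Set.Ioo (0:ℝ) (Real.pi/2) ∈ 𝓝[<] (Real.pi/2) := Ioo_mem_nhdsLT hπ2
  have hcosmap : Tendsto Real.cos (𝓝[<] (Real.pi/2)) (𝓝[>] (0:ℝ)) := by
    apply tendsto_nhdsWithin_of_tendsto_nhds_of_eventually_within
    · have h := Real.continuous_cos.tendsto (Real.pi/2)
      rw [Real.cos_pi_div_two] at h
      exact h.mono_left nhdsWithin_le_nhds
    · filter_upwards [hIooπ] with θ hθ
      exact Real.cos_pos_of_mem_Ioo ⟨by linarith [hθ.1], hθ.2⟩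
  have hcL : Tendsto (fun θ : ℝ => Real.cos θ * Real.log (Real.cos θ)) (𝓝[<] (Real.pi/2)) (𝓝 0) := by
    have h := (aux_x_log_pow 1).comp hcosmap
    refine h.congr fun θ => ?_
    simp
  have hcL2 : Tendsto (fun θ : ℝ => Real.cos θ * Real.log (Real.cos θ)^2)
      (𝓝[<] (Real.pi/2)) (𝓝 0) := (aux_x_log_pow 2).comp hcosmap
  have hcθ2 : Tendsto (fun θ : ℝ => Real.cos θ * θ^2) (𝓝[<] (Real.pi/2)) (𝓝 0) := by
    have hcos0 : Tendsto Real.cos (𝓝[<] (Real.pi/2)) (𝓝 0) :=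
      hcosmap.mono_right nhdsWithin_le_nhds
    have hθ2 : Tendsto (fun θ : ℝ => θ^2) (𝓝[<] (Real.pi/2)) (𝓝 ((Real.pi/2)^2)) :=
      ((continuous_id.pow 2).tendsto _).mono_left nhdsWithin_le_nhds
    have h := hcos0.mul hθ2
    rw [zero_mul] at h
    exact h
  have hθsin : Tendsto (fun θ : ℝ => θ * Real.sin θ) (𝓝[<] (Real.pi/2)) (𝓝 (Real.pi/2)) := by
    have h : Tendsto (fun θ : ℝ => θ * Real.sin θ) (𝓝 (Real.pi/2))
        (𝓝 (Real.pi/2 * Real.sin (Real.pi/2))) := (continuous_id.mul Real.continuous_sin).tendsto _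
    rw [Real.sin_pi_div_two, mul_one] at h
    exact h.mono_left nhdsWithin_le_nhds
  have hQ3 : Tendsto Q (𝓝[<] (Real.pi/2)) (𝓝 0) := by
    have hnum := hcL2.add hcθ2
    rw [add_zero] at hnum
    have hden := hθsin.add hcL
    rw [add_zero] at hden
    have h := hnum.div hden (ne_of_gt hπ2)
    rw [zero_div] at h
    refine h.congr' ?_
    filter_upwards [hIooπ] with θ hθ
    have hc : 0 < Real.cos θ := Real.cos_pos_of_mem_Ioo ⟨by linarith [hθ.1], hθ.2⟩
    simp only [hQ]
    show (Real.cos θ * Real.log (Real.cos θ)^2 + Real.cos θ * θ^2)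
        / (θ * Real.sin θ + Real.cos θ * Real.log (Real.cos θ))
       = (Real.log (Real.cos θ)^2 + θ^2) / (θ * Real.tan θ + Real.log (Real.cos θ))
    rw [Real.tan_eq_sin_div_cos]
    rw [show Real.cos θ * Real.log (Real.cos θ)^2 + Real.cos θ * θ^2
        = Real.cos θ * (Real.log (Real.cos θ)^2 + θ^2) by ring]
    have e2 : θ * Real.sin θ + Real.cos θ * Real.log (Real.cos θ)
        = Real.cos θ * (θ * (Real.sin θ / Real.cos θ) + Real.log (Real.cos θ)) := by
      field_simp
    rw [e2, mul_div_mul_left _ _ (ne_of_gt hc)]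
  -- Part 4: boundedness
  refine ⟨hpos, hQ2, hQ3, ?_⟩
  have hev2 : ∀ᶠ θ in 𝓝[>] (0:ℝ), |Q θ| ≤ 3 := by
    have hnb : ∀ᶠ y in 𝓝 (2:ℝ), |y| ≤ 3 := by
      filter_upwards [Ioo_mem_nhds (by norm_num : (1:ℝ) < 2) (by norm_num : (2:ℝ) < 3)] with y hy
      · rw [abs_le]; exact ⟨by linarith [hy.1], le_of_lt hy.2⟩
    exact hQ2.eventually hnb
  have hev3 : ∀ᶠ θ in 𝓝[<] (Real.pi/2), |Q θ| ≤ 3 := by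
    have hnb : ∀ᶠ y in 𝓝 (0:ℝ), |y| ≤ 3 := by
      filter_upwards [Ioo_mem_nhds (by norm_num : (-1:ℝ) < 0) (by norm_num : (0:ℝ) < 1)] with y hy
      · rw [abs_le]; exact ⟨by linarith [hy.1], by linarith [hy.2]⟩
    exact hQ3.eventually hnb
  obtain ⟨a, ha, hasub⟩ := mem_nhdsGT_iff_exists_Ioo_subset.mp hev2
  obtain ⟨b, hb, hbsub⟩ := mem_nhdsLT_iff_exists_Ioo_subset.mp hev3
  set a2 := min a (Real.pi/2) with ha2
  have ha2pos : 0 < a2 := lt_min ha hπ2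
  set b2 := max b 0 with hb2
  have hb2lt : b2 < Real.pi/2 := max_lt hb hπ2
  have hsubIcc : Set.Icc a2 b2 ⊆ Set.Ioo (0:ℝ) (Real.pi/2) := fun x hx =>
    ⟨lt_of_lt_of_le ha2pos hx.1, lt_of_le_of_lt hx.2 hb2lt⟩
  have hcont : ContinuousOn Q (Set.Icc a2 b2) := by
    intro x hx
    have hx' := hsubIcc hx
    have hc : 0 < Real.cos x := Real.cos_pos_of_mem_Ioo ⟨by linarith [hx'.1], hx'.2⟩
    have h1 : ContinuousAt (fun θ : ℝ => Real.log (Real.cos θ)) x :=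
      (Real.continuousAt_log (ne_of_gt hc)).comp Real.continuous_cos.continuousAt
    have h2 : ContinuousAt Real.tan x := Real.continuousAt_tan.mpr (ne_of_gt hc)
    have hden := hpos x hx'
    have hcx : ContinuousAt Q x := by
      rw [hQ]
      exact ((h1.pow 2).add (continuousAt_id.pow 2)).div
        ((continuousAt_id.mul h2).add h1) (ne_of_gt hden)
    exact hcx.continuousWithinAt
  obtain ⟨C, hC⟩ := isCompact_Icc.exists_bound_of_continuousOn hcont
  refine ⟨max C 3, ?_⟩
  rintro θ ⟨h0, h2θ⟩
  rcases lt_or_ge θ a2 with hlt | hge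
  · have hmem : θ ∈ Set.Ioo (0:ℝ) a := ⟨h0, lt_of_lt_of_le hlt (min_le_left _ _)⟩
    exact le_trans (hasub hmem) (le_max_right _ _)
  · rcases le_or_gt θ b2 with hle | hgt
    · have h := hC θ ⟨hge, hle⟩
      rw [Real.norm_eq_abs] at h
      exact le_trans h (le_max_left _ _)
    · have hmem : θ ∈ Set.Ioo b (Real.pi/2) := ⟨lt_of_le_of_lt (le_max_left b 0) hgt, h2θ⟩
      exact le_trans (hbsub hmem) (le_max_right _ _)
end

section
/- There exists a number C₀ > 2 such that for every real C ≥ C₀ and every z ∈ 𝔻 the following two inequalities hold: Re[ 1 / ( (1−z)·Log(C/(1−z)) ) ] > 1/(2 log(C/2)) and Re[ z / ( (1−z)·Log(C/(1−z)) ) ] > −1/(2 log(C/2)), where Log denotes the principal branch of the logarithm (well defined since Re(C/(1−z)) > C/2 > 0 for z ∈ 𝔻). -/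
open Set Metric

open Real

lemma q_nonneg : ∀ b ∈ Set.Icc (0:ℝ) (π/2),
    (1:ℝ) ≤ b * Real.sin b + Real.cos b - b^2/2 * Real.cos b := by
  have hmono : MonotoneOn (fun b : ℝ => b * Real.sin b + Real.cos b - b^2/2 * Real.cos b)
      (Set.Icc 0 (π/2)) := by
    have hd : ∀ x : ℝ, HasDerivAt (fun b : ℝ => b * Real.sin b + Real.cos b - b^2/2 * Real.cos b)
        (x^2/2 * Real.sin x) x := by
      intro x
      have h1 := ((hasDerivAt_id x).mul (Real.hasDerivAt_sin x)).add (Real.hasDerivAt_cos x)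
      have h2 := ((hasDerivAt_pow 2 x).div_const 2).mul (Real.hasDerivAt_cos x)
      have := h1.sub h2
      refine this.congr_deriv ?_
      simp only [id_eq, pow_one, one_mul]
      ring
    apply monotoneOn_of_deriv_nonneg (convex_Icc _ _)
    · exact fun x _ => (hd x).continuousAt.continuousWithinAt
    · exact fun x _ => (hd x).differentiableAt.differentiableWithinAt
    · intro x hx
      rw [(hd x).deriv]
      rw [interior_Icc] at hx
      have : 0 ≤ Real.sin x :=
        Real.sin_nonneg_of_nonneg_of_le_pi hx.1.le (by nlinarith [hx.2, Real.pi_pos])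
      positivity
  intro b hb
  have h0 : (0:ℝ) ∈ Set.Icc (0:ℝ) (π/2) := ⟨le_refl _, by positivity⟩
  have := hmono h0 hb hb.1
  simpa using this

-- log x ≥ 1 - 1/x
private lemma log_ge_one_sub_inv {x : ℝ} (hx : 0 < x) : 1 - x⁻¹ ≤ Real.log x := by
  have h := Real.log_le_sub_one_of_pos (inv_pos.mpr hx)
  rw [Real.log_inv] at h
  linarith

private lemma claimA {b : ℝ} (hb : |b| < π/2) :
    b^2/2 ≤ b * Real.tan b + Real.log (Real.cos b) := by
  have hcb : 0 < Real.cos b := Real.cos_pos_of_mem_Ioo ⟨by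
    have := abs_lt.mp hb; linarith [this.1], (abs_lt.mp hb).2⟩
  -- reduce to |b|
  have main : ∀ t : ℝ, 0 ≤ t → t < π/2 → t^2/2 ≤ t * Real.tan t + Real.log (Real.cos t) := by
    intro t ht0 ht2
    have hct : 0 < Real.cos t := Real.cos_pos_of_mem_Ioo ⟨by linarith [Real.pi_pos], ht2⟩
    have hq := q_nonneg t ⟨ht0, ht2.le⟩
    have hlog := log_ge_one_sub_inv hct
    have htan : t * Real.tan t = t * Real.sin t / Real.cos t := by
      rw [Real.tan_eq_sin_div_cos]; ring
    have key : t^2/2 ≤ (t * Real.sin t + Real.cos t - 1) / Real.cos t := by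
      rw [le_div_iff₀ hct]; nlinarith
    have : (t * Real.sin t + Real.cos t - 1) / Real.cos t
        = t * Real.sin t / Real.cos t + 1 - (Real.cos t)⁻¹ := by
      field_simp
    rw [htan]
    linarith [key, this ▸ key]
  rcases le_or_gt 0 b with h | h
  · exact main b h (lt_of_abs_lt hb)
  · have := main (-b) (by linarith) (by rw [abs_of_neg h] at hb; linarith)
    rw [Real.tan_neg, Real.cos_neg] at this
    calc b^2/2 = (-b)^2/2 := by ring
    _ ≤ (-b) * (-Real.tan b) + Real.log (Real.cos b) := this
    _ = b * Real.tan b + Real.log (Real.cos b) := by ring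

set_option maxHeartbeats 1000000 in
lemma key_ineq {L₀ b : ℝ} (hL : 10 ≤ L₀) (hb : |b| < π/2) :
    (Real.log (Real.cos b))^2 + b^2 ≤ L₀ * (b * Real.tan b + Real.log (Real.cos b)) := by
  have hcb : 0 < Real.cos b :=
    Real.cos_pos_of_mem_Ioo ⟨by linarith [(abs_lt.mp hb).1], (abs_lt.mp hb).2⟩
  have hA := claimA hb
  set s := Real.log (Real.cos b) with hs
  have hs0 : s ≤ 0 := Real.log_nonpos hcb.le (Real.cos_le_one b)
  set g := b * Real.tan b + s with hg
  have hg0 : 0 ≤ g := le_trans (by positivity) hA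
  clear_value s g
  -- reduce to |b| ≤ 1 or |b| > 1
  rcases le_or_gt (b^2) 1 with hb1 | hb1
  · -- small case : -b^2 ≤ s
    have hcos_lb : 1 - b^2/2 ≤ Real.cos b := Real.one_sub_sq_div_two_le_cos
    have hpos : (0:ℝ) < 1 - b^2/2 := by nlinarith
    have h1 : 1 - (Real.cos b)⁻¹ ≤ s := by rw [hs]; exact log_ge_one_sub_inv hcb
    have h2 : (Real.cos b)⁻¹ ≤ (1 - b^2/2)⁻¹ := by
      apply inv_anti₀ hpos hcos_lb
    have h3 : (1 - b^2/2)⁻¹ ≤ 1 + b^2 := by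
      rw [inv_le_iff_one_le_mul₀ hpos]  -- maybe wrong name
      nlinarith
    have hsl : -(b^2) ≤ s := by
      have := le_trans h2 h3; linarith
    -- s^2 ≤ b^4 ≤ b^2 ; so LHS ≤ 2 b^2 ≤ 4 g ≤ L₀ g
    nlinarith [mul_nonneg (neg_nonneg.mpr hs0) (by linarith : 0 ≤ s + b^2),
      mul_nonneg (by linarith : (0:ℝ) ≤ L₀ - 4) hg0,
      mul_nonneg (sq_nonneg b) (by linarith : 0 ≤ 1 - b^2)]
  · -- large case: |b| > 1
    have habs : 1 < |b| := by
      nlinarith [abs_nonneg b, sq_abs b]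
    have hsin : 3/4 < |b| * Real.sin |b| := by
      have h1mem : (1:ℝ) ∈ Set.Icc (-(π/2)) (π/2) := by
        constructor <;> nlinarith [Real.pi_gt_three]
      have hbmem : |b| ∈ Set.Icc (-(π/2)) (π/2) := by
        constructor
        · linarith [abs_nonneg b, Real.pi_pos]
        · exact hb.le
      have hmono := Real.strictMonoOn_sin h1mem hbmem habs
      have hsin1 : 3/4 < Real.sin 1 := by
        have := Real.sin_gt_sub_cube (by norm_num : (0:ℝ) < 1)
        norm_num at this; linarith
      have : Real.sin 1 < Real.sin |b| := hmono
      nlinarith [Real.sin_nonneg_of_nonneg_of_le_pi (abs_nonneg b)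
        (by nlinarith [Real.pi_pos, hb.le] : |b| ≤ π)]
    have hbtan : b * Real.tan b = |b| * Real.sin |b| * (Real.cos b)⁻¹ := by
      rcases le_or_gt 0 b with h | h
      · rw [abs_of_nonneg h, Real.tan_eq_sin_div_cos]; ring
      · rw [abs_of_neg h, Real.sin_neg, Real.tan_eq_sin_div_cos]; ring
    have hec : Real.exp (-s) = (Real.cos b)⁻¹ := by
      rw [hs, Real.exp_neg, Real.exp_log hcb]
    set c := -s with hc
    have hc0 : 0 ≤ c := by simp [hc]; linarith
    clear_value c
    have hexp : (1 + c/2)^2 ≤ Real.exp c := by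
      have h := Real.add_one_le_exp (c/2)
      have h2 : Real.exp c = Real.exp (c/2) * Real.exp (c/2) := by
        rw [← Real.exp_add]; ring_nf
      nlinarith [Real.exp_pos (c/2)]
    have hτ : 3/4 * (1 + c/2)^2 ≤ b * Real.tan b := by
      rw [hbtan, ← hec]
      nlinarith [Real.exp_pos c, hexp]
    -- g = τ - c ≥ 3/4 - c/4 + 3c²/16 ≥ c²/8 ; and g ≥ b²/2
    have hg2 : c^2/8 ≤ g := by
      have h1 : g = b * Real.tan b - c := by rw [hg, hc]; ring
      have h2 : 3/4 + 3*c/4 + 3*c^2/16 ≤ b * Real.tan b := by nlinarith [hτ]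
      have h3 : (0:ℝ) ≤ (c/4 - 1/2)^2 := sq_nonneg _
      nlinarith [h1, h2, h3]
    have hg3 : b^2/2 ≤ g := hA
    have hfin : c^2 + b^2 ≤ 10 * g := by linarith
    have hgoal : s^2 = c^2 := by rw [hc]; ring
    nlinarith [mul_nonneg (by linarith : (0:ℝ) ≤ L₀ - 10) hg0, hfin, hgoal]

set_option maxHeartbeats 2000000 in
/-- there is `C₀ > 2` such that for all `C ≥ C₀` and `z ∈ 𝔻`:
`Re[1/((1−z)·Log(C/(1−z)))] > 1/(2 log(C/2))` and
`Re[z/((1−z)·Log(C/(1−z)))] > −1/(2 log(C/2))` (principal logarithm). -/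
theorem exists_C0_halfplane_estimates :
    ∃ C₀ : ℝ, 2 < C₀ ∧ ∀ C : ℝ, C₀ ≤ C → ∀ z ∈ ball (0 : ℂ) 1,
      1 / (2 * Real.log (C / 2)) <
        (1 / ((1 - z) * Complex.log ((C : ℂ) / (1 - z)))).re ∧
      -(1 / (2 * Real.log (C / 2))) <
        (z / ((1 - z) * Complex.log ((C : ℂ) / (1 - z)))).re := by
  refine ⟨2 * Real.exp 10, by linarith [Real.add_one_le_exp (10:ℝ)], ?_⟩
  intro C hC z hz
  have hzabs : ‖z‖ < 1 := by
    simpa [Complex.dist_eq] using mem_ball.mp hz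
  have hC2 : Real.exp 10 ≤ C / 2 := by linarith
  have hCpos : 0 < C := by linarith [Real.exp_pos (10:ℝ)]
  set L₀ := Real.log (C / 2) with hL₀def
  clear_value L₀
  have hL₀ : 10 ≤ L₀ := by
    rw [hL₀def, ← Real.log_exp 10]
    exact Real.log_le_log (Real.exp_pos 10) hC2
  have hzne : (1 : ℂ) - z ≠ 0 := by
    intro h
    have : z = 1 := by linear_combination -h
    rw [this] at hzabs; simp at hzabs
  have hCne : (C : ℂ) ≠ 0 := by exact_mod_cast hCpos.ne'
  set ζ : ℂ := (C : ℂ) / (1 - z) with hζdef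
  clear_value ζ
  have hζne : ζ ≠ 0 := by rw [hζdef]; exact div_ne_zero hCne hzne
  -- Re ζ > C/2
  have hnormSq : 0 < Complex.normSq (1 - z) := Complex.normSq_pos.mpr hzne
  have hzsq : z.re^2 + z.im^2 < 1 := by
    have h1 : Complex.normSq z < 1 := by
      rw [← Complex.sq_norm]
      exact pow_lt_one₀ (norm_nonneg z) hzabs (by norm_num)
    rw [Complex.normSq_apply] at h1
    linarith [h1]
  have hx : C / 2 < ζ.re := by
    have hre : ζ.re = C * (1 - z).re / Complex.normSq (1 - z) := by
      rw [hζdef, Complex.div_re]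
      simp
    rw [hre, lt_div_iff₀ hnormSq]
    have h1 : (1 - z).re = 1 - z.re := by simp
    have h2 : Complex.normSq (1 - z) = (1 - z.re)^2 + z.im^2 := by
      rw [Complex.normSq_apply]; simp; ring
    rw [h1, h2]
    have h3 : (1 - z.re)^2 + z.im^2 < 2*(1 - z.re) := by linarith [hzsq]
    have h4 := mul_lt_mul_of_pos_left h3 (by linarith : (0:ℝ) < C/2)
    linarith [h4]
  set L := Complex.log ζ with hLdef
  clear_value L
  set a := L.re with ha_def
  set b := L.im with hb_def
  clear_value a b
  have ha_eq : a = Real.log (‖ζ‖) := by rw [ha_def, hLdef, Complex.log_re]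
  have hb_eq : b = ζ.arg := by rw [hb_def, hLdef, Complex.log_im]
  have hbpi : |b| < π / 2 := by
    rw [hb_eq]
    exact Complex.abs_arg_lt_pi_div_two_iff.mpr (Or.inl (by linarith))
  have hcb : 0 < Real.cos b :=
    Real.cos_pos_of_mem_Ioo ⟨by linarith [(abs_lt.mp hbpi).1], (abs_lt.mp hbpi).2⟩
  have hT : C / 2 < ‖ζ‖ := lt_of_lt_of_le hx (Complex.re_le_norm ζ)
  have haL : L₀ < a := by
    rw [ha_eq, hL₀def]
    exact Real.log_lt_log (by positivity) hT
  have hxpos : 0 < ζ.re := by linarith [hx, hCpos]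
  -- x = T cos b, y = T sin b
  have hcos : Real.cos b = ζ.re / ‖ζ‖ := by rw [hb_eq]; exact Complex.cos_arg hζne
  have hsin : Real.sin b = ζ.im / ‖ζ‖ := by rw [hb_eq]; exact Complex.sin_arg ζ
  have hTpos : (0:ℝ) < ‖ζ‖ := norm_pos_iff.mpr hζne
  have hxT : ζ.re = ‖ζ‖ * Real.cos b := by rw [hcos]; field_simp
  have hyT : ζ.im = ‖ζ‖ * Real.sin b := by rw [hsin]; field_simp
  have hytan : ζ.im = ζ.re * Real.tan b := by
    rw [hxT, hyT, Real.tan_eq_sin_div_cos]; field_simp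
  -- δ and c
  set c := -Real.log (Real.cos b) with hc_def
  clear_value c
  have hc0 : 0 ≤ c := by
    rw [hc_def]; simp
    exact Real.log_nonpos hcb.le (Real.cos_le_one b)
  set δ := Real.log ζ.re - L₀ with hδ_def
  clear_value δ
  have hδ : 0 < δ := by
    rw [hδ_def, hL₀def]
    have := Real.log_lt_log (by positivity : (0:ℝ) < C/2) hx
    linarith
  have ha_split : a = L₀ + c + δ := by
    have : Real.log ζ.re = Real.log (‖ζ‖) + Real.log (Real.cos b) := by
      rw [hxT]
      exact Real.log_mul hTpos.ne' hcb.ne'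
    rw [hc_def, hδ_def, ← ha_eq] at *
    linarith [this]
  -- x ≥ (C/2)(1+δ)
  have hxval : ζ.re = C / 2 * Real.exp δ := by
    rw [hδ_def, hL₀def, Real.exp_sub, Real.exp_log hxpos,
      Real.exp_log (by positivity : (0:ℝ) < C/2)]
    field_simp
  have hxlb : C / 2 * (1 + δ) ≤ ζ.re := by
    rw [hxval]
    exact mul_le_mul_of_nonneg_left (by linarith [Real.add_one_le_exp δ])
      (by linarith : (0:ℝ) ≤ C/2)
  -- τ = b tan b ≥ 0
  set τ := b * Real.tan b with hτ_def
  clear_value τ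
  have hτ0 : 0 ≤ τ := by
    rw [hτ_def, Real.tan_eq_sin_div_cos]
    have hbs : 0 ≤ b * Real.sin b := by
      rcases le_or_gt 0 b with h | h
      · exact mul_nonneg h (Real.sin_nonneg_of_nonneg_of_le_pi h
          (by linarith [(abs_lt.mp hbpi).2, Real.pi_pos]))
      · have hsn : Real.sin b ≤ 0 := Real.sin_nonpos_of_nonpos_of_neg_pi_le h.le
          (by linarith [(abs_lt.mp hbpi).1, Real.pi_pos])
        have := mul_nonneg (neg_nonneg.mpr h.le) (neg_nonneg.mpr hsn)
        linarith [this]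
    calc (0:ℝ) ≤ (b * Real.sin b) / Real.cos b := div_nonneg hbs hcb.le
    _ = b * (Real.sin b / Real.cos b) := by ring
  -- key inequality
  have hkey : c^2 + b^2 ≤ L₀ * (τ - c) := by
    have := key_ineq hL₀ hbpi
    rw [hτ_def, hc_def]
    calc (-Real.log (Real.cos b))^2 + b^2 = (Real.log (Real.cos b))^2 + b^2 := by ring
    _ ≤ L₀ * (b * Real.tan b + Real.log (Real.cos b)) := this
    _ = L₀ * (b * Real.tan b - -Real.log (Real.cos b)) := by ring
  -- main inequality : C * N < 2 L₀ (x a + y b)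
  set N := a^2 + b^2 with hN_def
  clear_value N
  have hNpos : 0 < N := by
    rw [hN_def]
    have h0a : 0 < a := by linarith
    linarith [pow_pos h0a 2, sq_nonneg b]
  have hmain : C * N < 2 * L₀ * (ζ.re * a + ζ.im * b) := by
    have hxy : ζ.re * a + ζ.im * b = ζ.re * (a + τ) := by
      rw [hytan, hτ_def]; ring
    rw [hxy]
    have haτ : 0 < a + τ := by linarith
    have step1 : C * L₀ * (1 + δ) * (a + τ) ≤ 2 * L₀ * (ζ.re * (a + τ)) := by
      have h' : C/2 * (1 + δ) * (a + τ) ≤ ζ.re * (a + τ) :=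
        mul_le_mul_of_nonneg_right hxlb haτ.le
      have h'' := mul_le_mul_of_nonneg_left h' (show (0:ℝ) ≤ 2*L₀ by linarith)
      linarith [h'']
    have step2 : C * N < C * L₀ * (1 + δ) * (a + τ) := by
      have hNval : N = (L₀ + c + δ)^2 + b^2 := by rw [hN_def, ha_split]
      have hA : a + τ = (L₀ + c + δ) + τ := by rw [ha_split]
      rw [hNval, hA]
      have hbracket : 0 < (L₀^2 - L₀) + c*(L₀-2) + L₀*τ := by
        have t1 : 0 ≤ c*(L₀-2) := mul_nonneg hc0 (by linarith)
        have t2 : 0 ≤ L₀*τ := mul_nonneg (by linarith) hτ0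
        have t3 : 10*L₀ ≤ L₀*L₀ := mul_le_mul_of_nonneg_right hL₀ (by linarith)
        linarith [t1, t2, t3]
      have hident : L₀*(1+δ)*((L₀+c+δ)+τ) - ((L₀+c+δ)^2 + b^2)
          = (L₀*(τ - c) - (c^2 + b^2)) + δ*((L₀^2 - L₀) + c*(L₀-2) + L₀*τ)
            + δ^2*(L₀-1) := by ring
      have hpos : 0 < L₀*(1+δ)*((L₀+c+δ)+τ) - ((L₀+c+δ)^2 + b^2) := by
        rw [hident]
        have t1 : 0 ≤ L₀*(τ - c) - (c^2 + b^2) := by linarith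
        have t2 : 0 < δ*((L₀^2 - L₀) + c*(L₀-2) + L₀*τ) := mul_pos hδ hbracket
        have t3 : 0 ≤ δ^2*(L₀-1) := mul_nonneg (sq_nonneg δ) (by linarith)
        linarith
      have h2 : (L₀+c+δ)^2 + b^2 < L₀*(1+δ)*((L₀+c+δ)+τ) := by linarith [hpos]
      have h3 := mul_lt_mul_of_pos_left h2 hCpos
      linarith [h3]
    linarith
  -- L ≠ 0 and normSq L = N
  have hLne : L ≠ 0 := by
    intro h
    rw [ha_def, h] at haL
    simp at haL; linarith
  have hNsq : Complex.normSq L = N := by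
    rw [Complex.normSq_apply, hN_def, ha_def, hb_def]; ring
  -- compute re of 1/((1-z) L)
  have hform : (1 : ℂ) / ((1 - z) * L) = ζ / ((C:ℂ) * L) := by
    rw [hζdef]
    field_simp
  have hre1 : ((1 : ℂ) / ((1 - z) * L)).re = (ζ.re * a + ζ.im * b) / (C * N) := by
    rw [hform, Complex.div_re]
    have h1 : ((C:ℂ) * L).re = C * a := by simp [Complex.mul_re, ha_def]
    have h2 : ((C:ℂ) * L).im = C * b := by simp [Complex.mul_im, hb_def]
    have h3 : Complex.normSq ((C:ℂ) * L) = C^2 * N := by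
      rw [Complex.normSq_mul, hNsq, Complex.normSq_ofReal]
      ring
    rw [h1, h2, h3]
    rw [← add_div, div_eq_div_iff (by positivity) (mul_pos hCpos hNpos).ne']
    ring
  have h2L₀ : (0:ℝ) < 2 * L₀ := by linarith
  have hCN : (0:ℝ) < C * N := mul_pos hCpos hNpos
  have part1 : 1 / (2 * L₀) < ((1 : ℂ) / ((1 - z) * L)).re := by
    rw [hre1, div_lt_div_iff₀ h2L₀ hCN]
    linarith [hmain]
  refine ⟨part1, ?_⟩
  -- part 2
  have hsplit : z / ((1 - z) * L) = 1 / ((1 - z) * L) - 1 / L := by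
    field_simp [hzne, hLne]
    ring
  have hinv : ((1:ℂ) / L).re = a / N := by
    rw [one_div, Complex.inv_re, hNsq, ha_def]
  have hup : a / N ≤ 1 / L₀ := by
    rw [div_le_div_iff₀ hNpos (by linarith : (0:ℝ) < L₀)]
    have h1 : a*L₀ ≤ a*a := mul_le_mul_of_nonneg_left haL.le (by linarith)
    have h2 : N = a^2 + b^2 := hN_def
    linarith [h1, h2, sq_nonneg b]
  have hhalf : 1 / (2 * L₀) - 1 / L₀ = -(1 / (2 * L₀)) := by
    field_simp
    ring
  rw [hsplit]
  have : (1 / ((1 - z) * L) - 1 / L).re = ((1:ℂ) / ((1 - z) * L)).re - ((1:ℂ)/L).re := by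
    simp [Complex.sub_re]
  rw [this, hinv]
  linarith
end
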